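/- arXiv:1312.6431 — 13 statements merged into one kernel-verified Lean document; each statement's English description precedes it below -/
import Mathlib

section
/- Let q : ℝ × ℝ → ℂ be twice continuously differentiable in the variables (x,t), and let λ be a nonzero complex number. Define the 2×2 complex-matrix-valued functions U = λ·[[1, q_x],[conj(q)_x, −1]] and V = [[−(λ/2)|q|² − 1/(4λ), −(λ/2)|q|² q_x + q/2],[−(λ/2)|q|² conj(q)_x − conj(q)/2, (λ/2)|q|² + 1/(4λ)]]. Then at every point (x,t), the zero-curvature equation U_t − V_x + U·V − V·U = 0 holds if and only if the complex short pulse equation q_{xt} + q + (1/2)(|q|² q_x)_x = 0 holds at that point. -/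
set_option maxHeartbeats 1000000

open Complex

/-- Partial derivative in the first (space) variable. -/
noncomputable def pdx (F : ℝ → ℝ → ℂ) (x t : ℝ) : ℂ := deriv (fun x' => F x' t) x

/-- Partial derivative in the second (time) variable. -/
noncomputable def pdt (F : ℝ → ℝ → ℂ) (x t : ℝ) : ℂ := deriv (fun t' => F x t') t

/-- Entrywise partial derivative in the first variable of a matrix-valued function. -/
noncomputable def pdxM (F : ℝ → ℝ → Matrix (Fin 2) (Fin 2) ℂ) (x t : ℝ) :
    Matrix (Fin 2) (Fin 2) ℂ := Matrix.of fun i j => deriv (fun x' => F x' t i j) x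

/-- Entrywise partial derivative in the second variable of a matrix-valued function. -/
noncomputable def pdtM (F : ℝ → ℝ → Matrix (Fin 2) (Fin 2) ℂ) (x t : ℝ) :
    Matrix (Fin 2) (Fin 2) ℂ := Matrix.of fun i j => deriv (fun t' => F x t' i j) t

lemma csp_hasDerivAt_conj {f : ℝ → ℂ} {x : ℝ} {d : ℂ} (hf : HasDerivAt f d x) :
    HasDerivAt (fun y => starRingEnd ℂ (f y)) (starRingEnd ℂ d) x := by
  simpa [Function.comp_def] using (Complex.conjCLE.toContinuousLinearMap.hasFDerivAt.comp_hasDerivAt x hf)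

lemma csp_deriv_conj (f : ℝ → ℂ) (x : ℝ) :
    deriv (fun y => starRingEnd ℂ (f y)) x = starRingEnd ℂ (deriv f x) := by
  by_cases hf : DifferentiableAt ℝ f x
  · exact (csp_hasDerivAt_conj hf.hasDerivAt).deriv
  · have hnc : ¬ DifferentiableAt ℝ (fun y => starRingEnd ℂ (f y)) x := by
      intro h
      have := csp_hasDerivAt_conj h.hasDerivAt
      simp only [Complex.conj_conj] at this
      exact hf this.differentiableAt
    rw [deriv_zero_of_not_differentiableAt hf, deriv_zero_of_not_differentiableAt hnc, map_zero]

/-- The zero-curvature equation for the Lax pair of the complex short pulse equation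
holds at a point iff the complex short pulse equation holds at that point. -/
theorem csp_zero_curvature_iff
    (q : ℝ → ℝ → ℂ)
    (hq : ContDiff ℝ 2 (fun p : ℝ × ℝ => q p.1 p.2))
    (lam : ℂ) (hlam : lam ≠ 0)
    (U V : ℝ → ℝ → Matrix (Fin 2) (Fin 2) ℂ)
    (hU : ∀ x t, U x t = lam • Matrix.of
      ![![1, pdx q x t],
        ![pdx (fun x' t' => starRingEnd ℂ (q x' t')) x t, -1]])
    (hV : ∀ x t, V x t = Matrix.of
      ![![-(lam/2) * (‖q x t‖ : ℂ)^2 - 1/(4*lam),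
          -(lam/2) * (‖q x t‖ : ℂ)^2 * pdx q x t + q x t / 2],
        ![-(lam/2) * (‖q x t‖ : ℂ)^2 *
            pdx (fun x' t' => starRingEnd ℂ (q x' t')) x t - starRingEnd ℂ (q x t) / 2,
          (lam/2) * (‖q x t‖ : ℂ)^2 + 1/(4*lam)]]) :
    ∀ x t,
      (pdtM U x t - pdxM V x t + U x t * V x t - V x t * U x t = 0) ↔
      (pdt (pdx q) x t + q x t
        + (1/2) * pdx (fun x' t' => (‖q x' t'‖ : ℂ)^2 * pdx q x' t') x t = 0) := by
  set Q : ℝ × ℝ → ℂ := fun p => q p.1 p.2 with hQ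
  have hgd : ∀ x t : ℝ, HasDerivAt (fun x' => q x' t) (fderiv ℝ Q (x, t) (1, 0)) x := by
    intro x t
    have h1 : HasDerivAt (fun x' : ℝ => ((x', t) : ℝ × ℝ)) ((1 : ℝ), (0 : ℝ)) x :=
      (hasDerivAt_id x).prodMk (hasDerivAt_const x t)
    exact ((hq.differentiable (by norm_num)).differentiableAt.hasFDerivAt).comp_hasDerivAt x h1
  have hd1 : ∀ x t : ℝ, DifferentiableAt ℝ (fun x' => q x' t) x :=
    fun x t => (hgd x t).differentiableAt
  have hd2 : ∀ x t : ℝ, DifferentiableAt ℝ (fun x' => starRingEnd ℂ (q x' t)) x :=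
    fun x t => (csp_hasDerivAt_conj (hgd x t)).differentiableAt
  have hpdx : ∀ x t : ℝ, pdx q x t = fderiv ℝ Q (x, t) (1, 0) := fun x t => (hgd x t).deriv
  have hg : ContDiff ℝ 1 (fun p : ℝ × ℝ => fderiv ℝ Q p ((1 : ℝ), (0 : ℝ))) :=
    (ContinuousLinearMap.apply ℝ ℂ ((1:ℝ), (0:ℝ))).contDiff.comp
      (hq.fderiv_right (by norm_num))
  have hd3 : ∀ x t : ℝ, DifferentiableAt ℝ (fun x' => pdx q x' t) x := by
    intro x t
    have hfe : (fun x' => pdx q x' t) = fun x' => fderiv ℝ Q (x', t) ((1:ℝ), (0:ℝ)) := by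
      funext x'; exact hpdx x' t
    rw [hfe]
    exact ((hg.differentiable one_ne_zero).differentiableAt).comp x
      (differentiableAt_id.prodMk (differentiableAt_const t))
  have F1 : ∀ x t : ℝ, pdx (fun x' t' => starRingEnd ℂ (q x' t')) x t
      = starRingEnd ℂ (pdx q x t) := fun x t => csp_deriv_conj (fun x' => q x' t) x
  have hA : ∀ a b : ℝ, ((‖q a b‖ : ℂ))^2 = q a b * starRingEnd ℂ (q a b) := by
    intro a b
    rw [Complex.mul_conj]
    norm_cast
    exact (Complex.sq_norm _)
  intro x t
  -- time derivative of U
  have e00 : (fun t' => U x t' 0 0) = fun _ => lam := by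
    funext t'; rw [hU]; simp
  have e01 : (fun t' => U x t' 0 1) = fun t' => lam * pdx q x t' := by
    funext t'; rw [hU]; simp
  have e10 : (fun t' => U x t' 1 0) = fun t' => lam * starRingEnd ℂ (pdx q x t') := by
    funext t'; rw [hU]; simp [F1]
  have e11 : (fun t' => U x t' 1 1) = fun _ => -lam := by
    funext t'; rw [hU]; simp
  have h1 : pdtM U x t = Matrix.of
      ![![0, lam * pdt (pdx q) x t], ![lam * starRingEnd ℂ (pdt (pdx q) x t), 0]] := by
    ext i j
    fin_cases i <;> fin_cases j
    · show deriv (fun t' => U x t' 0 0) t = 0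
      rw [e00]; exact deriv_const t lam
    · show deriv (fun t' => U x t' 0 1) t = lam * pdt (pdx q) x t
      rw [e01, deriv_const_mul_field]; rfl
    · show deriv (fun t' => U x t' 1 0) t = lam * starRingEnd ℂ (pdt (pdx q) x t)
      rw [e10, deriv_const_mul_field, csp_deriv_conj]; rfl
    · show deriv (fun t' => U x t' 1 1) t = 0
      rw [e11]; exact deriv_const t (-lam)
  -- space derivative of V
  have hDqq : deriv (fun x' => q x' t * starRingEnd ℂ (q x' t)) x
      = pdx q x t * starRingEnd ℂ (q x t) + q x t * starRingEnd ℂ (pdx q x t) := by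
    rw [deriv_fun_mul (hd1 x t) (hd2 x t), csp_deriv_conj]; rfl
  have hWfun : (fun x' => ((‖q x' t‖ : ℂ))^2 * pdx q x' t)
      = fun x' => q x' t * starRingEnd ℂ (q x' t) * pdx q x' t := by
    funext x'; rw [hA]
  have dW : DifferentiableAt ℝ (fun x' => ((‖q x' t‖ : ℂ))^2 * pdx q x' t) x := by
    rw [hWfun]; exact ((hd1 x t).mul (hd2 x t)).mul (hd3 x t)
  have f00 : (fun x' => V x' t 0 0)
      = fun x' => -(lam/2) * (((‖q x' t‖ : ℂ))^2) - 1/(4*lam) := by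
    funext x'; rw [hV]; simp
  have f01 : (fun x' => V x' t 0 1)
      = fun x' => -(lam/2) * (((‖q x' t‖ : ℂ))^2 * pdx q x' t) + q x' t / 2 := by
    funext x'; rw [hV]; simp; ring
  have f10 : (fun x' => V x' t 1 0)
      = fun x' => -(lam/2) * starRingEnd ℂ (((‖q x' t‖ : ℂ))^2 * pdx q x' t)
          - starRingEnd ℂ (q x' t) / 2 := by
    funext x'; rw [hV]; simp [F1, map_mul, map_pow, Complex.conj_ofReal]; ring
  have f11 : (fun x' => V x' t 1 1)
      = fun x' => (lam/2) * (((‖q x' t‖ : ℂ))^2) + 1/(4*lam) := by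
    funext x'; rw [hV]; simp
  have h2 : pdxM V x t = Matrix.of
      ![![-(lam/2) * (pdx q x t * starRingEnd ℂ (q x t) + q x t * starRingEnd ℂ (pdx q x t)),
          -(lam/2) * pdx (fun x' t' => ((‖q x' t'‖ : ℂ))^2 * pdx q x' t') x t
            + pdx q x t / 2],
        ![-(lam/2) * starRingEnd ℂ
              (pdx (fun x' t' => ((‖q x' t'‖ : ℂ))^2 * pdx q x' t') x t)
            - starRingEnd ℂ (pdx q x t) / 2,
          (lam/2) * (pdx q x t * starRingEnd ℂ (q x t) + q x t * starRingEnd ℂ (pdx q x t))]] := by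
    ext i j
    fin_cases i <;> fin_cases j
    · show deriv (fun x' => V x' t 0 0) x = _
      rw [f00]
      have : (fun x' => -(lam/2) * (((‖q x' t‖ : ℂ))^2) - 1/(4*lam))
          = fun x' => -(lam/2) * (q x' t * starRingEnd ℂ (q x' t)) - 1/(4*lam) := by
        funext x'; rw [hA]
      rw [this, deriv_sub_const, deriv_const_mul_field, hDqq]
      simp
    · show deriv (fun x' => V x' t 0 1) x = _
      rw [f01, deriv_fun_add (dW.const_mul _) ((hd1 x t).div_const 2),
        deriv_const_mul_field, deriv_div_const]
      rfl
    · show deriv (fun x' => V x' t 1 0) x = _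
      rw [f10, deriv_fun_sub ((csp_hasDerivAt_conj dW.hasDerivAt).differentiableAt.const_mul _)
          ((hd2 x t).div_const 2),
        deriv_const_mul_field, deriv_div_const, csp_deriv_conj, csp_deriv_conj]
      rfl
    · show deriv (fun x' => V x' t 1 1) x = _
      rw [f11]
      have : (fun x' => (lam/2) * (((‖q x' t‖ : ℂ))^2) + 1/(4*lam))
          = fun x' => (lam/2) * (q x' t * starRingEnd ℂ (q x' t)) + 1/(4*lam) := by
        funext x'; rw [hA]
      rw [this, deriv_add_const, deriv_const_mul_field, hDqq]
      simp
  -- the key matrix identity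
  have key : pdtM U x t - pdxM V x t + U x t * V x t - V x t * U x t
      = Matrix.of
        ![![0, lam * (pdt (pdx q) x t + q x t
              + (1/2) * pdx (fun x' t' => ((‖q x' t'‖ : ℂ))^2 * pdx q x' t') x t)],
          ![lam * starRingEnd ℂ (pdt (pdx q) x t + q x t
              + (1/2) * pdx (fun x' t' => ((‖q x' t'‖ : ℂ))^2 * pdx q x' t') x t),
            0]] := by
    rw [h1, h2, hU, hV]
    ext i j
    fin_cases i <;> fin_cases j
    · simp only [Fin.zero_eta, Fin.mk_zero, Fin.mk_one, Fin.isValue, Matrix.mul_apply,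
        Fin.sum_univ_two, Matrix.sub_apply, Matrix.add_apply,
        Matrix.smul_apply, Matrix.of_apply, Matrix.cons_val', Matrix.cons_val_zero,
        Matrix.cons_val_one, Matrix.head_cons, Matrix.head_fin_const, Matrix.empty_val',
        Matrix.cons_val_fin_one, smul_eq_mul, F1, hA, map_add, map_mul, map_div₀, map_one,
        map_ofNat, Complex.conj_ofReal, map_pow]
      ring
    · simp only [Fin.zero_eta, Fin.mk_zero, Fin.mk_one, Fin.isValue, Matrix.mul_apply,
        Fin.sum_univ_two, Matrix.sub_apply, Matrix.add_apply,
        Matrix.smul_apply, Matrix.of_apply, Matrix.cons_val', Matrix.cons_val_zero,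
        Matrix.cons_val_one, Matrix.head_cons, Matrix.head_fin_const, Matrix.empty_val',
        Matrix.cons_val_fin_one, smul_eq_mul, F1, hA, map_add, map_mul, map_div₀, map_one,
        map_ofNat, Complex.conj_ofReal, map_pow]
      linear_combination (pdx q x t / 2) * (mul_inv_cancel₀ hlam)
    · simp only [Fin.zero_eta, Fin.mk_zero, Fin.mk_one, Fin.isValue, Matrix.mul_apply,
        Fin.sum_univ_two, Matrix.sub_apply, Matrix.add_apply,
        Matrix.smul_apply, Matrix.of_apply, Matrix.cons_val', Matrix.cons_val_zero,
        Matrix.cons_val_one, Matrix.head_cons, Matrix.head_fin_const, Matrix.empty_val',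
        Matrix.cons_val_fin_one, smul_eq_mul, F1, hA, map_add, map_mul, map_div₀, map_one,
        map_ofNat, Complex.conj_ofReal, map_pow]
      linear_combination (-(starRingEnd ℂ (pdx q x t)) / 2) * (mul_inv_cancel₀ hlam)
    · simp only [Fin.zero_eta, Fin.mk_zero, Fin.mk_one, Fin.isValue, Matrix.mul_apply,
        Fin.sum_univ_two, Matrix.sub_apply, Matrix.add_apply,
        Matrix.smul_apply, Matrix.of_apply, Matrix.cons_val', Matrix.cons_val_zero,
        Matrix.cons_val_one, Matrix.head_cons, Matrix.head_fin_const, Matrix.empty_val',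
        Matrix.cons_val_fin_one, smul_eq_mul, F1, hA, map_add, map_mul, map_div₀, map_one,
        map_ofNat, Complex.conj_ofReal, map_pow]
      ring
  rw [key]
  constructor
  · intro h
    have h01 := Matrix.ext_iff.2 h 0 1
    simp only [Matrix.of_apply, Matrix.cons_val', Matrix.cons_val_zero, Matrix.cons_val_one,
      Matrix.head_cons, Matrix.empty_val', Matrix.cons_val_fin_one, Matrix.zero_apply] at h01
    rcases mul_eq_zero.1 h01 with h' | h'
    · exact absurd h' hlam
    · exact h'
  · intro h
    ext i j
    fin_cases i <;> fin_cases j <;>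
      simp only [Fin.zero_eta, Fin.mk_zero, Fin.mk_one, Fin.isValue, Matrix.of_apply,
        Matrix.cons_val', Matrix.cons_val_zero, Matrix.cons_val_one, Matrix.head_cons,
        Matrix.empty_val', Matrix.cons_val_fin_one, Matrix.head_fin_const, Matrix.zero_apply,
        h, map_zero, mul_zero]
end

section
/- For complex numbers q₁, …, q_n define matrices Q⁽ᵏ⁾, R⁽ᵏ⁾ of size 2^{k−1} × 2^{k−1} recursively by Q⁽¹⁾ = (q₁), R⁽¹⁾ = (conj(q₁)), and Q⁽ᵏ⁺¹⁾ = fromBlocks(Q⁽ᵏ⁾, q_{k+1} I; −conj(q_{k+1}) I, R⁽ᵏ⁾), R⁽ᵏ⁺¹⁾ = fromBlocks(R⁽ᵏ⁾, −q_{k+1} I; conj(q_{k+1}) I, Q⁽ᵏ⁾), where I is the 2^{k−1} × 2^{k−1} identity matrix. Then for every n ≥ 1: R⁽ⁿ⁾ equals the conjugate transpose of Q⁽ⁿ⁾, and Q⁽ⁿ⁾R⁽ⁿ⁾ = R⁽ⁿ⁾Q⁽ⁿ⁾ = (Σ_{i=1}^{n} |q_i|²) · I, where I is the 2^{n−1}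 × 2^{n−1} identity matrix. -/
open Complex Matrix

/-- The equivalence `Fin (2^k) ⊕ Fin (2^k) ≃ Fin (2^(k+1))` used to reindex block matrices. -/
def blockEquiv (k : ℕ) : Fin (2^k) ⊕ Fin (2^k) ≃ Fin (2^(k+1)) :=
  finSumFinEquiv.trans (finCongr (by ring))

/-- The pair `(Q⁽ᵏ⁺¹⁾, R⁽ᵏ⁺¹⁾)` of `2^k × 2^k` matrices built recursively from
`q 1, …, q (k+1)`:  `Q⁽¹⁾ = (q 1)`, `R⁽¹⁾ = (conj (q 1))`, and
`Q⁽ᵏ⁺¹⁾ = fromBlocks (Q⁽ᵏ⁾, q_{k+1} I; −conj (q_{k+1}) I, R⁽ᵏ⁾)`,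
`R⁽ᵏ⁺¹⁾ = fromBlocks (R⁽ᵏ⁾, −q_{k+1} I; conj (q_{k+1}) I, Q⁽ᵏ⁾)`. -/
noncomputable def QRmat (q : ℕ → ℂ) : (k : ℕ) →
    Matrix (Fin (2^k)) (Fin (2^k)) ℂ × Matrix (Fin (2^k)) (Fin (2^k)) ℂ
  | 0 => (Matrix.of fun _ _ => q 1, Matrix.of fun _ _ => starRingEnd ℂ (q 1))
  | k+1 =>
    ((Matrix.reindex (blockEquiv k) (blockEquiv k))
        (Matrix.fromBlocks (QRmat q k).1
          (q (k+2) • (1 : Matrix (Fin (2^k)) (Fin (2^k)) ℂ))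
          ((-(starRingEnd ℂ (q (k+2)))) • (1 : Matrix (Fin (2^k)) (Fin (2^k)) ℂ))
          (QRmat q k).2),
     (Matrix.reindex (blockEquiv k) (blockEquiv k))
        (Matrix.fromBlocks (QRmat q k).2
          ((-(q (k+2))) • (1 : Matrix (Fin (2^k)) (Fin (2^k)) ℂ))
          ((starRingEnd ℂ (q (k+2))) • (1 : Matrix (Fin (2^k)) (Fin (2^k)) ℂ))
          (QRmat q k).1))

lemma QRmat_aux (q : ℕ → ℂ) (k : ℕ) :
    (QRmat q k).2 = ((QRmat q k).1)ᴴ ∧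
    (QRmat q k).1 * (QRmat q k).2
      = (∑ i ∈ Finset.Icc 1 (k+1), ((‖q i‖ : ℝ) : ℂ)^2)
          • (1 : Matrix (Fin (2^k)) (Fin (2^k)) ℂ) ∧
    (QRmat q k).2 * (QRmat q k).1
      = (∑ i ∈ Finset.Icc 1 (k+1), ((‖q i‖ : ℝ) : ℂ)^2)
          • (1 : Matrix (Fin (2^k)) (Fin (2^k)) ℂ) := by
  induction k with
  | zero =>
    refine ⟨?_, ?_, ?_⟩ <;>
    · ext i j
      fin_cases i; fin_cases j
      simp [QRmat, Matrix.mul_apply, Matrix.conjTranspose_apply, Matrix.smul_apply,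
        Matrix.one_apply, Complex.mul_conj, ← Complex.sq_norm, Complex.ofReal_pow, mul_comm]
  | succ k ih =>
    obtain ⟨h1, h2, h3⟩ := ih
    set Q := (QRmat q k).1 with hQ
    set R := (QRmat q k).2 with hR
    set a := q (k+2) with ha
    set s : ℂ := ∑ i ∈ Finset.Icc 1 (k+1), ((‖q i‖ : ℝ) : ℂ)^2 with hs
    set c : ℂ := ((‖a‖ : ℝ) : ℂ)^2 with hc
    have hsum : (∑ i ∈ Finset.Icc 1 (k+1+1), ((‖q i‖ : ℝ) : ℂ)^2) = s + c := by
      rw [hs, ← Finset.sum_Icc_succ_top (by omega : 1 ≤ k+2)]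
    have haa : a * starRingEnd ℂ a = c := by
      rw [hc, Complex.mul_conj, ← Complex.sq_norm, Complex.ofReal_pow]
    have haa' : starRingEnd ℂ a * a = c := by rw [mul_comm]; exact haa
    have hQ1 : (QRmat q (k+1)).1 = (Matrix.reindex (blockEquiv k) (blockEquiv k))
        (Matrix.fromBlocks Q (a • (1 : Matrix (Fin (2^k)) (Fin (2^k)) ℂ)) ((-(starRingEnd ℂ a)) • (1 : Matrix (Fin (2^k)) (Fin (2^k)) ℂ)) R) := rfl
    have hR1 : (QRmat q (k+1)).2 = (Matrix.reindex (blockEquiv k) (blockEquiv k))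
        (Matrix.fromBlocks R ((-a) • (1 : Matrix (Fin (2^k)) (Fin (2^k)) ℂ)) ((starRingEnd ℂ a) • (1 : Matrix (Fin (2^k)) (Fin (2^k)) ℂ)) Q) := rfl
    have TL1 : Q * R + (a • (1 : Matrix (Fin (2^k)) (Fin (2^k)) ℂ)) * ((starRingEnd ℂ a) • (1 : Matrix (Fin (2^k)) (Fin (2^k)) ℂ)) = (s + c) • 1 := by
      rw [h2, Matrix.smul_mul, one_mul, smul_smul, haa, add_smul]
    have TR1 : Q * ((-a) • (1 : Matrix (Fin (2^k)) (Fin (2^k)) ℂ)) + (a • (1 : Matrix (Fin (2^k)) (Fin (2^k)) ℂ)) * Q = 0 := by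
      rw [Matrix.mul_smul, mul_one, Matrix.smul_mul, one_mul, neg_smul, neg_add_cancel]
    have BL1 : ((-(starRingEnd ℂ a)) • (1 : Matrix (Fin (2^k)) (Fin (2^k)) ℂ)) * R + R * ((starRingEnd ℂ a) • (1 : Matrix (Fin (2^k)) (Fin (2^k)) ℂ)) = 0 := by
      rw [Matrix.smul_mul, one_mul, Matrix.mul_smul, mul_one, neg_smul, neg_add_cancel]
    have BR1 : ((-(starRingEnd ℂ a)) • (1 : Matrix (Fin (2^k)) (Fin (2^k)) ℂ)) * ((-a) • (1 : Matrix (Fin (2^k)) (Fin (2^k)) ℂ)) + R * Q = (s + c) • 1 := by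
      rw [Matrix.smul_mul, one_mul, smul_smul, neg_mul_neg, haa', h3, add_smul]
      exact add_comm _ _
    have TL2 : R * Q + ((-a) • (1 : Matrix (Fin (2^k)) (Fin (2^k)) ℂ)) * ((-(starRingEnd ℂ a)) • (1 : Matrix (Fin (2^k)) (Fin (2^k)) ℂ)) = (s + c) • 1 := by
      rw [h3, Matrix.smul_mul, one_mul, smul_smul, neg_mul_neg, haa, add_smul]
    have TR2 : R * (a • (1 : Matrix (Fin (2^k)) (Fin (2^k)) ℂ)) + ((-a) • (1 : Matrix (Fin (2^k)) (Fin (2^k)) ℂ)) * R = 0 := by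
      rw [Matrix.mul_smul, mul_one, Matrix.smul_mul, one_mul, neg_smul, add_neg_cancel]
    have BL2 : ((starRingEnd ℂ a) • (1 : Matrix (Fin (2^k)) (Fin (2^k)) ℂ)) * Q + Q * ((-(starRingEnd ℂ a)) • (1 : Matrix (Fin (2^k)) (Fin (2^k)) ℂ)) = 0 := by
      rw [Matrix.smul_mul, one_mul, Matrix.mul_smul, mul_one, neg_smul, add_neg_cancel]
    have BR2 : ((starRingEnd ℂ a) • (1 : Matrix (Fin (2^k)) (Fin (2^k)) ℂ)) * (a • (1 : Matrix (Fin (2^k)) (Fin (2^k)) ℂ)) + Q * R = (s + c) • 1 := by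
      rw [Matrix.smul_mul, one_mul, smul_smul, haa', h2, add_smul]
      exact add_comm _ _
    have key1 : Matrix.fromBlocks Q (a • (1 : Matrix (Fin (2^k)) (Fin (2^k)) ℂ)) ((-(starRingEnd ℂ a)) • (1 : Matrix (Fin (2^k)) (Fin (2^k)) ℂ)) R *
        Matrix.fromBlocks R ((-a) • (1 : Matrix (Fin (2^k)) (Fin (2^k)) ℂ)) ((starRingEnd ℂ a) • (1 : Matrix (Fin (2^k)) (Fin (2^k)) ℂ)) Q
        = Matrix.fromBlocks ((s + c) • 1) 0 0 ((s + c) • 1) := by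
      rw [Matrix.fromBlocks_multiply, TL1, TR1, BL1, BR1]
    have key2 : Matrix.fromBlocks R ((-a) • (1 : Matrix (Fin (2^k)) (Fin (2^k)) ℂ)) ((starRingEnd ℂ a) • (1 : Matrix (Fin (2^k)) (Fin (2^k)) ℂ)) Q *
        Matrix.fromBlocks Q (a • (1 : Matrix (Fin (2^k)) (Fin (2^k)) ℂ)) ((-(starRingEnd ℂ a)) • (1 : Matrix (Fin (2^k)) (Fin (2^k)) ℂ)) R
        = Matrix.fromBlocks ((s + c) • 1) 0 0 ((s + c) • 1) := by
      rw [Matrix.fromBlocks_multiply, TL2, TR2, BL2, BR2]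
    have hone : Matrix.submatrix
        (Matrix.fromBlocks ((s + c) • (1 : Matrix (Fin (2^k)) (Fin (2^k)) ℂ)) 0 0 ((s + c) • (1 : Matrix (Fin (2^k)) (Fin (2^k)) ℂ)))
        (blockEquiv k).symm (blockEquiv k).symm
        = (s + c) • (1 : Matrix (Fin (2^(k+1))) (Fin (2^(k+1))) ℂ) := by
      rw [show (0 : Matrix (Fin (2^k)) (Fin (2^k)) ℂ) = (s + c) • 0 by simp,
        ← Matrix.fromBlocks_smul, Matrix.fromBlocks_one]
      ext i j
      simp [Matrix.submatrix_apply, Matrix.smul_apply, Matrix.one_apply]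
    refine ⟨?_, ?_, ?_⟩
    · rw [hQ1, hR1, Matrix.reindex_apply, Matrix.reindex_apply,
        Matrix.conjTranspose_submatrix, Matrix.fromBlocks_conjTranspose]
      rw [h1, Matrix.conjTranspose_conjTranspose]
      simp [Matrix.conjTranspose_smul, Matrix.conjTranspose_one, Complex.star_def]
    · rw [hQ1, hR1, Matrix.reindex_apply, Matrix.reindex_apply,
        Matrix.submatrix_mul_equiv, key1, hsum, hone]
    · rw [hQ1, hR1, Matrix.reindex_apply, Matrix.reindex_apply,
        Matrix.submatrix_mul_equiv, key2, hsum, hone]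

/-- For every `n ≥ 1`, `R⁽ⁿ⁾` is the conjugate transpose of `Q⁽ⁿ⁾` and
`Q⁽ⁿ⁾R⁽ⁿ⁾ = R⁽ⁿ⁾Q⁽ⁿ⁾ = (Σ_{i=1}^n |q i|²) • I`. -/
theorem QRmat_conjTranspose_and_mul (q : ℕ → ℂ) (n : ℕ) (hn : 1 ≤ n) :
    (QRmat q (n-1)).2 = ((QRmat q (n-1)).1)ᴴ ∧
    (QRmat q (n-1)).1 * (QRmat q (n-1)).2
      = (∑ i ∈ Finset.Icc 1 n, ((‖q i‖ : ℝ) : ℂ)^2)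
          • (1 : Matrix (Fin (2^(n-1))) (Fin (2^(n-1))) ℂ) ∧
    (QRmat q (n-1)).2 * (QRmat q (n-1)).1
      = (∑ i ∈ Finset.Icc 1 n, ((‖q i‖ : ℝ) : ℂ)^2)
          • (1 : Matrix (Fin (2^(n-1))) (Fin (2^(n-1))) ℂ) := by
  obtain ⟨m, rfl⟩ : ∃ m, n = m + 1 := ⟨n - 1, by omega⟩
  simpa using QRmat_aux q m
end

section
/- Let f : ℝ × ℝ → ℝ be three times continuously differentiable and everywhere positive, and g : ℝ × ℝ → ℂ twice continuously differentiable, in the variables (y,s), satisfying everywhere the bilinear system f_{sy} g − f_s g_y − f_y g_s + f g_{sy} = f·g and 2(f_{ss} f − f_s²) = (1/2)|g|². Define φ(y,s) = y − 2 f_s(y,s)/f(y,s), and suppose Q : ℝ × ℝ → ℂ is twice continuously differentiable and satisfies g(y,s)/f(y,s) = Q(φ(y,s), −s) for all (y,s). Then at every point (y,s) where 1 − 2(log f)_{sy}(y,s) ≠ 0, the complex short pulse equation holds at the image point: Q_{xt} + Q + (1/2)(|Q|² Q_x)_x = 0 evaluated at (φ(y,s), −s), where the subscripts x, t denote partial derivatives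 of Q in its first and second arguments. -/
open Complex

noncomputable def pY {E : Type*} [NormedAddCommGroup E] [NormedSpace ℝ E]
    (F : ℝ × ℝ → E) : ℝ × ℝ → E := fun p => fderiv ℝ F p (1, 0)

noncomputable def pS {E : Type*} [NormedAddCommGroup E] [NormedSpace ℝ E]
    (F : ℝ × ℝ → E) : ℝ × ℝ → E := fun p => fderiv ℝ F p (0, 1)

lemma hasDerivAt_pY {E : Type*} [NormedAddCommGroup E] [NormedSpace ℝ E]
    (F : ℝ × ℝ → E) (y s : ℝ) (hF : DifferentiableAt ℝ F (y, s)) :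
    HasDerivAt (fun y' => F (y', s)) (pY F (y, s)) y := by
  have hc : HasDerivAt (fun y' : ℝ => ((y', s) : ℝ × ℝ)) ((1:ℝ), (0:ℝ)) y :=
    (hasDerivAt_id y).prodMk (hasDerivAt_const y s)
  exact hF.hasFDerivAt.comp_hasDerivAt y hc

lemma hasDerivAt_pS {E : Type*} [NormedAddCommGroup E] [NormedSpace ℝ E]
    (F : ℝ × ℝ → E) (y s : ℝ) (hF : DifferentiableAt ℝ F (y, s)) :
    HasDerivAt (fun s' => F (y, s')) (pS F (y, s)) s := by
  have hc : HasDerivAt (fun s' : ℝ => ((y, s') : ℝ × ℝ)) ((0:ℝ), (1:ℝ)) s :=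
    (hasDerivAt_const s y).prodMk (hasDerivAt_id s)
  exact hF.hasFDerivAt.comp_hasDerivAt s hc

lemma contDiff_pY {E : Type*} [NormedAddCommGroup E] [NormedSpace ℝ E]
    {F : ℝ × ℝ → E} {m n : WithTop ℕ∞} (hF : ContDiff ℝ n F) (h : m + 1 ≤ n) :
    ContDiff ℝ m (pY F) := (hF.fderiv_right h).clm_apply contDiff_const

lemma contDiff_pS {E : Type*} [NormedAddCommGroup E] [NormedSpace ℝ E]
    {F : ℝ × ℝ → E} {m n : WithTop ℕ∞} (hF : ContDiff ℝ n F) (h : m + 1 ≤ n) :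
    ContDiff ℝ m (pS F) := (hF.fderiv_right h).clm_apply contDiff_const

lemma clm_apply_split {E : Type*} [NormedAddCommGroup E] [NormedSpace ℝ E]
    (L : ℝ × ℝ →L[ℝ] E) (a b : ℝ) :
    L (a, b) = a • L (1, 0) + b • L (0, 1) := by
  have h1 : ((a, b) : ℝ × ℝ) = a • ((1:ℝ), (0:ℝ)) + b • ((0:ℝ), (1:ℝ)) := by
    simp [Prod.ext_iff]
  rw [h1, map_add, map_smul, map_smul]


/-- Partial derivative in the first variable of a complex-valued function. -/
noncomputable def pd1C (F : ℝ → ℝ → ℂ) (y s : ℝ) : ℂ := deriv (fun y' => F y' s) y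

/-- Partial derivative in the second variable of a complex-valued function. -/
noncomputable def pd2C (F : ℝ → ℝ → ℂ) (y s : ℝ) : ℂ := deriv (fun s' => F y s') s

/-- Partial derivative in the first variable of a real-valued function. -/
noncomputable def pd1R (F : ℝ → ℝ → ℝ) (y s : ℝ) : ℝ := deriv (fun y' => F y' s) y

/-- Partial derivative in the second variable of a real-valued function. -/
noncomputable def pd2R (F : ℝ → ℝ → ℝ) (y s : ℝ) : ℝ := deriv (fun s' => F y s') s

/-- If `(f, g)` solve the CSP bilinear system and `Q` is the function obtained from
`g/f` through the hodograph transformation `x = y − 2 (log f)_s`, `t = −s`, then `Q`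
satisfies the complex short pulse equation wherever `1 − 2 (log f)_{sy} ≠ 0`. -/
theorem csp_from_bilinear
    (f : ℝ → ℝ → ℝ) (g : ℝ → ℝ → ℂ) (Q : ℝ → ℝ → ℂ)
    (hf : ContDiff ℝ 3 (fun p : ℝ × ℝ => f p.1 p.2))
    (hfpos : ∀ y s, 0 < f y s)
    (hg : ContDiff ℝ 2 (fun p : ℝ × ℝ => g p.1 p.2))
    (hQ : ContDiff ℝ 2 (fun p : ℝ × ℝ => Q p.1 p.2))
    (hbil1 : ∀ y s,
      pd1C (pd2C (fun y' s' => (f y' s' : ℂ))) y s * g y s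
        - pd2C (fun y' s' => (f y' s' : ℂ)) y s * pd1C g y s
        - pd1C (fun y' s' => (f y' s' : ℂ)) y s * pd2C g y s
        + (f y s : ℂ) * pd1C (pd2C g) y s
      = (f y s : ℂ) * g y s)
    (hbil2 : ∀ y s,
      2 * (pd2R (pd2R f) y s * f y s - (pd2R f y s)^2)
        = (1/2) * ‖g y s‖^2)
    (φ : ℝ → ℝ → ℝ)
    (hφ : ∀ y s, φ y s = y - 2 * pd2R f y s / f y s)
    (hrel : ∀ y s, g y s / (f y s : ℂ) = Q (φ y s) (-s)) :
    ∀ y s, 1 - 2 * pd1R (pd2R (fun y' s' => Real.log (f y' s'))) y s ≠ 0 →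
      pd2C (pd1C Q) (φ y s) (-s) + Q (φ y s) (-s)
        + (1/2) * pd1C (fun x t => (‖Q x t‖ : ℂ)^2 * pd1C Q x t) (φ y s) (-s)
      = 0 := by
  have hF : ContDiff ℝ 3 (Function.uncurry f) := hf
  have hG : ContDiff ℝ 2 (Function.uncurry g) := hg
  have hQQ : ContDiff ℝ 2 (Function.uncurry Q) := hQ
  have hFd : Differentiable ℝ (Function.uncurry f) := hF.differentiable (by norm_num)
  have hGd : Differentiable ℝ (Function.uncurry g) := hG.differentiable (by norm_num)
  have hQd : Differentiable ℝ (Function.uncurry Q) := hQQ.differentiable (by norm_num)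
  have hFne : ∀ y s : ℝ, f y s ≠ 0 := fun y s => (hfpos y s).ne'
  have hfsC : ContDiff ℝ 2 (pS (Function.uncurry f)) := contDiff_pS hF (by norm_num)
  have hfyC : ContDiff ℝ 2 (pY (Function.uncurry f)) := contDiff_pY hF (by norm_num)
  have hgsC : ContDiff ℝ 1 (pS (Function.uncurry g)) := contDiff_pS hG (by norm_num)
  have hgyC : ContDiff ℝ 1 (pY (Function.uncurry g)) := contDiff_pY hG (by norm_num)
  have hQxC : ContDiff ℝ 1 (pY (Function.uncurry Q)) := contDiff_pY hQQ (by norm_num)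
  have hQtC : ContDiff ℝ 1 (pS (Function.uncurry Q)) := contDiff_pS hQQ (by norm_num)
  -- translations
  have t2f : ∀ y s, pd2R f y s = pS (Function.uncurry f) (y, s) :=
    fun y s => (hasDerivAt_pS (Function.uncurry f) y s (hFd _)).deriv
  have t2fC : ∀ y s, pd2C (fun y' s' => (f y' s' : ℂ)) y s = Complex.ofReal (pS (Function.uncurry f) (y, s)) :=
    fun y s => ((hasDerivAt_pS (Function.uncurry f) y s (hFd _)).ofReal_comp).deriv
  have t1fC : ∀ y s, pd1C (fun y' s' => (f y' s' : ℂ)) y s = Complex.ofReal (pY (Function.uncurry f) (y, s)) :=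
    fun y s => ((hasDerivAt_pY (Function.uncurry f) y s (hFd _)).ofReal_comp).deriv
  have t12fC : ∀ y s, pd1C (pd2C (fun y' s' => (f y' s' : ℂ))) y s
      = Complex.ofReal (pY (pS (Function.uncurry f)) (y, s)) := by
    intro y s
    have he : (fun y' => pd2C (fun y'' s' => (f y'' s' : ℂ)) y' s)
        = fun y' => Complex.ofReal (pS (Function.uncurry f) (y', s)) := funext fun y' => t2fC y' s
    show deriv (fun y' => pd2C (fun y'' s' => (f y'' s' : ℂ)) y' s) y = _
    rw [he]
    exact ((hasDerivAt_pY (pS (Function.uncurry f)) y s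
      ((hfsC.differentiable (by norm_num)) _)).ofReal_comp).deriv
  have t2g : ∀ y s, pd2C g y s = pS (Function.uncurry g) (y, s) :=
    fun y s => (hasDerivAt_pS (Function.uncurry g) y s (hGd _)).deriv
  have t1g : ∀ y s, pd1C g y s = pY (Function.uncurry g) (y, s) :=
    fun y s => (hasDerivAt_pY (Function.uncurry g) y s (hGd _)).deriv
  have t12g : ∀ y s, pd1C (pd2C g) y s = pY (pS (Function.uncurry g)) (y, s) := by
    intro y s
    have he : (fun y' => pd2C g y' s) = fun y' => pS (Function.uncurry g) (y', s) :=
      funext fun y' => t2g y' s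
    show deriv (fun y' => pd2C g y' s) y = _
    rw [he]
    exact (hasDerivAt_pY (pS (Function.uncurry g)) y s ((hgsC.differentiable (by norm_num)) _)).deriv
  have t22f : ∀ y s, pd2R (pd2R f) y s = pS (pS (Function.uncurry f)) (y, s) := by
    intro y s
    have he : (fun s' => pd2R f y s') = fun s' => pS (Function.uncurry f) (y, s') :=
      funext fun s' => t2f y s'
    show deriv (fun s' => pd2R f y s') s = _
    rw [he]
    exact (hasDerivAt_pS (pS (Function.uncurry f)) y s ((hfsC.differentiable (by norm_num)) _)).deriv
  have hB1 : ∀ y s : ℝ,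
      Complex.ofReal (pY (pS (Function.uncurry f)) (y, s)) * g y s
        - Complex.ofReal (pS (Function.uncurry f) (y, s)) * pY (Function.uncurry g) (y, s)
        - Complex.ofReal (pY (Function.uncurry f) (y, s)) * pS (Function.uncurry g) (y, s)
        + (f y s : ℂ) * pY (pS (Function.uncurry g)) (y, s)
      = (f y s : ℂ) * g y s := by
    intro y s
    have := hbil1 y s
    rwa [t12fC, t2fC, t1fC, t2g, t1g, t12g] at this
  have hB2 : ∀ y s : ℝ,
      2 * (pS (pS (Function.uncurry f)) (y, s) * f y s - (pS (Function.uncurry f) (y, s))^2)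
        = (1/2) * ‖g y s‖^2 := by
    intro y s
    have := hbil2 y s
    rwa [t22f, t2f] at this
  have hφ' : ∀ y s, φ y s = y - 2 * pS (Function.uncurry f) (y, s) / f y s := by
    intro y s; rw [hφ, t2f]
  have hrel' : ∀ y s, g y s / (f y s : ℂ)
      = Function.uncurry Q (y - 2 * pS (Function.uncurry f) (y, s) / f y s, -s) := by
    intro y s
    rw [hrel y s, hφ']
    rfl
  
  intro y₀ s₀ hρ
  -- translate the Jacobian hypothesis
  have tlog : ∀ y s : ℝ, pd2R (fun y' s' => Real.log (f y' s')) y s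
      = pS (Function.uncurry f) (y, s) / f y s := by
    intro y s
    have h1 : HasDerivAt (fun s' => f y s') (pS (Function.uncurry f) (y, s)) s :=
      hasDerivAt_pS (Function.uncurry f) y s (hFd _)
    exact (h1.log (hFne y s)).deriv
  have tloglog : pd1R (pd2R (fun y' s' => Real.log (f y' s'))) y₀ s₀
      = (pY (pS (Function.uncurry f)) (y₀, s₀) * f y₀ s₀
          - pS (Function.uncurry f) (y₀, s₀) * pY (Function.uncurry f) (y₀, s₀)) / (f y₀ s₀)^2 := by
    show deriv (fun y' => pd2R (fun y'' s' => Real.log (f y'' s')) y' s₀) y₀ = _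
    have he : (fun y' => pd2R (fun y'' s' => Real.log (f y'' s')) y' s₀)
        = fun y' => pS (Function.uncurry f) (y', s₀) / f y' s₀ := funext fun y' => tlog y' s₀
    rw [he]
    exact ((hasDerivAt_pY (pS (Function.uncurry f)) y₀ s₀ ((hfsC.differentiable (by norm_num)) _)).div
      (hasDerivAt_pY (Function.uncurry f) y₀ s₀ (hFd _)) (hFne y₀ s₀)).deriv
  rw [tloglog] at hρ
  -- the s-derivative of u = g/f, two ways
  have hABs : ∀ y s : ℝ,
      (pS (Function.uncurry g) (y, s) * Complex.ofReal (f y s)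
          - g y s * Complex.ofReal (pS (Function.uncurry f) (y, s))) / (Complex.ofReal (f y s))^2
      = (-(Complex.normSq (Function.uncurry Q (y - 2 * pS (Function.uncurry f) (y, s) / f y s, -s)))/2)
            • pY (Function.uncurry Q) (y - 2 * pS (Function.uncurry f) (y, s) / f y s, -s)
          - pS (Function.uncurry Q) (y - 2 * pS (Function.uncurry f) (y, s) / f y s, -s) := by
    intro y s
    have hd1 : HasDerivAt (fun s' => g y s' / Complex.ofReal (f y s'))
        ((pS (Function.uncurry g) (y, s) * Complex.ofReal (f y s)
          - g y s * Complex.ofReal (pS (Function.uncurry f) (y, s))) / (Complex.ofReal (f y s))^2) s :=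
      (hasDerivAt_pS (Function.uncurry g) y s (hGd _)).div
        ((hasDerivAt_pS (Function.uncurry f) y s (hFd _)).ofReal_comp)
        (by exact_mod_cast hFne y s)
    have hcurve : HasDerivAt
        (fun s' => ((y - 2 * pS (Function.uncurry f) (y, s') / f y s' : ℝ), (-s' : ℝ)))
        ((-((2 * pS (pS (Function.uncurry f)) (y, s) * f y s
            - 2 * pS (Function.uncurry f) (y, s) * pS (Function.uncurry f) (y, s)) / (f y s)^2),
          (-1 : ℝ))) s := by
      have h1 : HasDerivAt (fun s' => 2 * pS (Function.uncurry f) (y, s'))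
          (2 * pS (pS (Function.uncurry f)) (y, s)) s :=
        (hasDerivAt_pS (pS (Function.uncurry f)) y s ((hfsC.differentiable (by norm_num)) _)).const_mul 2
      have h2 : HasDerivAt (fun s' => f y s') (pS (Function.uncurry f) (y, s)) s :=
        hasDerivAt_pS (Function.uncurry f) y s (hFd _)
      have h4 := (hasDerivAt_const s y).sub (h1.div h2 (hFne y s))
      have h5 : HasDerivAt (fun s' : ℝ => -s') (-1 : ℝ) s := (hasDerivAt_id s).neg
      refine HasDerivAt.prodMk ?_ h5
      simpa [Pi.sub_def, Pi.div_def] using h4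
    have hd2 : HasDerivAt (fun s' => g y s' / Complex.ofReal (f y s'))
        (fderiv ℝ (Function.uncurry Q) (y - 2 * pS (Function.uncurry f) (y, s) / f y s, -s)
          ((-((2 * pS (pS (Function.uncurry f)) (y, s) * f y s
            - 2 * pS (Function.uncurry f) (y, s) * pS (Function.uncurry f) (y, s)) / (f y s)^2)),
           (-1 : ℝ))) s := by
      have he : (fun s' => g y s' / Complex.ofReal (f y s'))
          = fun s' => Function.uncurry Q (y - 2 * pS (Function.uncurry f) (y, s') / f y s', -s') :=
        funext fun s' => hrel' y s'
      rw [he]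
      exact (hQd _).hasFDerivAt.comp_hasDerivAt s hcurve
    have hEq := hd1.unique hd2
    rw [clm_apply_split] at hEq
    have hval : -((2 * pS (pS (Function.uncurry f)) (y, s) * f y s
        - 2 * pS (Function.uncurry f) (y, s) * pS (Function.uncurry f) (y, s)) / (f y s)^2)
        = -(Complex.normSq (Function.uncurry Q (y - 2 * pS (Function.uncurry f) (y, s) / f y s, -s)))/2 := by
      have h6 : Complex.normSq (Function.uncurry Q (y - 2 * pS (Function.uncurry f) (y, s) / f y s, -s))
          = ‖g y s‖^2 / (f y s)^2 := by
        rw [← hrel' y s, Complex.normSq_div, Complex.normSq_ofReal, ← Complex.sq_norm]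
        ring
      have h7 : 2 * pS (pS (Function.uncurry f)) (y, s) * f y s
          - 2 * pS (Function.uncurry f) (y, s) * pS (Function.uncurry f) (y, s)
          = 1/2 * ‖g y s‖^2 := by linear_combination hB2 y s
      rw [h6, h7]
      ring
    rw [hval] at hEq
    simpa [pY, pS, ← sub_eq_add_neg] using hEq
  
  -- smoothness of |Q|^2
  have hNQC : ContDiff ℝ 2 (fun q : ℝ × ℝ => Complex.normSq (Function.uncurry Q q)) := by
    have he : (fun q : ℝ × ℝ => Complex.normSq (Function.uncurry Q q)) = fun q : ℝ × ℝ =>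
        (Function.uncurry Q q).re * (Function.uncurry Q q).re + (Function.uncurry Q q).im * (Function.uncurry Q q).im :=
      funext fun q => Complex.normSq_apply _
    rw [he]
    exact ((Complex.reCLM.contDiff.comp hQQ).mul (Complex.reCLM.contDiff.comp hQQ)).add
      ((Complex.imCLM.contDiff.comp hQQ).mul (Complex.imCLM.contDiff.comp hQQ))
  have hNQd : Differentiable ℝ (fun q : ℝ × ℝ => Complex.normSq (Function.uncurry Q q)) := hNQC.differentiable (by norm_num)
  -- the y-direction hodograph curve through (y₀, s₀)
  have hcy : HasDerivAt (fun y' => ((y' - 2 * pS (Function.uncurry f) (y', s₀) / f y' s₀ : ℝ), (-s₀ : ℝ)))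
      (((1 - (2 * pY (pS (Function.uncurry f)) (y₀, s₀) * f y₀ s₀ - 2 * pS (Function.uncurry f) (y₀, s₀) * pY (Function.uncurry f) (y₀, s₀)) / f y₀ s₀ ^ 2), (0 : ℝ))) y₀ := by
    have h1 : HasDerivAt (fun y' => 2 * pS (Function.uncurry f) (y', s₀)) (2 * pY (pS (Function.uncurry f)) (y₀, s₀)) y₀ :=
      (hasDerivAt_pY (pS (Function.uncurry f)) y₀ s₀ ((hfsC.differentiable (by norm_num)) _)).const_mul 2
    have h2 : HasDerivAt (fun y' => f y' s₀) (pY (Function.uncurry f) (y₀, s₀)) y₀ :=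
      hasDerivAt_pY (Function.uncurry f) y₀ s₀ (hFd _)
    exact ((hasDerivAt_id y₀).sub (h1.div h2 (hFne y₀ s₀))).prodMk (hasDerivAt_const y₀ (-s₀))
  -- chain rule facts along this curve
  have hsplitX : fderiv ℝ (pY (Function.uncurry Q)) ((y₀ - 2 * pS (Function.uncurry f) (y₀, s₀) / f y₀ s₀), -s₀) (((1 - (2 * pY (pS (Function.uncurry f)) (y₀, s₀) * f y₀ s₀ - 2 * pS (Function.uncurry f) (y₀, s₀) * pY (Function.uncurry f) (y₀, s₀)) / f y₀ s₀ ^ 2), (0:ℝ)) : ℝ × ℝ) = (1 - (2 * pY (pS (Function.uncurry f)) (y₀, s₀) * f y₀ s₀ - 2 * pS (Function.uncurry f) (y₀, s₀) * pY (Function.uncurry f) (y₀, s₀)) / f y₀ s₀ ^ 2) • pY (pY (Function.uncurry Q)) ((y₀ - 2 * pS (Function.uncurry f) (y₀, s₀) / f y₀ s₀), -s₀) := by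
    rw [clm_apply_split, zero_smul, add_zero]; rfl
  have hsplitT : fderiv ℝ (pS (Function.uncurry Q)) ((y₀ - 2 * pS (Function.uncurry f) (y₀, s₀) / f y₀ s₀), -s₀) (((1 - (2 * pY (pS (Function.uncurry f)) (y₀, s₀) * f y₀ s₀ - 2 * pS (Function.uncurry f) (y₀, s₀) * pY (Function.uncurry f) (y₀, s₀)) / f y₀ s₀ ^ 2), (0:ℝ)) : ℝ × ℝ) = (1 - (2 * pY (pS (Function.uncurry f)) (y₀, s₀) * f y₀ s₀ - 2 * pS (Function.uncurry f) (y₀, s₀) * pY (Function.uncurry f) (y₀, s₀)) / f y₀ s₀ ^ 2) • pY (pS (Function.uncurry Q)) ((y₀ - 2 * pS (Function.uncurry f) (y₀, s₀) / f y₀ s₀), -s₀) := by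
    rw [clm_apply_split, zero_smul, add_zero]; rfl
  have hsplitN : fderiv ℝ (fun q : ℝ × ℝ => Complex.normSq (Function.uncurry Q q)) ((y₀ - 2 * pS (Function.uncurry f) (y₀, s₀) / f y₀ s₀), -s₀) (((1 - (2 * pY (pS (Function.uncurry f)) (y₀, s₀) * f y₀ s₀ - 2 * pS (Function.uncurry f) (y₀, s₀) * pY (Function.uncurry f) (y₀, s₀)) / f y₀ s₀ ^ 2), (0:ℝ)) : ℝ × ℝ) = (1 - (2 * pY (pS (Function.uncurry f)) (y₀, s₀) * f y₀ s₀ - 2 * pS (Function.uncurry f) (y₀, s₀) * pY (Function.uncurry f) (y₀, s₀)) / f y₀ s₀ ^ 2) • pY (fun q : ℝ × ℝ => Complex.normSq (Function.uncurry Q q)) ((y₀ - 2 * pS (Function.uncurry f) (y₀, s₀) / f y₀ s₀), -s₀) := by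
    rw [clm_apply_split, zero_smul, add_zero]; rfl
  have hQxc : HasDerivAt (fun y' => pY (Function.uncurry Q) (y' - 2 * pS (Function.uncurry f) (y', s₀) / f y' s₀, -s₀))
      ((1 - (2 * pY (pS (Function.uncurry f)) (y₀, s₀) * f y₀ s₀ - 2 * pS (Function.uncurry f) (y₀, s₀) * pY (Function.uncurry f) (y₀, s₀)) / f y₀ s₀ ^ 2) • pY (pY (Function.uncurry Q)) ((y₀ - 2 * pS (Function.uncurry f) (y₀, s₀) / f y₀ s₀), -s₀)) y₀ := by
    have h := ((hQxC.differentiable (by norm_num)) ((y₀ - 2 * pS (Function.uncurry f) (y₀, s₀) / f y₀ s₀), -s₀)).hasFDerivAt.comp_hasDerivAt y₀ hcy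
    rwa [hsplitX] at h
  have hQtc : HasDerivAt (fun y' => pS (Function.uncurry Q) (y' - 2 * pS (Function.uncurry f) (y', s₀) / f y' s₀, -s₀))
      ((1 - (2 * pY (pS (Function.uncurry f)) (y₀, s₀) * f y₀ s₀ - 2 * pS (Function.uncurry f) (y₀, s₀) * pY (Function.uncurry f) (y₀, s₀)) / f y₀ s₀ ^ 2) • pY (pS (Function.uncurry Q)) ((y₀ - 2 * pS (Function.uncurry f) (y₀, s₀) / f y₀ s₀), -s₀)) y₀ := by
    have h := ((hQtC.differentiable (by norm_num)) ((y₀ - 2 * pS (Function.uncurry f) (y₀, s₀) / f y₀ s₀), -s₀)).hasFDerivAt.comp_hasDerivAt y₀ hcy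
    rwa [hsplitT] at h
  have hNc : HasDerivAt (fun y' => Complex.normSq (Function.uncurry Q (y' - 2 * pS (Function.uncurry f) (y', s₀) / f y' s₀, -s₀)))
      ((1 - (2 * pY (pS (Function.uncurry f)) (y₀, s₀) * f y₀ s₀ - 2 * pS (Function.uncurry f) (y₀, s₀) * pY (Function.uncurry f) (y₀, s₀)) / f y₀ s₀ ^ 2) • pY (fun q : ℝ × ℝ => Complex.normSq (Function.uncurry Q q)) ((y₀ - 2 * pS (Function.uncurry f) (y₀, s₀) / f y₀ s₀), -s₀)) y₀ := by
    have h := (hNQd ((y₀ - 2 * pS (Function.uncurry f) (y₀, s₀) / f y₀ s₀), -s₀)).hasFDerivAt.comp_hasDerivAt y₀ hcy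
    rwa [hsplitN] at h
  have hrc : HasDerivAt
      (fun y' => -(Complex.normSq (Function.uncurry Q (y' - 2 * pS (Function.uncurry f) (y', s₀) / f y' s₀, -s₀)))/2)
      (-((1 - (2 * pY (pS (Function.uncurry f)) (y₀, s₀) * f y₀ s₀ - 2 * pS (Function.uncurry f) (y₀, s₀) * pY (Function.uncurry f) (y₀, s₀)) / f y₀ s₀ ^ 2) • pY (fun q : ℝ × ℝ => Complex.normSq (Function.uncurry Q q)) ((y₀ - 2 * pS (Function.uncurry f) (y₀, s₀) / f y₀ s₀), -s₀))/2) y₀ := (hNc.neg).div_const 2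
  have hBt := (hrc.smul hQxc).sub hQtc
  -- A-side derivative
  have h1A : HasDerivAt (fun y' => pS (Function.uncurry g) (y', s₀)) (pY (pS (Function.uncurry g)) (y₀, s₀)) y₀ :=
    hasDerivAt_pY (pS (Function.uncurry g)) y₀ s₀ ((hgsC.differentiable (by norm_num)) _)
  have h2A : HasDerivAt (fun y' => Complex.ofReal (f y' s₀)) (Complex.ofReal (pY (Function.uncurry f) (y₀, s₀))) y₀ :=
    (hasDerivAt_pY (Function.uncurry f) y₀ s₀ (hFd _)).ofReal_comp
  have h3A : HasDerivAt (fun y' => g y' s₀) (pY (Function.uncurry g) (y₀, s₀)) y₀ :=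
    hasDerivAt_pY (Function.uncurry g) y₀ s₀ (hGd _)
  have h4A : HasDerivAt (fun y' => Complex.ofReal (pS (Function.uncurry f) (y', s₀))) (Complex.ofReal (pY (pS (Function.uncurry f)) (y₀, s₀))) y₀ :=
    (hasDerivAt_pY (pS (Function.uncurry f)) y₀ s₀ ((hfsC.differentiable (by norm_num)) _)).ofReal_comp
  have hFneC2 : (Complex.ofReal (f y₀ s₀))^2 ≠ 0 :=
    pow_ne_zero 2 (Complex.ofReal_ne_zero.mpr (hFne y₀ s₀))
  have hden : HasDerivAt (fun y' => (Complex.ofReal (f y' s₀))^2)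
      (Complex.ofReal (pY (Function.uncurry f) (y₀, s₀)) * Complex.ofReal (f y₀ s₀)
        + Complex.ofReal (f y₀ s₀) * Complex.ofReal (pY (Function.uncurry f) (y₀, s₀))) y₀ := by
    simpa [pow_two, Pi.mul_def] using h2A.mul h2A
  have hAt := ((h1A.mul h2A).sub (h3A.mul h4A)).div hden hFneC2
  have hfe : (fun y' => (pS (Function.uncurry g) (y', s₀) * Complex.ofReal (f y' s₀)
        - g y' s₀ * Complex.ofReal (pS (Function.uncurry f) (y', s₀))) / (Complex.ofReal (f y' s₀))^2)
      = (fun y' => (-(Complex.normSq (Function.uncurry Q (y' - 2 * pS (Function.uncurry f) (y', s₀) / f y' s₀, -s₀)))/2)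
          • pY (Function.uncurry Q) (y' - 2 * pS (Function.uncurry f) (y', s₀) / f y' s₀, -s₀)
          - pS (Function.uncurry Q) (y' - 2 * pS (Function.uncurry f) (y', s₀) / f y' s₀, -s₀)) :=
    funext fun y' => hABs y' s₀
  have hAt' : HasDerivAt (fun y' => (pS (Function.uncurry g) (y', s₀) * Complex.ofReal (f y' s₀) - g y' s₀ * Complex.ofReal (pS (Function.uncurry f) (y', s₀))) / (Complex.ofReal (f y' s₀))^2) _ y₀ := hAt
  have hAt2 := hfe ▸ hAt'
  have hEq2 := hAt2.unique hBt
  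
  have hu0 : g y₀ s₀ = Complex.ofReal (f y₀ s₀) * Function.uncurry Q ((y₀ - 2 * pS (Function.uncurry f) (y₀, s₀) / f y₀ s₀), -s₀) := by
    rw [← hrel' y₀ s₀]
    rw [mul_comm, div_mul_cancel₀ _ (Complex.ofReal_ne_zero.mpr (hFne y₀ s₀))]
  have hρ' : (1 - (2 * pY (pS (Function.uncurry f)) (y₀, s₀) * f y₀ s₀ - 2 * pS (Function.uncurry f) (y₀, s₀) * pY (Function.uncurry f) (y₀, s₀)) / f y₀ s₀ ^ 2) ≠ 0 := by
    have e : (1 - (2 * pY (pS (Function.uncurry f)) (y₀, s₀) * f y₀ s₀ - 2 * pS (Function.uncurry f) (y₀, s₀) * pY (Function.uncurry f) (y₀, s₀)) / f y₀ s₀ ^ 2) = 1 - 2 * ((pY (pS (Function.uncurry f)) (y₀, s₀) * f y₀ s₀ - pS (Function.uncurry f) (y₀, s₀) * pY (Function.uncurry f) (y₀, s₀)) / f y₀ s₀ ^ 2) := by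
      ring
    rw [e]; exact hρ
  have hρC : Complex.ofReal (1 - (2 * pY (pS (Function.uncurry f)) (y₀, s₀) * f y₀ s₀ - 2 * pS (Function.uncurry f) (y₀, s₀) * pY (Function.uncurry f) (y₀, s₀)) / f y₀ s₀ ^ 2) ≠ 0 := Complex.ofReal_ne_zero.mpr hρ'
  have hFneC : Complex.ofReal (f y₀ s₀) ≠ 0 := Complex.ofReal_ne_zero.mpr (hFne y₀ s₀)
  have hL : (((pY (pS (Function.uncurry g)) (y₀, s₀) * Complex.ofReal (f y₀ s₀) + pS (Function.uncurry g) (y₀, s₀) * Complex.ofReal (pY (Function.uncurry f) (y₀, s₀))) - (pY (Function.uncurry g) (y₀, s₀) * Complex.ofReal (pS (Function.uncurry f) (y₀, s₀)) + g y₀ s₀ * Complex.ofReal (pY (pS (Function.uncurry f)) (y₀, s₀)))) * (Complex.ofReal (f y₀ s₀))^2 - (pS (Function.uncurry g) (y₀, s₀) * Complex.ofReal (f y₀ s₀) - g y₀ s₀ * Complex.ofReal (pS (Function.uncurry f) (y₀, s₀))) * (Complex.ofReal (pY (Function.uncurry f) (y₀, s₀)) * Complex.ofReal (f y₀ s₀)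 + Complex.ofReal (f y₀ s₀) * Complex.ofReal (pY (Function.uncurry f) (y₀, s₀)))) / ((Complex.ofReal (f y₀ s₀))^2)^2 = Complex.ofReal (1 - (2 * pY (pS (Function.uncurry f)) (y₀, s₀) * f y₀ s₀ - 2 * pS (Function.uncurry f) (y₀, s₀) * pY (Function.uncurry f) (y₀, s₀)) / f y₀ s₀ ^ 2) * Function.uncurry Q ((y₀ - 2 * pS (Function.uncurry f) (y₀, s₀) / f y₀ s₀), -s₀) := by
    have hb1 := hB1 y₀ s₀
    rw [hu0] at hb1
    have hρF : Complex.ofReal (1 - (2 * pY (pS (Function.uncurry f)) (y₀, s₀) * f y₀ s₀ - 2 * pS (Function.uncurry f) (y₀, s₀) * pY (Function.uncurry f) (y₀, s₀)) / f y₀ s₀ ^ 2) * (Complex.ofReal (f y₀ s₀))^4 = (Complex.ofReal (f y₀ s₀))^4 - 2 * Complex.ofReal (pY (pS (Function.uncurry f)) (y₀, s₀)) * (Complex.ofReal (f y₀ s₀))^3 + 2 * Complex.ofReal (pS (Function.uncurry f) (y₀, s₀)) * Complex.ofReal (pY (Function.uncurry f) (y₀, s₀)) * (Complex.ofReal (f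 y₀ s₀))^2 := by
      push_cast
      field_simp
      ring
    rw [div_eq_iff (pow_ne_zero 2 hFneC2)]
    simp only [Function.uncurry_apply_pair] at hb1 hu0 ⊢
    linear_combination (Complex.ofReal (f y₀ s₀))^2 * hb1 + (2 * Complex.ofReal (pY (Function.uncurry f) (y₀, s₀)) * Complex.ofReal (pS (Function.uncurry f) (y₀, s₀)) * Complex.ofReal (f y₀ s₀) - Complex.ofReal (pY (pS (Function.uncurry f)) (y₀, s₀)) * (Complex.ofReal (f y₀ s₀))^2) * hu0 - Q (y₀ - 2 * pS (Function.uncurry f) (y₀, s₀) / f y₀ s₀) (-s₀) * hρF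
  have hEq3 := hL.symm.trans hEq2
  have key : Function.uncurry Q ((y₀ - 2 * pS (Function.uncurry f) (y₀, s₀) / f y₀ s₀), -s₀)
      = -(Complex.ofReal (Complex.normSq (Function.uncurry Q ((y₀ - 2 * pS (Function.uncurry f) (y₀, s₀) / f y₀ s₀), -s₀)))/2) * pY (pY (Function.uncurry Q)) ((y₀ - 2 * pS (Function.uncurry f) (y₀, s₀) / f y₀ s₀), -s₀)
        - (Complex.ofReal (pY (fun q : ℝ × ℝ => Complex.normSq (Function.uncurry Q q)) ((y₀ - 2 * pS (Function.uncurry f) (y₀, s₀) / f y₀ s₀), -s₀))/2) * pY (Function.uncurry Q) ((y₀ - 2 * pS (Function.uncurry f) (y₀, s₀) / f y₀ s₀), -s₀) - pY (pS (Function.uncurry Q)) ((y₀ - 2 * pS (Function.uncurry f) (y₀, s₀) / f y₀ s₀), -s₀) := by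
    apply mul_left_cancel₀ hρC
    rw [hEq3]
    simp only [real_smul, smul_eq_mul]
    push_cast
    ring
  -- translate the goal
  rw [hφ' y₀ s₀]
  have g1 : ∀ x t : ℝ, pd1C Q x t = pY (Function.uncurry Q) (x, t) :=
    fun x t => (hasDerivAt_pY (Function.uncurry Q) x t (hQd _)).deriv
  have g2 : pd2C (pd1C Q) (y₀ - 2 * pS (Function.uncurry f) (y₀, s₀) / f y₀ s₀) (-s₀) = pS (pY (Function.uncurry Q)) ((y₀ - 2 * pS (Function.uncurry f) (y₀, s₀) / f y₀ s₀), -s₀) := by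
    show deriv (fun t => pd1C Q (y₀ - 2 * pS (Function.uncurry f) (y₀, s₀) / f y₀ s₀) t) (-s₀) = _
    have he : (fun t => pd1C Q (y₀ - 2 * pS (Function.uncurry f) (y₀, s₀) / f y₀ s₀) t) = fun t => pY (Function.uncurry Q) ((y₀ - 2 * pS (Function.uncurry f) (y₀, s₀) / f y₀ s₀), t) :=
      funext fun t => g1 (y₀ - 2 * pS (Function.uncurry f) (y₀, s₀) / f y₀ s₀) t
    rw [he]
    exact (hasDerivAt_pS (pY (Function.uncurry Q)) (y₀ - 2 * pS (Function.uncurry f) (y₀, s₀) / f y₀ s₀) (-s₀) ((hQxC.differentiable (by norm_num)) _)).deriv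
  have hQQ' : ContDiff ℝ 1 (fderiv ℝ (Function.uncurry Q)) := hQQ.fderiv_right (by norm_num)
  have hsymm : IsSymmSndFDerivAt ℝ (Function.uncurry Q) ((y₀ - 2 * pS (Function.uncurry f) (y₀, s₀) / f y₀ s₀), -s₀) :=
    (hQQ.contDiffAt).isSymmSndFDerivAt (by norm_num)
  have gsym : pS (pY (Function.uncurry Q)) ((y₀ - 2 * pS (Function.uncurry f) (y₀, s₀) / f y₀ s₀), -s₀) = pY (pS (Function.uncurry Q)) ((y₀ - 2 * pS (Function.uncurry f) (y₀, s₀) / f y₀ s₀), -s₀) := by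
    have e1 : pS (pY (Function.uncurry Q)) ((y₀ - 2 * pS (Function.uncurry f) (y₀, s₀) / f y₀ s₀), -s₀)
        = (fderiv ℝ (fderiv ℝ (Function.uncurry Q)) ((y₀ - 2 * pS (Function.uncurry f) (y₀, s₀) / f y₀ s₀), -s₀)) ((0:ℝ),(1:ℝ)) ((1:ℝ),(0:ℝ)) := by
      show (fderiv ℝ (fun q => (fderiv ℝ (Function.uncurry Q) q) ((1:ℝ),(0:ℝ))) ((y₀ - 2 * pS (Function.uncurry f) (y₀, s₀) / f y₀ s₀), -s₀)) ((0:ℝ),(1:ℝ)) = _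
      rw [fderiv_clm_apply (hQQ'.differentiable (by norm_num) _) (differentiableAt_const _)]
      simp
    have e2 : pY (pS (Function.uncurry Q)) ((y₀ - 2 * pS (Function.uncurry f) (y₀, s₀) / f y₀ s₀), -s₀)
        = (fderiv ℝ (fderiv ℝ (Function.uncurry Q)) ((y₀ - 2 * pS (Function.uncurry f) (y₀, s₀) / f y₀ s₀), -s₀)) ((1:ℝ),(0:ℝ)) ((0:ℝ),(1:ℝ)) := by
      show (fderiv ℝ (fun q => (fderiv ℝ (Function.uncurry Q) q) ((0:ℝ),(1:ℝ))) ((y₀ - 2 * pS (Function.uncurry f) (y₀, s₀) / f y₀ s₀), -s₀)) ((1:ℝ),(0:ℝ)) = _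
      rw [fderiv_clm_apply (hQQ'.differentiable (by norm_num) _) (differentiableAt_const _)]
      simp
    rw [e1, e2]
    exact hsymm _ _
  have g3 : pd1C (fun x t => (‖Q x t‖ : ℂ)^2 * pd1C Q x t) (y₀ - 2 * pS (Function.uncurry f) (y₀, s₀) / f y₀ s₀) (-s₀)
      = Complex.ofReal (pY (fun q : ℝ × ℝ => Complex.normSq (Function.uncurry Q q)) ((y₀ - 2 * pS (Function.uncurry f) (y₀, s₀) / f y₀ s₀), -s₀)) * pY (Function.uncurry Q) ((y₀ - 2 * pS (Function.uncurry f) (y₀, s₀) / f y₀ s₀), -s₀)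
        + Complex.ofReal (Complex.normSq (Function.uncurry Q ((y₀ - 2 * pS (Function.uncurry f) (y₀, s₀) / f y₀ s₀), -s₀))) * pY (pY (Function.uncurry Q)) ((y₀ - 2 * pS (Function.uncurry f) (y₀, s₀) / f y₀ s₀), -s₀) := by
    show deriv (fun x => (‖Q x (-s₀)‖ : ℂ)^2 * pd1C Q x (-s₀)) (y₀ - 2 * pS (Function.uncurry f) (y₀, s₀) / f y₀ s₀) = _
    have he : (fun x => (‖Q x (-s₀)‖ : ℂ)^2 * pd1C Q x (-s₀))
        = fun x => Complex.ofReal (Complex.normSq (Function.uncurry Q (x, -s₀))) * pY (Function.uncurry Q) (x, -s₀) := by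
      funext x
      rw [g1]
      congr 1
      rw [← Complex.ofReal_pow, Complex.sq_norm]
      rfl
    rw [he]
    exact (((hasDerivAt_pY (fun q : ℝ × ℝ => Complex.normSq (Function.uncurry Q q)) (y₀ - 2 * pS (Function.uncurry f) (y₀, s₀) / f y₀ s₀) (-s₀) (hNQd _)).ofReal_comp).mul
      (hasDerivAt_pY (pY (Function.uncurry Q)) (y₀ - 2 * pS (Function.uncurry f) (y₀, s₀) / f y₀ s₀) (-s₀) ((hQxC.differentiable (by norm_num)) _))).deriv
  rw [g2, gsym, g3, show Q (y₀ - 2 * pS (Function.uncurry f) (y₀, s₀) / f y₀ s₀) (-s₀) = Function.uncurry Q ((y₀ - 2 * pS (Function.uncurry f) (y₀, s₀) / f y₀ s₀), -s₀) from rfl]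
  linear_combination key
end

section
/- Let f : ℝ × ℝ → ℝ be three times continuously differentiable and everywhere positive, and g₁, g₂ : ℝ × ℝ → ℂ twice continuously differentiable, in the variables (y,s), satisfying everywhere the bilinear system f_{sy} g_i − f_s g_{i,y} − f_y g_{i,s} + f g_{i,sy} = f·g_i (i = 1,2) and 2(f_{ss} f − f_s²) = (1/2)(|g₁|² + |g₂|²). Define φ(y,s) = y − 2 f_s(y,s)/f(y,s), and suppose Q₁, Q₂ : ℝ × ℝ → ℂ are twice continuously differentiable and satisfy g_i(y,s)/f(y,s) = Q_i(φ(y,s), −s) for all (y,s) and i = 1,2. Then at every point (y,s) where 1 − 2(log f)_{sy}(y,s) ≠ 0, for each i = 1,2 the coupled complex short pulse equation holds at the image point: Q_{i,xt} + Q_i + (1/2)((|Q₁|² + |Q₂|²) Q_{i,x})_x = 0 evaluated at (φ(y,s), −s), where subscripts x, t denote partial derivatives of Q_i in its first and second arguments. -/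
open Complex

section CCSPTools

variable {E : Type*} [NormedAddCommGroup E] [NormedSpace ℝ E]

/-- First partial derivative (uncurried form). -/
noncomputable def Pa (F : ℝ × ℝ → E) : ℝ × ℝ → E := fun p => fderiv ℝ F p (1, 0)

/-- Second partial derivative (uncurried form). -/
noncomputable def Pb (F : ℝ × ℝ → E) : ℝ × ℝ → E := fun p => fderiv ℝ F p (0, 1)

lemma hasDerivAt_sliceA {F : ℝ × ℝ → E} {y s : ℝ} (h : DifferentiableAt ℝ F (y, s)) :
    HasDerivAt (fun y' => F (y', s)) (Pa F (y, s)) y :=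
  h.hasFDerivAt.comp_hasDerivAt y ((hasDerivAt_id y).prodMk (hasDerivAt_const y s))

lemma hasDerivAt_sliceB {F : ℝ × ℝ → E} {y s : ℝ} (h : DifferentiableAt ℝ F (y, s)) :
    HasDerivAt (fun s' => F (y, s')) (Pb F (y, s)) s :=
  h.hasFDerivAt.comp_hasDerivAt s ((hasDerivAt_const s y).prodMk (hasDerivAt_id s))

lemma hasDerivAt_curve {F : ℝ × ℝ → E} {γ : ℝ → ℝ × ℝ} {v : ℝ × ℝ} {t : ℝ}
    (hγ : HasDerivAt γ v t) (hF : DifferentiableAt ℝ F (γ t)) :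
    HasDerivAt (fun u => F (γ u)) (fderiv ℝ F (γ t) v) t :=
  hF.hasFDerivAt.comp_hasDerivAt t hγ

lemma clm_apply_decomp (A : ℝ × ℝ →L[ℝ] E) (a b : ℝ) :
    A (a, b) = a • A (1, 0) + b • A (0, 1) := by
  have h : ((a, b) : ℝ × ℝ) = a • ((1 : ℝ), (0 : ℝ)) + b • ((0 : ℝ), (1 : ℝ)) := by
    simp [Prod.ext_iff]
  rw [h, map_add, map_smul, map_smul]

lemma fderiv_apply_decomp (F : ℝ × ℝ → E) (p : ℝ × ℝ) (a b : ℝ) :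
    fderiv ℝ F p (a, b) = a • Pa F p + b • Pb F p :=
  clm_apply_decomp (fderiv ℝ F p) a b

lemma contDiff_Pa {F : ℝ × ℝ → E} {n m : WithTop ℕ∞} (h : ContDiff ℝ n F) (hm : m + 1 ≤ n) :
    ContDiff ℝ m (Pa F) := (h.fderiv_right hm).clm_apply contDiff_const

lemma contDiff_Pb {F : ℝ × ℝ → E} {n m : WithTop ℕ∞} (h : ContDiff ℝ n F) (hm : m + 1 ≤ n) :
    ContDiff ℝ m (Pb F) := (h.fderiv_right hm).clm_apply contDiff_const

lemma mixed_eq {F : ℝ × ℝ → E} (h : ContDiff ℝ 2 F) (p : ℝ × ℝ) :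
    Pb (Pa F) p = Pa (Pb F) p := by
  have hd' : DifferentiableAt ℝ (fderiv ℝ F) p :=
    ((h.fderiv_right (by norm_num)).differentiable one_ne_zero).differentiableAt
  have key : ∀ v w : ℝ × ℝ, fderiv ℝ (fun q => fderiv ℝ F q v) p w
      = fderiv ℝ (fderiv ℝ F) p w v := by
    intro v w
    rw [fderiv_clm_apply hd' (differentiableAt_const v)]
    simp
  have hsymm := ((h.contDiffAt (x := p)).isSymmSndFDerivAt (by simp [minSmoothness_of_isRCLikeNormedField])) (0, 1) (1, 0)
  show fderiv ℝ (fun q => fderiv ℝ F q (1, 0)) p (0, 1)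
      = fderiv ℝ (fun q => fderiv ℝ F q (0, 1)) p (1, 0)
  rw [key, key, hsymm]

end CCSPTools


lemma pd1C_curry {y s : ℝ} (X : ℝ × ℝ → ℂ) (h : DifferentiableAt ℝ X (y, s)) :
    pd1C (fun a b => X (a, b)) y s = Pa X (y, s) := (hasDerivAt_sliceA h).deriv

lemma pd2C_curry {y s : ℝ} (X : ℝ × ℝ → ℂ) (h : DifferentiableAt ℝ X (y, s)) :
    pd2C (fun a b => X (a, b)) y s = Pb X (y, s) := (hasDerivAt_sliceB h).deriv

lemma pd1R_curry {y s : ℝ} (X : ℝ × ℝ → ℝ) (h : DifferentiableAt ℝ X (y, s)) :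
    pd1R (fun a b => X (a, b)) y s = Pa X (y, s) := (hasDerivAt_sliceA h).deriv

lemma pd2R_curry {y s : ℝ} (X : ℝ × ℝ → ℝ) (h : DifferentiableAt ℝ X (y, s)) :
    pd2R (fun a b => X (a, b)) y s = Pb X (y, s) := (hasDerivAt_sliceB h).deriv

/-- Identity (I) : from the bilinear equation, the mixed derivative of `H = G/F`
satisfies `H_{ys} = H ρ`. -/
lemma identity_I (F : ℝ × ℝ → ℝ) (G : ℝ × ℝ → ℂ) (hF : ContDiff ℝ 3 F)
    (hFne : ∀ p, F p ≠ 0) (hG : ContDiff ℝ 2 G)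
    (hbil : ∀ p : ℝ × ℝ,
      (Complex.ofReal (Pa (Pb F) p)) * G p - (Complex.ofReal (Pb F p)) * Pa G p - (Complex.ofReal (Pa F p)) * Pb G p
        + (F p : ℂ) * Pa (Pb G) p = (F p : ℂ) * G p) :
    ∀ p : ℝ × ℝ, Pb (Pa (fun q => G q / (F q : ℂ))) p
      = (G p / (F p : ℂ))
        * (1 - 2 * ((Complex.ofReal (Pa (Pb F) p)) * (F p : ℂ) - (Complex.ofReal (Pa F p)) * (Complex.ofReal (Pb F p)))
            / (F p : ℂ) ^ 2) := by
  have hFd : Differentiable ℝ F := hF.differentiable (by norm_num)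
  have hGd : Differentiable ℝ G := hG.differentiable (by norm_num)
  have hFcne : ∀ p : ℝ × ℝ, ((F p : ℂ)) ≠ 0 := fun p => by
    simpa using hFne p
  have hH2 : ContDiff ℝ 2 (fun q => G q / (F q : ℂ)) := by
    have h1 : ContDiff ℝ 2 (fun q => ((((F q)⁻¹ : ℝ)) : ℂ)) :=
      Complex.ofRealCLM.contDiff.comp ((hF.of_le (by norm_num)).inv hFne)
    have h2 : (fun q => G q / (F q : ℂ)) = fun q => G q * ((((F q)⁻¹ : ℝ)) : ℂ) :=
      funext fun q => by rw [Complex.ofReal_inv, div_eq_mul_inv]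
    rw [h2]; exact hG.mul h1
  have hHd : Differentiable ℝ (fun q => G q / (F q : ℂ)) := hH2.differentiable (by norm_num)
  have hPaGd : Differentiable ℝ (Pa G) :=
    (contDiff_Pa hG (by norm_num)).differentiable one_ne_zero
  have hPaFd : Differentiable ℝ (Pa F) :=
    (contDiff_Pa (m := 2) hF (by norm_num)).differentiable (by norm_num)
  have hPaHd : Differentiable ℝ (Pa (fun q => G q / (F q : ℂ))) :=
    (contDiff_Pa hH2 (by norm_num)).differentiable one_ne_zero
  -- step (d): first derivative of the quotient
  have hPaH : ∀ q : ℝ × ℝ, Pa (fun q => G q / (F q : ℂ)) q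
      = (Pa G q * (F q : ℂ) - G q * (Complex.ofReal (Pa F q))) / (F q : ℂ) ^ 2 := by
    rintro ⟨a, b⟩
    exact (hasDerivAt_sliceA (hHd (a, b))).unique
      ((hasDerivAt_sliceA (hGd (a, b))).div
        ((hasDerivAt_sliceA (hFd (a, b))).ofReal_comp) (hFcne (a, b)))
  rintro ⟨a, b⟩
  have hPbFd : Differentiable ℝ (Pb F) :=
    (contDiff_Pb (m := 2) hF (by norm_num)).differentiable (by norm_num)
  -- step (e): differentiate the quotient formula in `s`
  have efun : (fun t => Pa (fun q => G q / (F q : ℂ)) (a, t))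
      = fun t => (Pa G (a, t) * (F (a, t) : ℂ) - G (a, t) * (Complex.ofReal (Pa F (a, t))))
          / (F (a, t) : ℂ) ^ 2 := funext fun t => hPaH (a, t)
  have hnum : HasDerivAt
      (fun t => Pa G (a, t) * (F (a, t) : ℂ) - G (a, t) * (Complex.ofReal (Pa F (a, t))))
      (Pb (Pa G) (a, b) * (F (a, b) : ℂ) + Pa G (a, b) * (Complex.ofReal (Pb F (a, b)))
        - (Pb G (a, b) * (Complex.ofReal (Pa F (a, b))) + G (a, b) * (Complex.ofReal (Pb (Pa F) (a, b))))) b :=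
    ((hasDerivAt_sliceB (hPaGd (a, b))).mul
        ((hasDerivAt_sliceB (hFd (a, b))).ofReal_comp)).sub
      ((hasDerivAt_sliceB (hGd (a, b))).mul
        ((hasDerivAt_sliceB (hPaFd (a, b))).ofReal_comp))
  have hden : HasDerivAt (fun t => ((F (a, t) : ℂ)) ^ 2)
      (Complex.ofReal (Pb F (a, b)) * (F (a, b) : ℂ)
        + (F (a, b) : ℂ) * Complex.ofReal (Pb F (a, b))) b := by
    have h := ((hasDerivAt_sliceB (hFd (a, b))).ofReal_comp).mul
      ((hasDerivAt_sliceB (hFd (a, b))).ofReal_comp)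
    simpa [pow_two, Pi.mul_def] using h
  have hdiv := hnum.div hden (pow_ne_zero 2 (hFcne (a, b)))
  have hval : Pb (Pa (fun q => G q / (F q : ℂ))) (a, b)
      = ((Pb (Pa G) (a, b) * (F (a, b) : ℂ) + Pa G (a, b) * (Complex.ofReal (Pb F (a, b)))
        - (Pb G (a, b) * (Complex.ofReal (Pa F (a, b))) + G (a, b) * (Complex.ofReal (Pb (Pa F) (a, b)))))
          * ((F (a, b) : ℂ)) ^ 2
        - (Pa G (a, b) * (F (a, b) : ℂ) - G (a, b) * (Complex.ofReal (Pa F (a, b))))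
          * (Complex.ofReal (Pb F (a, b)) * (F (a, b) : ℂ)
            + (F (a, b) : ℂ) * Complex.ofReal (Pb F (a, b))))
        / ((F (a, b) : ℂ) ^ 2) ^ 2 := by
    have := (hasDerivAt_sliceB (hPaHd (a, b))).deriv
    rw [← this, efun]
    exact hdiv.deriv
  rw [hval, mixed_eq hG (a, b), mixed_eq (hF.of_le (by norm_num)) (a, b)]
  have hb := hbil (a, b)
  have hF0 := hFcne (a, b)
  field_simp
  linear_combination ((F (a, b) : ℂ)) * hb


/-- Core computation: the hodograph chain rule turns the bilinear identity into the CCSP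
equation at points where the Jacobian `Pa Φ` does not vanish. -/
lemma ccsp_core (F : ℝ × ℝ → ℝ) (G : ℝ × ℝ → ℂ) (UQ : ℝ × ℝ → ℂ) (Φ : ℝ × ℝ → ℝ)
    (RQ : ℝ × ℝ → ℝ)
    (hF : ContDiff ℝ 3 F) (hFne : ∀ p, F p ≠ 0)
    (hG : ContDiff ℝ 2 G) (hUQ : ContDiff ℝ 2 UQ) (hRQ : ContDiff ℝ 1 RQ)
    (hΦdef : ∀ p : ℝ × ℝ, Φ p = p.1 - 2 * Pb F p / F p)
    (hbil : ∀ p : ℝ × ℝ,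
      Complex.ofReal (Pa (Pb F) p) * G p - Complex.ofReal (Pb F p) * Pa G p
        - Complex.ofReal (Pa F p) * Pb G p + Complex.ofReal (F p) * Pa (Pb G) p
      = Complex.ofReal (F p) * G p)
    (hPbΦR : ∀ p : ℝ × ℝ, Pb Φ p = -(1/2) * RQ (Φ p, -p.2))
    (hrel : ∀ p : ℝ × ℝ, G p / Complex.ofReal (F p) = UQ (Φ p, -p.2)) :
    ∀ p : ℝ × ℝ, 1 - 2 * ((Pa (Pb F) p * F p - Pb F p * Pa F p) / F p ^ 2) ≠ 0 →
      Pb (Pa UQ) (Φ p, -p.2) + UQ (Φ p, -p.2)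
        + (1/2) * (Complex.ofReal (Pa RQ (Φ p, -p.2)) * Pa UQ (Φ p, -p.2)
            + Complex.ofReal (RQ (Φ p, -p.2)) * Pa (Pa UQ) (Φ p, -p.2)) = 0 := by
  have hFd : Differentiable ℝ F := hF.differentiable (by norm_num)
  have hGd : Differentiable ℝ G := hG.differentiable (by norm_num)
  have hUQd : Differentiable ℝ UQ := hUQ.differentiable (by norm_num)
  have hRQd : Differentiable ℝ RQ := hRQ.differentiable one_ne_zero
  have hFcne : ∀ p : ℝ × ℝ, (Complex.ofReal (F p)) ≠ 0 := fun p => by simpa using hFne p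
  have hPbF2 : ContDiff ℝ 2 (Pb F) := contDiff_Pb (m := 2) hF (by norm_num)
  have hPbFd : Differentiable ℝ (Pb F) := hPbF2.differentiable (by norm_num)
  have hΦeq : Φ = fun p => p.1 - 2 * Pb F p / F p := funext hΦdef
  have hΦ2 : ContDiff ℝ 2 Φ := by
    rw [hΦeq]
    exact contDiff_fst.sub ((contDiff_const.mul hPbF2).div (hF.of_le (by norm_num)) hFne)
  have hΦd : Differentiable ℝ Φ := hΦ2.differentiable (by norm_num)
  have hPaΦd : Differentiable ℝ (Pa Φ) :=
    (contDiff_Pa hΦ2 (by norm_num)).differentiable one_ne_zero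
  have hPbΦd : Differentiable ℝ (Pb Φ) :=
    (contDiff_Pb hΦ2 (by norm_num)).differentiable one_ne_zero
  have hPaUQd : Differentiable ℝ (Pa UQ) :=
    (contDiff_Pa hUQ (by norm_num)).differentiable one_ne_zero
  have hH2 : ContDiff ℝ 2 (fun q => G q / Complex.ofReal (F q)) := by
    have h1 : ContDiff ℝ 2 (fun q => ((((F q)⁻¹ : ℝ)) : ℂ)) :=
      Complex.ofRealCLM.contDiff.comp ((hF.of_le (by norm_num)).inv hFne)
    have h2 : (fun q => G q / Complex.ofReal (F q))
        = fun q => G q * ((((F q)⁻¹ : ℝ)) : ℂ) :=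
      funext fun q => by rw [Complex.ofReal_inv, div_eq_mul_inv]
    rw [h2]; exact hG.mul h1
  have hHd : Differentiable ℝ (fun q => G q / Complex.ofReal (F q)) :=
    hH2.differentiable (by norm_num)
  have hPaHd : Differentiable ℝ (Pa (fun q => G q / Complex.ofReal (F q))) :=
    (contDiff_Pa hH2 (by norm_num)).differentiable one_ne_zero
  -- formula for Pa Φ
  have hPaΦ : ∀ p : ℝ × ℝ, Pa Φ p
      = 1 - 2 * ((Pa (Pb F) p * F p - Pb F p * Pa F p) / F p ^ 2) := by
    rintro ⟨a, b⟩
    have efun : (fun t => Φ (t, b)) = fun t => t - 2 * Pb F (t, b) / F (t, b) :=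
      funext fun t => hΦdef (t, b)
    have hd : HasDerivAt (fun t => t - 2 * Pb F (t, b) / F (t, b))
        (1 - (2 * Pa (Pb F) (a, b) * F (a, b) - 2 * Pb F (a, b) * Pa F (a, b))
          / F (a, b) ^ 2) a :=
      (hasDerivAt_id a).sub
        (((hasDerivAt_sliceA (hPbFd (a, b))).const_mul 2).div
          (hasDerivAt_sliceA (hFd (a, b))) (hFne (a, b)))
    have h1 : Pa Φ (a, b)
        = 1 - (2 * Pa (Pb F) (a, b) * F (a, b) - 2 * Pb F (a, b) * Pa F (a, b))
            / F (a, b) ^ 2 := by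
      rw [← (hasDerivAt_sliceA (hΦd (a, b))).deriv, efun]
      exact hd.deriv
    rw [h1]; ring
  -- chain rule, first derivative (identity III)
  have hIII : ∀ p : ℝ × ℝ, Pa (fun q => G q / Complex.ofReal (F q)) p
      = Complex.ofReal (Pa Φ p) * Pa UQ (Φ p, -p.2) := by
    rintro ⟨a, b⟩
    have efun : (fun t => G (t, b) / Complex.ofReal (F (t, b)))
        = fun t => UQ (Φ (t, b), -b) := funext fun t => hrel (t, b)
    have hcurve : HasDerivAt (fun t : ℝ => ((Φ (t, b), -b) : ℝ × ℝ)) (Pa Φ (a, b), 0) a :=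
      (hasDerivAt_sliceA (hΦd (a, b))).prodMk (hasDerivAt_const a (-b))
    have h2 := hasDerivAt_curve hcurve (hUQd (Φ (a, b), -b))
    have h3 : Pa (fun q => G q / Complex.ofReal (F q)) (a, b)
        = fderiv ℝ UQ (Φ (a, b), -b) (Pa Φ (a, b), 0) := by
      rw [← (hasDerivAt_sliceA (hHd (a, b))).deriv]
      show deriv (fun t => G (t, b) / Complex.ofReal (F (t, b))) a = _
      rw [efun]
      exact h2.deriv
    rw [h3, fderiv_apply_decomp]
    simp only [Complex.real_smul, zero_smul, add_zero]
  rintro ⟨a, b⟩ hρ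
  have hρ' : Pa Φ (a, b) ≠ 0 := by rw [hPaΦ (a, b)]; exact hρ
  -- chain rule, mixed second derivative (identity IV)
  have hcurve2 : HasDerivAt (fun t : ℝ => ((Φ (a, t), -t) : ℝ × ℝ)) (Pb Φ (a, b), -1) b :=
    (hasDerivAt_sliceB (hΦd (a, b))).prodMk (hasDerivAt_id b).neg
  have hcurve : HasDerivAt (fun t : ℝ => ((Φ (t, b), -b) : ℝ × ℝ)) (Pa Φ (a, b), 0) a :=
    (hasDerivAt_sliceA (hΦd (a, b))).prodMk (hasDerivAt_const a (-b))
  have hIV : Pb (Pa (fun q => G q / Complex.ofReal (F q))) (a, b)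
      = Complex.ofReal (Pb (Pa Φ) (a, b)) * Pa UQ (Φ (a, b), -b)
        + Complex.ofReal (Pa Φ (a, b))
          * (Complex.ofReal (Pb Φ (a, b)) * Pa (Pa UQ) (Φ (a, b), -b)
              - Pb (Pa UQ) (Φ (a, b), -b)) := by
    have efun2 : (fun t => Pa (fun q => G q / Complex.ofReal (F q)) (a, t))
        = fun t => Complex.ofReal (Pa Φ (a, t)) * Pa UQ (Φ (a, t), -t) :=
      funext fun t => hIII (a, t)
    have h4 := ((hasDerivAt_sliceB (hPaΦd (a, b))).ofReal_comp).mul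
      (hasDerivAt_curve hcurve2 (hPaUQd (Φ (a, b), -b)))
    have h5 : Pb (Pa (fun q => G q / Complex.ofReal (F q))) (a, b)
        = Complex.ofReal (Pb (Pa Φ) (a, b)) * Pa UQ (Φ (a, b), -b)
          + Complex.ofReal (Pa Φ (a, b))
            * (fderiv ℝ (Pa UQ) (Φ (a, b), -b) (Pb Φ (a, b), -1)) := by
      rw [← (hasDerivAt_sliceB (hPaHd (a, b))).deriv, efun2]
      exact h4.deriv
    rw [h5, fderiv_apply_decomp]
    simp only [Complex.real_smul]
    push_cast
    ring
  -- derivative of Pb Φ in the first variable (identity k)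
  have hk : Pa (Pb Φ) (a, b) = -(1/2) * (Pa Φ (a, b) * Pa RQ (Φ (a, b), -b)) := by
    have efun3 : (fun t => Pb Φ (t, b)) = fun t => -(1/2) * RQ (Φ (t, b), -b) :=
      funext fun t => hPbΦR (t, b)
    have h6 := (hasDerivAt_curve hcurve (hRQd (Φ (a, b), -b))).const_mul (-(1/2) : ℝ)
    have h7 : Pa (Pb Φ) (a, b)
        = -(1/2) * (fderiv ℝ RQ (Φ (a, b), -b) (Pa Φ (a, b), 0)) := by
      rw [← (hasDerivAt_sliceA (hPbΦd (a, b))).deriv, efun3]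
      exact h6.deriv
    rw [h7, fderiv_apply_decomp]
    simp only [smul_eq_mul, zero_mul, add_zero]
  -- identity I at the point
  have hI := identity_I F G hF hFne hG hbil (a, b)
  have hρcast : (1 - 2 * (Complex.ofReal (Pa (Pb F) (a, b)) * Complex.ofReal (F (a, b))
        - Complex.ofReal (Pa F (a, b)) * Complex.ofReal (Pb F (a, b)))
          / Complex.ofReal (F (a, b)) ^ 2)
      = Complex.ofReal (Pa Φ (a, b)) := by
    rw [hPaΦ (a, b)]
    push_cast
    ring
  rw [hρcast, hrel (a, b)] at hI
  rw [mixed_eq hΦ2 (a, b), hk, hPbΦR (a, b)] at hIV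
  have hcomb := hI.symm.trans hIV
  have hfin : Complex.ofReal (Pa Φ (a, b))
      * (Pb (Pa UQ) (Φ (a, b), -b) + UQ (Φ (a, b), -b)
        + (1/2) * (Complex.ofReal (Pa RQ (Φ (a, b), -b)) * Pa UQ (Φ (a, b), -b)
            + Complex.ofReal (RQ (Φ (a, b), -b)) * Pa (Pa UQ) (Φ (a, b), -b))) = 0 := by
    push_cast at hcomb ⊢
    linear_combination hcomb
  have := mul_eq_zero.mp hfin
  rcases this with h | h
  · exact absurd (Complex.ofReal_eq_zero.mp h) hρ'
  · exact h


/-- If `(f, g₁, g₂)` solve the CCSP bilinear system and `Q₁, Q₂` are obtained from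
`g₁/f, g₂/f` through the hodograph transformation `x = y − 2 (log f)_s`, `t = −s`,
then `Q₁, Q₂` satisfy the coupled complex short pulse equations wherever
`1 − 2 (log f)_{sy} ≠ 0`. -/
theorem ccsp_from_bilinear
    (f : ℝ → ℝ → ℝ) (g₁ g₂ : ℝ → ℝ → ℂ) (Q₁ Q₂ : ℝ → ℝ → ℂ)
    (hf : ContDiff ℝ 3 (fun p : ℝ × ℝ => f p.1 p.2))
    (hfpos : ∀ y s, 0 < f y s)
    (hg₁ : ContDiff ℝ 2 (fun p : ℝ × ℝ => g₁ p.1 p.2))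
    (hg₂ : ContDiff ℝ 2 (fun p : ℝ × ℝ => g₂ p.1 p.2))
    (hQ₁ : ContDiff ℝ 2 (fun p : ℝ × ℝ => Q₁ p.1 p.2))
    (hQ₂ : ContDiff ℝ 2 (fun p : ℝ × ℝ => Q₂ p.1 p.2))
    (hbil1 : ∀ g, (g = g₁ ∨ g = g₂) → ∀ y s,
      pd1C (pd2C (fun y' s' => (f y' s' : ℂ))) y s * g y s
        - pd2C (fun y' s' => (f y' s' : ℂ)) y s * pd1C g y s
        - pd1C (fun y' s' => (f y' s' : ℂ)) y s * pd2C g y s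
        + (f y s : ℂ) * pd1C (pd2C g) y s
      = (f y s : ℂ) * g y s)
    (hbil2 : ∀ y s,
      2 * (pd2R (pd2R f) y s * f y s - (pd2R f y s)^2)
        = (1/2) * (‖g₁ y s‖^2 + ‖g₂ y s‖^2))
    (φ : ℝ → ℝ → ℝ)
    (hφ : ∀ y s, φ y s = y - 2 * pd2R f y s / f y s)
    (hrel₁ : ∀ y s, g₁ y s / (f y s : ℂ) = Q₁ (φ y s) (-s))
    (hrel₂ : ∀ y s, g₂ y s / (f y s : ℂ) = Q₂ (φ y s) (-s)) :
    ∀ y s, 1 - 2 * pd1R (pd2R (fun y' s' => Real.log (f y' s'))) y s ≠ 0 →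
      (∀ Q, (Q = Q₁ ∨ Q = Q₂) →
        pd2C (pd1C Q) (φ y s) (-s) + Q (φ y s) (-s)
          + (1/2) * pd1C (fun x t =>
              (((‖Q₁ x t‖ : ℝ) : ℂ)^2 + ((‖Q₂ x t‖ : ℝ) : ℂ)^2)
                * pd1C Q x t) (φ y s) (-s)
        = 0) := by
  intro y s hρ Q hQmem
  have hFd : Differentiable ℝ (fun p : ℝ × ℝ => f p.1 p.2) :=
    hf.differentiable (by norm_num)
  have hFne : ∀ p : ℝ × ℝ, f p.1 p.2 ≠ 0 := fun p => (hfpos p.1 p.2).ne'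
  have hPbF2 : ContDiff ℝ 2 (Pb (fun p : ℝ × ℝ => f p.1 p.2)) :=
    contDiff_Pb (m := 2) hf (by norm_num)
  have hPbFd : Differentiable ℝ (Pb (fun p : ℝ × ℝ => f p.1 p.2)) :=
    hPbF2.differentiable (by norm_num)
  -- φ in uncurried form
  have hΦdef : ∀ p : ℝ × ℝ,
      φ p.1 p.2 = p.1 - 2 * Pb (fun p : ℝ × ℝ => f p.1 p.2) p / f p.1 p.2 := by
    rintro ⟨a, b⟩
    have h1 : pd2R f a b = Pb (fun p : ℝ × ℝ => f p.1 p.2) (a, b) :=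
      pd2R_curry _ (hFd (a, b))
    rw [hφ a b] at *
    rw [h1]
  have hΦd : Differentiable ℝ (fun p : ℝ × ℝ => φ p.1 p.2) := by
    have e : (fun p : ℝ × ℝ => φ p.1 p.2)
        = fun p : ℝ × ℝ => p.1 - 2 * Pb (fun p : ℝ × ℝ => f p.1 p.2) p / f p.1 p.2 :=
      funext hΦdef
    rw [e]
    exact (contDiff_fst.sub ((contDiff_const.mul hPbF2).div
      (hf.of_le (by norm_num)) hFne)).differentiable (by norm_num)
  -- smoothness of RQ
  have hRQ : ContDiff ℝ 1 (fun w : ℝ × ℝ =>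
      ‖Q₁ w.1 w.2‖ ^ 2 + ‖Q₂ w.1 w.2‖ ^ 2) := by
    have habs : ∀ z : ℂ, ‖z‖ ^ 2 = z.re * z.re + z.im * z.im := fun z => by
      rw [Complex.sq_norm, Complex.normSq_apply]
    have e : (fun w : ℝ × ℝ => ‖Q₁ w.1 w.2‖ ^ 2 + ‖Q₂ w.1 w.2‖ ^ 2)
        = fun w : ℝ × ℝ =>
          ((Q₁ w.1 w.2).re * (Q₁ w.1 w.2).re + (Q₁ w.1 w.2).im * (Q₁ w.1 w.2).im)
          + ((Q₂ w.1 w.2).re * (Q₂ w.1 w.2).re + (Q₂ w.1 w.2).im * (Q₂ w.1 w.2).im) := by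
      funext w; rw [habs, habs]
    rw [e]
    have h1 : ContDiff ℝ 1 (fun w : ℝ × ℝ => Q₁ w.1 w.2) := hQ₁.of_le one_le_two
    have h2 : ContDiff ℝ 1 (fun w : ℝ × ℝ => Q₂ w.1 w.2) := hQ₂.of_le one_le_two
    have r1 := Complex.reCLM.contDiff.comp h1
    have i1 := Complex.imCLM.contDiff.comp h1
    have r2 := Complex.reCLM.contDiff.comp h2
    have i2 := Complex.imCLM.contDiff.comp h2
    exact ((r1.mul r1).add (i1.mul i1)).add ((r2.mul r2).add (i2.mul i2))
  have hRQd : Differentiable ℝ (fun w : ℝ × ℝ =>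
      ‖Q₁ w.1 w.2‖ ^ 2 + ‖Q₂ w.1 w.2‖ ^ 2) :=
    hRQ.differentiable one_ne_zero
  -- identity (II): Pb Φ = -(1/2) RQ ∘ ψ
  have hPbΦR : ∀ p : ℝ × ℝ, Pb (fun p : ℝ × ℝ => φ p.1 p.2) p
      = -(1/2) * (‖Q₁ (φ p.1 p.2) (-p.2)‖ ^ 2
          + ‖Q₂ (φ p.1 p.2) (-p.2)‖ ^ 2) := by
    rintro ⟨a, b⟩
    have efun : (fun t => (fun p : ℝ × ℝ => φ p.1 p.2) (a, t))
        = fun t => a - 2 * Pb (fun p : ℝ × ℝ => f p.1 p.2) (a, t) / f a t :=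
      funext fun t => hΦdef (a, t)
    have hd : HasDerivAt
        (fun t => a - 2 * Pb (fun p : ℝ × ℝ => f p.1 p.2) (a, t) / f a t)
        (0 - (2 * Pb (Pb (fun p : ℝ × ℝ => f p.1 p.2)) (a, b) * f a b
          - 2 * Pb (fun p : ℝ × ℝ => f p.1 p.2) (a, b)
            * Pb (fun p : ℝ × ℝ => f p.1 p.2) (a, b)) / f a b ^ 2) b :=
      (hasDerivAt_const b a).sub
        (((hasDerivAt_sliceB (hPbFd (a, b))).const_mul 2).div
          (hasDerivAt_sliceB (hFd (a, b))) (hFne (a, b)))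
    have h1 : Pb (fun p : ℝ × ℝ => φ p.1 p.2) (a, b)
        = 0 - (2 * Pb (Pb (fun p : ℝ × ℝ => f p.1 p.2)) (a, b) * f a b
          - 2 * Pb (fun p : ℝ × ℝ => f p.1 p.2) (a, b)
            * Pb (fun p : ℝ × ℝ => f p.1 p.2) (a, b)) / f a b ^ 2 := by
      rw [← (hasDerivAt_sliceB (hΦd (a, b))).deriv, efun]
      exact hd.deriv
    have hb2 := hbil2 a b
    have c1 : pd2R f a b = Pb (fun p : ℝ × ℝ => f p.1 p.2) (a, b) :=
      pd2R_curry _ (hFd (a, b))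
    have c2 : pd2R (pd2R f) a b = Pb (Pb (fun p : ℝ × ℝ => f p.1 p.2)) (a, b) := by
      have e : pd2R f = fun a b => Pb (fun p : ℝ × ℝ => f p.1 p.2) (a, b) :=
        funext fun a => funext fun b => pd2R_curry _ (hFd (a, b))
      rw [e]
      exact pd2R_curry _ (hPbFd (a, b))
    rw [c1, c2] at hb2
    have hq1 : Q₁ (φ a b) (-b) = g₁ a b / (f a b : ℂ) := (hrel₁ a b).symm
    have hq2 : Q₂ (φ a b) (-b) = g₂ a b / (f a b : ℂ) := (hrel₂ a b).symm
    have habs1 : ‖g₁ a b / (f a b : ℂ)‖ ^ 2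
        = ‖g₁ a b‖ ^ 2 / (f a b) ^ 2 := by
      rw [norm_div, div_pow, Complex.norm_real, Real.norm_eq_abs, abs_of_pos (hfpos a b)]
    have habs2 : ‖g₂ a b / (f a b : ℂ)‖ ^ 2
        = ‖g₂ a b‖ ^ 2 / (f a b) ^ 2 := by
      rw [norm_div, div_pow, Complex.norm_real, Real.norm_eq_abs, abs_of_pos (hfpos a b)]
    rw [h1, hq1, hq2, habs1, habs2]
    have hfne : f a b ≠ 0 := (hfpos a b).ne'
    linear_combination (-1 / (f a b : ℝ) ^ 2) * hb2
  -- the nonvanishing hypothesis in P form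
  have hρ' : 1 - 2 * ((Pa (Pb (fun p : ℝ × ℝ => f p.1 p.2)) (y, s)
        * f y s - Pb (fun p : ℝ × ℝ => f p.1 p.2) (y, s)
          * Pa (fun p : ℝ × ℝ => f p.1 p.2) (y, s)) / f y s ^ 2) ≠ 0 := by
    have hlog1 : ∀ a, pd2R (fun y' s' => Real.log (f y' s')) a s
        = Pb (fun p : ℝ × ℝ => f p.1 p.2) (a, s) / f a s :=
      fun a => ((hasDerivAt_sliceB (hFd (a, s))).log (hFne (a, s))).deriv
    have e : (fun a => pd2R (fun y' s' => Real.log (f y' s')) a s)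
        = fun a => Pb (fun p : ℝ × ℝ => f p.1 p.2) (a, s) / f a s := funext hlog1
    have h2 : pd1R (pd2R (fun y' s' => Real.log (f y' s'))) y s
        = (Pa (Pb (fun p : ℝ × ℝ => f p.1 p.2)) (y, s) * f y s
            - Pb (fun p : ℝ × ℝ => f p.1 p.2) (y, s)
              * Pa (fun p : ℝ × ℝ => f p.1 p.2) (y, s)) / f y s ^ 2 := by
      show deriv (fun a => pd2R (fun y' s' => Real.log (f y' s')) a s) y = _
      rw [e]
      exact ((hasDerivAt_sliceA (hPbFd (y, s))).div
        (hasDerivAt_sliceA (hFd (y, s))) (hFne (y, s))).deriv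
    rw [h2] at hρ
    exact hρ
  -- the bilinear identity in P form
  have hbilP : ∀ (g : ℝ → ℝ → ℂ), ContDiff ℝ 2 (fun p : ℝ × ℝ => g p.1 p.2) →
      (∀ a b, pd1C (pd2C (fun y' s' => (f y' s' : ℂ))) a b * g a b
        - pd2C (fun y' s' => (f y' s' : ℂ)) a b * pd1C g a b
        - pd1C (fun y' s' => (f y' s' : ℂ)) a b * pd2C g a b
        + (f a b : ℂ) * pd1C (pd2C g) a b = (f a b : ℂ) * g a b) →
      ∀ p : ℝ × ℝ, Complex.ofReal (Pa (Pb (fun p : ℝ × ℝ => f p.1 p.2)) p) * g p.1 p.2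
        - Complex.ofReal (Pb (fun p : ℝ × ℝ => f p.1 p.2) p)
            * Pa (fun q : ℝ × ℝ => g q.1 q.2) p
        - Complex.ofReal (Pa (fun p : ℝ × ℝ => f p.1 p.2) p)
            * Pb (fun q : ℝ × ℝ => g q.1 q.2) p
        + Complex.ofReal (f p.1 p.2) * Pa (Pb (fun q : ℝ × ℝ => g q.1 q.2)) p
      = Complex.ofReal (f p.1 p.2) * g p.1 p.2 := by
    rintro g hg hb ⟨a, b⟩
    have hGd : Differentiable ℝ (fun q : ℝ × ℝ => g q.1 q.2) :=
      hg.differentiable two_ne_zero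
    have hPbGd : Differentiable ℝ (Pb (fun q : ℝ × ℝ => g q.1 q.2)) :=
      (contDiff_Pb hg (by norm_num)).differentiable one_ne_zero
    have h0 := hb a b
    have c1 : ∀ a b : ℝ, pd2C (fun y' s' => (f y' s' : ℂ)) a b
        = Complex.ofReal (Pb (fun p : ℝ × ℝ => f p.1 p.2) (a, b)) :=
      fun a b => ((hasDerivAt_sliceB (hFd (a, b))).ofReal_comp).deriv
    have c2 : pd1C (pd2C (fun y' s' => (f y' s' : ℂ))) a b
        = Complex.ofReal (Pa (Pb (fun p : ℝ × ℝ => f p.1 p.2)) (a, b)) := by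
      have e : pd2C (fun y' s' => (f y' s' : ℂ))
          = fun a b => Complex.ofReal (Pb (fun p : ℝ × ℝ => f p.1 p.2) (a, b)) :=
        funext fun a => funext fun b => c1 a b
      show deriv (fun t => pd2C (fun y' s' => (f y' s' : ℂ)) t b) a = _
      rw [e]
      exact ((hasDerivAt_sliceA (hPbFd (a, b))).ofReal_comp).deriv
    have c3 : pd1C (fun y' s' => (f y' s' : ℂ)) a b
        = Complex.ofReal (Pa (fun p : ℝ × ℝ => f p.1 p.2) (a, b)) :=
      ((hasDerivAt_sliceA (hFd (a, b))).ofReal_comp).deriv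
    have c4 : pd1C g a b = Pa (fun q : ℝ × ℝ => g q.1 q.2) (a, b) :=
      pd1C_curry _ (hGd (a, b))
    have c5 : ∀ a b : ℝ, pd2C g a b = Pb (fun q : ℝ × ℝ => g q.1 q.2) (a, b) :=
      fun a b => pd2C_curry _ (hGd (a, b))
    have c6 : pd1C (pd2C g) a b = Pa (Pb (fun q : ℝ × ℝ => g q.1 q.2)) (a, b) := by
      have e : pd2C g = fun a b => Pb (fun q : ℝ × ℝ => g q.1 q.2) (a, b) :=
        funext fun a => funext fun b => c5 a b
      show deriv (fun t => pd2C g t b) a = _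
      rw [e]
      exact pd1C_curry _ (hPbGd (a, b))
    rw [c2, c1 a b, c3, c4, c5 a b, c6] at h0
    exact h0
  rcases hQmem with rfl | rfl
  · -- Q = Q
    have hcore := ccsp_core (fun p : ℝ × ℝ => f p.1 p.2) (fun p : ℝ × ℝ => g₁ p.1 p.2)
      (fun p : ℝ × ℝ => Q p.1 p.2) (fun p : ℝ × ℝ => φ p.1 p.2)
      (fun w : ℝ × ℝ => ‖Q w.1 w.2‖ ^ 2 + ‖Q₂ w.1 w.2‖ ^ 2)
      hf hFne hg₁ hQ₁ hRQ hΦdef (hbilP g₁ hg₁ (hbil1 g₁ (Or.inl rfl))) hPbΦR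
      (fun p => hrel₁ p.1 p.2) (y, s) hρ'
    have hUQd : Differentiable ℝ (fun p : ℝ × ℝ => Q p.1 p.2) :=
      hQ₁.differentiable two_ne_zero
    have hPaUQd : Differentiable ℝ (Pa (fun p : ℝ × ℝ => Q p.1 p.2)) :=
      (contDiff_Pa hQ₁ (by norm_num)).differentiable one_ne_zero
    have e1 : pd1C Q = fun a b => Pa (fun p : ℝ × ℝ => Q p.1 p.2) (a, b) :=
      funext fun a => funext fun b => pd1C_curry _ (hUQd (a, b))
    rw [e1]
    have e2 : pd2C (fun a b => Pa (fun p : ℝ × ℝ => Q p.1 p.2) (a, b)) (φ y s) (-s)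
        = Pb (Pa (fun p : ℝ × ℝ => Q p.1 p.2)) (φ y s, -s) :=
      pd2C_curry _ (hPaUQd (φ y s, -s))
    rw [e2]
    have e3 : (fun x t => (((‖Q x t‖ : ℝ) : ℂ) ^ 2 + ((‖Q₂ x t‖ : ℝ) : ℂ) ^ 2)
          * (fun a b => Pa (fun p : ℝ × ℝ => Q p.1 p.2) (a, b)) x t)
        = fun x t => Complex.ofReal
            ((fun w : ℝ × ℝ => ‖Q w.1 w.2‖ ^ 2 + ‖Q₂ w.1 w.2‖ ^ 2) (x, t))
          * Pa (fun p : ℝ × ℝ => Q p.1 p.2) (x, t) := by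
      funext x t
      push_cast
      ring
    rw [e3]
    have e4 : pd1C (fun x t => Complex.ofReal
            ((fun w : ℝ × ℝ => ‖Q w.1 w.2‖ ^ 2 + ‖Q₂ w.1 w.2‖ ^ 2) (x, t))
          * Pa (fun p : ℝ × ℝ => Q p.1 p.2) (x, t)) (φ y s) (-s)
        = Complex.ofReal (Pa (fun w : ℝ × ℝ =>
              ‖Q w.1 w.2‖ ^ 2 + ‖Q₂ w.1 w.2‖ ^ 2) (φ y s, -s))
            * Pa (fun p : ℝ × ℝ => Q p.1 p.2) (φ y s, -s)
          + Complex.ofReal ((fun w : ℝ × ℝ =>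
              ‖Q w.1 w.2‖ ^ 2 + ‖Q₂ w.1 w.2‖ ^ 2) (φ y s, -s))
            * Pa (Pa (fun p : ℝ × ℝ => Q p.1 p.2)) (φ y s, -s) :=
      (((hasDerivAt_sliceA (hRQd (φ y s, -s))).ofReal_comp).mul
        (hasDerivAt_sliceA (hPaUQd (φ y s, -s)))).deriv
    rw [e4]
    exact hcore
  · -- Q = Q
    have hcore := ccsp_core (fun p : ℝ × ℝ => f p.1 p.2) (fun p : ℝ × ℝ => g₂ p.1 p.2)
      (fun p : ℝ × ℝ => Q p.1 p.2) (fun p : ℝ × ℝ => φ p.1 p.2)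
      (fun w : ℝ × ℝ => ‖Q₁ w.1 w.2‖ ^ 2 + ‖Q w.1 w.2‖ ^ 2)
      hf hFne hg₂ hQ₂ hRQ hΦdef (hbilP g₂ hg₂ (hbil1 g₂ (Or.inr rfl))) hPbΦR
      (fun p => hrel₂ p.1 p.2) (y, s) hρ'
    have hUQd : Differentiable ℝ (fun p : ℝ × ℝ => Q p.1 p.2) :=
      hQ₂.differentiable two_ne_zero
    have hPaUQd : Differentiable ℝ (Pa (fun p : ℝ × ℝ => Q p.1 p.2)) :=
      (contDiff_Pa hQ₂ (by norm_num)).differentiable one_ne_zero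
    have e1 : pd1C Q = fun a b => Pa (fun p : ℝ × ℝ => Q p.1 p.2) (a, b) :=
      funext fun a => funext fun b => pd1C_curry _ (hUQd (a, b))
    rw [e1]
    have e2 : pd2C (fun a b => Pa (fun p : ℝ × ℝ => Q p.1 p.2) (a, b)) (φ y s) (-s)
        = Pb (Pa (fun p : ℝ × ℝ => Q p.1 p.2)) (φ y s, -s) :=
      pd2C_curry _ (hPaUQd (φ y s, -s))
    rw [e2]
    have e3 : (fun x t => (((‖Q₁ x t‖ : ℝ) : ℂ) ^ 2 + ((‖Q x t‖ : ℝ) : ℂ) ^ 2)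
          * (fun a b => Pa (fun p : ℝ × ℝ => Q p.1 p.2) (a, b)) x t)
        = fun x t => Complex.ofReal
            ((fun w : ℝ × ℝ => ‖Q₁ w.1 w.2‖ ^ 2 + ‖Q w.1 w.2‖ ^ 2) (x, t))
          * Pa (fun p : ℝ × ℝ => Q p.1 p.2) (x, t) := by
      funext x t
      push_cast
      ring
    rw [e3]
    have e4 : pd1C (fun x t => Complex.ofReal
            ((fun w : ℝ × ℝ => ‖Q₁ w.1 w.2‖ ^ 2 + ‖Q w.1 w.2‖ ^ 2) (x, t))
          * Pa (fun p : ℝ × ℝ => Q p.1 p.2) (x, t)) (φ y s) (-s)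
        = Complex.ofReal (Pa (fun w : ℝ × ℝ =>
              ‖Q₁ w.1 w.2‖ ^ 2 + ‖Q w.1 w.2‖ ^ 2) (φ y s, -s))
            * Pa (fun p : ℝ × ℝ => Q p.1 p.2) (φ y s, -s)
          + Complex.ofReal ((fun w : ℝ × ℝ =>
              ‖Q₁ w.1 w.2‖ ^ 2 + ‖Q w.1 w.2‖ ^ 2) (φ y s, -s))
            * Pa (Pa (fun p : ℝ × ℝ => Q p.1 p.2)) (φ y s, -s) :=
      (((hasDerivAt_sliceA (hRQd (φ y s, -s))).ofReal_comp).mul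
        (hasDerivAt_sliceA (hPaUQd (φ y s, -s)))).deriv
    rw [e4]
    exact hcore
end

section
/- Let p₁, α₁ ∈ ℂ with p₁ ≠ 0 and Re(p₁) ≠ 0. Define η₁(y,s) = p₁ y + s/p₁ and the functions f(y,s) = −1 − (|α₁|² |p₁|⁴ / (4 (p₁ + conj(p₁))²)) e^{η₁ + conj(η₁)} and g(y,s) = −α₁ e^{η₁}. Then f is real-valued and for all (y,s) ∈ ℝ²: f_{sy} g − f_s g_y − f_y g_s + f g_{sy} = f·g and f f_{ss} − f_s² = (1/4)|g|². -/
open Complex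

/-- Partial derivative in the first variable (`y`) of a complex-valued function. -/
noncomputable def pdyC (F : ℝ → ℝ → ℂ) (y s : ℝ) : ℂ := deriv (fun y' => F y' s) y

/-- Partial derivative in the second variable (`s`) of a complex-valued function. -/
noncomputable def pdsC (F : ℝ → ℝ → ℂ) (y s : ℝ) : ℂ := deriv (fun s' => F y s') s

private lemma hasDerivAt_cexp_affine (c d : ℂ) (t : ℝ) :
    HasDerivAt (fun t' : ℝ => Complex.exp (c * t' + d)) (c * Complex.exp (c * t + d)) t := by
  have h : HasDerivAt (fun t' : ℝ => (c * t' + d : ℂ)) c t := by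
    simpa using ((Complex.ofRealCLM.hasDerivAt (x := t)).const_mul c).add_const d
  simpa [mul_comm] using h.cexp

private lemma deriv_const_mul_cexp_affine (A c d : ℂ) (t : ℝ) :
    deriv (fun t' : ℝ => A * Complex.exp (c * t' + d)) t
      = A * c * Complex.exp (c * t + d) := by
  have := ((hasDerivAt_cexp_affine c d t).const_mul A).deriv
  rw [this]; ring

private lemma deriv_const_sub_mul_cexp_affine (B A c d : ℂ) (t : ℝ) :
    deriv (fun t' : ℝ => B - A * Complex.exp (c * t' + d)) t
      = -(A * c) * Complex.exp (c * t + d) := by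
  have := (((hasDerivAt_cexp_affine c d t).const_mul A).const_sub B).deriv
  rw [this]; ring

/-- The one-soliton tau functions of the complex short pulse equation: `f` is
real-valued and `(f, g)` solve the CSP bilinear system. -/
theorem csp_one_soliton_tau
    (p₁ α₁ : ℂ) (hp₁ : p₁ ≠ 0) (hre : p₁.re ≠ 0)
    (η₁ : ℝ → ℝ → ℂ) (hη₁ : ∀ y s, η₁ y s = p₁ * (y : ℂ) + (s : ℂ) / p₁)
    (f g : ℝ → ℝ → ℂ)
    (hf : ∀ y s, f y s = -1 -
      ((‖α₁‖ : ℂ)^2 * (‖p₁‖ : ℂ)^4 / (4 * (p₁ + starRingEnd ℂ p₁)^2))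
        * Complex.exp (η₁ y s + starRingEnd ℂ (η₁ y s)))
    (hg : ∀ y s, g y s = -α₁ * Complex.exp (η₁ y s)) :
    (∀ y s, (f y s).im = 0) ∧
    (∀ y s,
      (pdyC (pdsC f) y s * g y s - pdsC f y s * pdyC g y s
          - pdyC f y s * pdsC g y s + f y s * pdyC (pdsC g) y s
        = f y s * g y s)
      ∧ (f y s * pdsC (pdsC f) y s - (pdsC f y s)^2
        = (1/4) * (‖g y s‖ : ℂ)^2)) := by
  set P : ℂ := starRingEnd ℂ p₁ with hPdef
  have hP : P ≠ 0 := by rw [hPdef]; exact (map_ne_zero (starRingEnd ℂ)).mpr hp₁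
  set u : ℂ := p₁ + P with hu_def
  set v : ℂ := p₁⁻¹ + P⁻¹ with hv_def
  set C : ℂ := (‖α₁‖ : ℂ)^2 * (‖p₁‖ : ℂ)^4 / (4 * u^2) with hC_def
  have hadd : u = ((2 * p₁.re : ℝ) : ℂ) := by
    rw [hu_def, hPdef, Complex.add_conj]
  have hu : u ≠ 0 := by
    rw [hadd]
    exact Complex.ofReal_ne_zero.mpr (mul_ne_zero two_ne_zero hre)
  have hconj : ∀ y s : ℝ, starRingEnd ℂ (η₁ y s) = P * (y : ℂ) + (s : ℂ) / P := by
    intro y s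
    rw [hη₁]
    simp [map_add, map_mul, map_div₀, Complex.conj_ofReal, hPdef]
  have hsum : ∀ y s : ℝ, η₁ y s + starRingEnd ℂ (η₁ y s) = u * (y : ℂ) + v * (s : ℂ) := by
    intro y s
    rw [hconj, hη₁, hu_def, hv_def]
    field_simp
    ring
  have hfE : ∀ y s : ℝ, f y s = -1 - C * Complex.exp (u * (y : ℂ) + v * (s : ℂ)) := by
    intro y s; rw [hf, hsum]
  -- derivatives of f
  have hfy : ∀ y s : ℝ, pdyC f y s = -(C * u) * Complex.exp (u * (y : ℂ) + v * (s : ℂ)) := by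
    intro y s
    unfold pdyC
    have h1 : (fun y' : ℝ => f y' s)
        = fun y' : ℝ => (-1 : ℂ) - C * Complex.exp (u * (y' : ℂ) + v * (s : ℂ)) :=
      funext fun y' => hfE y' s
    rw [h1, deriv_const_sub_mul_cexp_affine]
  have hfs : ∀ y s : ℝ, pdsC f y s = -(C * v) * Complex.exp (u * (y : ℂ) + v * (s : ℂ)) := by
    intro y s
    unfold pdsC
    have h1 : (fun s' : ℝ => f y s')
        = fun s' : ℝ => (-1 : ℂ) - C * Complex.exp (v * (s' : ℂ) + u * (y : ℂ)) := by
      funext s'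
      rw [hfE, add_comm (u * (y : ℂ)) (v * (s' : ℂ))]
    rw [h1, deriv_const_sub_mul_cexp_affine, add_comm (v * (s : ℂ)) (u * (y : ℂ))]
  have hfsy : ∀ y s : ℝ,
      pdyC (pdsC f) y s = -(C * v) * u * Complex.exp (u * (y : ℂ) + v * (s : ℂ)) := by
    intro y s
    unfold pdyC
    have h1 : (fun y' : ℝ => pdsC f y' s)
        = fun y' : ℝ => -(C * v) * Complex.exp (u * (y' : ℂ) + v * (s : ℂ)) :=
      funext fun y' => hfs y' s
    rw [h1, deriv_const_mul_cexp_affine]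
  have hfss : ∀ y s : ℝ,
      pdsC (pdsC f) y s = -(C * v) * v * Complex.exp (u * (y : ℂ) + v * (s : ℂ)) := by
    intro y s
    show deriv (fun s' : ℝ => pdsC f y s') s = _
    have h1 : (fun s' : ℝ => pdsC f y s')
        = fun s' : ℝ => -(C * v) * Complex.exp (v * (s' : ℂ) + u * (y : ℂ)) := by
      funext s'
      rw [hfs, add_comm (u * (y : ℂ)) (v * (s' : ℂ))]
    rw [h1, deriv_const_mul_cexp_affine, add_comm (v * (s : ℂ)) (u * (y : ℂ))]
  -- derivatives of g
  have hgE : ∀ y s : ℝ, g y s = -α₁ * Complex.exp (p₁ * (y : ℂ) + p₁⁻¹ * (s : ℂ)) := by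
    intro y s
    rw [hg, hη₁, div_eq_mul_inv, mul_comm ((s : ℂ)) p₁⁻¹]
  have hgy : ∀ y s : ℝ, pdyC g y s
      = -α₁ * p₁ * Complex.exp (p₁ * (y : ℂ) + p₁⁻¹ * (s : ℂ)) := by
    intro y s
    unfold pdyC
    have h1 : (fun y' : ℝ => g y' s)
        = fun y' : ℝ => -α₁ * Complex.exp (p₁ * (y' : ℂ) + p₁⁻¹ * (s : ℂ)) :=
      funext fun y' => hgE y' s
    rw [h1, deriv_const_mul_cexp_affine]
  have hgs : ∀ y s : ℝ, pdsC g y s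
      = -α₁ * p₁⁻¹ * Complex.exp (p₁ * (y : ℂ) + p₁⁻¹ * (s : ℂ)) := by
    intro y s
    unfold pdsC
    have h1 : (fun s' : ℝ => g y s')
        = fun s' : ℝ => -α₁ * Complex.exp (p₁⁻¹ * (s' : ℂ) + p₁ * (y : ℂ)) := by
      funext s'
      rw [hgE, add_comm (p₁ * (y : ℂ)) (p₁⁻¹ * (s' : ℂ))]
    rw [h1, deriv_const_mul_cexp_affine, add_comm (p₁⁻¹ * (s : ℂ)) (p₁ * (y : ℂ))]
  have hgsy : ∀ y s : ℝ, pdyC (pdsC g) y s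
      = -α₁ * p₁⁻¹ * p₁ * Complex.exp (p₁ * (y : ℂ) + p₁⁻¹ * (s : ℂ)) := by
    intro y s
    unfold pdyC
    have h1 : (fun y' : ℝ => pdsC g y' s)
        = fun y' : ℝ => -α₁ * p₁⁻¹ * Complex.exp (p₁ * (y' : ℂ) + p₁⁻¹ * (s : ℂ)) :=
      funext fun y' => hgs y' s
    rw [h1, deriv_const_mul_cexp_affine]
  -- |abs p₁|² = p₁ * conj p₁
  have hB : (‖p₁‖ : ℂ)^2 = p₁ * P := by
    rw [hPdef, Complex.mul_conj, ← Complex.ofReal_pow, Complex.sq_norm]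
  -- realness constants
  have hCreal : C = ((‖α₁‖ ^ 2 * ‖p₁‖ ^ 4 / (4 * (2 * p₁.re)^2) : ℝ) : ℂ) := by
    rw [hC_def, hadd]; push_cast; ring
  have hXreal : ∀ y s : ℝ, Complex.exp (u * (y : ℂ) + v * (s : ℂ))
      = ((Real.exp (2 * (η₁ y s).re) : ℝ) : ℂ) := by
    intro y s
    rw [← hsum y s, Complex.add_conj, Complex.ofReal_exp]
  refine ⟨?_, ?_⟩
  · intro y s
    have : f y s = ((-1 - ‖α₁‖ ^ 2 * ‖p₁‖ ^ 4 / (4 * (2 * p₁.re)^2)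
        * Real.exp (2 * (η₁ y s).re) : ℝ) : ℂ) := by
      rw [hfE, hCreal, hXreal]
      push_cast
      ring
    rw [this, Complex.ofReal_im]
  · intro y s
    constructor
    · rw [hfsy, hfs, hfy, hgsy, hgy, hgs, hgE, hfE]
      set X : ℂ := Complex.exp (u * (y : ℂ) + v * (s : ℂ)) with hX
      set Y : ℂ := Complex.exp (p₁ * (y : ℂ) + p₁⁻¹ * (s : ℂ)) with hY
      rw [hu_def, hv_def]
      field_simp
      ring
    · rw [hfss, hfs, hfE]
      have habs : (‖g y s‖ : ℂ)^2
          = (‖α₁‖ : ℂ)^2 * Complex.exp (u * (y : ℂ) + v * (s : ℂ)) := by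
        have h1 : ‖g y s‖ = ‖α₁‖ * Real.exp (η₁ y s).re := by
          rw [hg]; simp [map_mul, Complex.norm_exp]
        rw [h1, hXreal y s]
        push_cast [Real.exp_add, two_mul]
        ring
      rw [habs]
      set X : ℂ := Complex.exp (u * (y : ℂ) + v * (s : ℂ)) with hX
      have hC2 : C = (‖α₁‖ : ℂ)^2 * (p₁ * P)^2 / (4 * u^2) := by
        rw [hC_def, ← hB]; ring
      have hvu : v = u / (p₁ * P) := by
        rw [hv_def, hu_def]; field_simp; ring
      have key : C * v^2 = (‖α₁‖ : ℂ)^2 / 4 := by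
        rw [hC2, hvu]
        field_simp
      calc (-1 - C * X) * (-(C * v) * v * X) - (-(C * v) * X)^2
          = (C * v^2) * X := by ring
        _ = 1/4 * ((‖α₁‖ : ℂ)^2 * X) := by rw [key]; ring
end

section
/- Let p₁ = p_{1R} + i p_{1I} ∈ ℂ with p_{1R} > 0 and let α₁ ∈ ℂ, α₁ ≠ 0. With η₁(y,s) = p₁ y + s/p₁, f(y,s) = −1 − (|α₁|² |p₁|⁴ / (4 (p₁ + conj(p₁))²)) e^{η₁ + conj(η₁)} and g(y,s) = −α₁ e^{η₁}, define η_{1R}(y,s) = p_{1R}(y + s/|p₁|²), η_{1I}(y,s) = p_{1I}(y − s/|p₁|²), and η_{10} = log(|α₁| |p₁|² / (4 p_{1R})). Then for all (y,s) ∈ ℝ²: g(y,s)/f(y,s) = (α₁/|α₁|) · (2 p_{1R}/|p₁|²) · e^{i η_{1I}(y,s)} · sech(η_{1R}(y,s) + η_{10}). -/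
open Complex

/-- `sech u = 2/(e^u + e^{−u})`. -/
noncomputable def sech (u : ℝ) : ℝ := 2 / (Real.exp u + Real.exp (-u))

/-- Parametric form of the one-soliton solution of the complex short pulse equation:
`g/f = (α₁/|α₁|) (2 p_{1R}/|p₁|²) e^{i η_{1I}} sech(η_{1R} + η_{10})`. -/
theorem csp_one_soliton_profile
    (p1R p1I : ℝ) (hp : 0 < p1R) (α₁ : ℂ) (hα : α₁ ≠ 0)
    (p₁ : ℂ) (hp₁ : p₁ = ⟨p1R, p1I⟩)
    (η₁ : ℝ → ℝ → ℂ) (hη₁ : ∀ y s, η₁ y s = p₁ * (y : ℂ) + (s : ℂ) / p₁)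
    (f g : ℝ → ℝ → ℂ)
    (hf : ∀ y s, f y s = -1 -
      ((‖α₁‖ : ℂ)^2 * (‖p₁‖ : ℂ)^4 / (4 * (p₁ + starRingEnd ℂ p₁)^2))
        * Complex.exp (η₁ y s + starRingEnd ℂ (η₁ y s)))
    (hg : ∀ y s, g y s = -α₁ * Complex.exp (η₁ y s))
    (η1R η1I : ℝ → ℝ → ℝ)
    (hη1R : ∀ y s, η1R y s = p1R * (y + s / (p1R^2 + p1I^2)))
    (hη1I : ∀ y s, η1I y s = p1I * (y - s / (p1R^2 + p1I^2)))
    (η10 : ℝ)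
    (hη10 : η10 = Real.log (‖α₁‖ * (p1R^2 + p1I^2) / (4 * p1R))) :
    ∀ y s, g y s / f y s
      = (α₁ / (‖α₁‖ : ℂ)) * ((2 * p1R / (p1R^2 + p1I^2) : ℝ) : ℂ)
          * Complex.exp (Complex.I * (η1I y s : ℂ))
          * ((sech (η1R y s + η10) : ℝ) : ℂ) := by
  intro y s
  have hP : (0:ℝ) < p1R^2 + p1I^2 := by positivity
  have hA : (0:ℝ) < ‖α₁‖ := by
    simpa using (norm_pos_iff.mpr hα)
  set a := η1R y s with ha
  set b := η1I y s with hb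
  set A := ‖α₁‖ with hAdef
  set P := p1R^2 + p1I^2 with hPdef
  set K : ℝ := A * P / (4 * p1R) with hK
  have hKpos : 0 < K := by rw [hK]; positivity
  have hp₁ne : p₁ ≠ 0 := by
    rw [hp₁]; intro h
    have := congrArg Complex.re h
    simp at this; linarith
  have habsp : (‖p₁‖)^2 = P := by
    rw [hp₁, Complex.sq_norm, Complex.normSq_mk, hPdef]; ring
  have hη : η₁ y s = (a : ℂ) + (b : ℂ) * I := by
    rw [hη₁, hp₁]
    apply Complex.ext
    · simp only [Complex.add_re, Complex.mul_re, Complex.div_re, Complex.normSq_mk,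
        Complex.ofReal_re, Complex.ofReal_im, Complex.add_im, Complex.mul_im,
        Complex.I_re, Complex.I_im, ha, hη1R]
      have h0 : (p1R^2 + p1I^2 : ℝ) ≠ 0 := by positivity
      have h1 : (p1R^2 + p1I^2) * (p1R^2 + p1I^2 : ℝ)⁻¹ = 1 := mul_inv_cancel₀ h0
      field_simp
      ring
    · simp only [Complex.add_im, Complex.mul_im, Complex.div_im, Complex.normSq_mk,
        Complex.ofReal_re, Complex.ofReal_im, Complex.add_re, Complex.mul_re,
        Complex.I_re, Complex.I_im, hb, hη1I]
      have h0 : (p1I^2 + p1R^2 : ℝ) ≠ 0 := by positivity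
      have h1 : (p1I^2 + p1R^2) * (p1I^2 + p1R^2 : ℝ)⁻¹ = 1 := mul_inv_cancel₀ h0
      field_simp
      ring
  have hE : (0:ℝ) < Real.exp a := Real.exp_pos a
  set E := Real.exp a with hEdef
  have hfval : f y s = -(((1 + K^2 * E^2 : ℝ)) : ℂ) := by
    rw [hf, hη]
    have hconj : starRingEnd ℂ ((a:ℂ) + (b:ℂ)*I) = (a:ℂ) - (b:ℂ)*I := by
      simp [map_add, map_mul, Complex.conj_I, Complex.conj_ofReal]
      ring
    rw [hconj]
    have hsum : (a:ℂ) + (b:ℂ)*I + ((a:ℂ) - (b:ℂ)*I) = ((2*a:ℝ):ℂ) := by push_cast; ring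
    rw [hsum, ← Complex.ofReal_exp]
    have hE2 : Real.exp (2*a) = E^2 := by rw [two_mul, Real.exp_add, sq]
    rw [hE2]
    have hpp : p₁ + starRingEnd ℂ p₁ = ((2*p1R:ℝ):ℂ) := by
      rw [hp₁]
      apply Complex.ext
      · simp; ring
      · simp
    rw [hpp]
    have h4 : ((‖p₁‖ : ℝ):ℂ)^4 = ((P:ℝ):ℂ)^2 := by
      have : (‖p₁‖)^4 = P^2 := by
        rw [show (4:ℕ) = 2*2 from rfl, pow_mul, habsp]
      exact_mod_cast this
    rw [h4, hK]
    push_cast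
    have hpR : (p1R:ℂ) ≠ 0 := by exact_mod_cast hp.ne'
    field_simp
    ring
  have hgval : g y s = -α₁ * ((E:ℂ) * Complex.exp ((b:ℂ)*I)) := by
    rw [hg, hη, Complex.exp_add, ← Complex.ofReal_exp, hEdef]
  have hsech : sech (a + η10) = 2*E*K/(E^2*K^2+1) := by
    unfold sech
    rw [hη10]
    rw [Real.exp_add, Real.exp_log hKpos, neg_add, Real.exp_add,
      Real.exp_neg, Real.exp_neg, Real.exp_log hKpos, ← hEdef]
    rw [div_eq_div_iff (by positivity) (by positivity)]
    field_simp
  rw [hgval, hfval, hsech]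
  have hb' : Complex.exp (I * (b:ℂ)) = Complex.exp ((b:ℂ)*I) := by rw [mul_comm]
  rw [hb']
  have hden1 : ((1 + K^2*E^2 : ℝ):ℂ) ≠ 0 := by
    exact_mod_cast (by positivity : (1 + K^2*E^2 : ℝ) ≠ 0)
  have hden2 : (E^2*K^2+1 : ℝ) ≠ 0 := by positivity
  have hAne : (A:ℂ) ≠ 0 := by exact_mod_cast hA.ne'
  have hPne : (P:ℂ) ≠ 0 := by exact_mod_cast hP.ne'
  have hpRne : (p1R:ℂ) ≠ 0 := by exact_mod_cast hp.ne'
  have hAP : (4:ℝ)*p1R*K = A*P := by rw [hK]; field_simp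
  have hAPc : (4:ℂ)*(p1R:ℂ)*(K:ℂ) = (A:ℂ)*(P:ℂ) := by exact_mod_cast hAP
  have hden1' : (1:ℂ) + (K:ℂ)^2*(E:ℂ)^2 ≠ 0 := by
    exact_mod_cast (by positivity : (1 + K^2*E^2 : ℝ) ≠ 0)
  have hden2' : (E:ℂ)^2*(K:ℂ)^2 + 1 ≠ 0 := by
    exact_mod_cast (by positivity : (E^2*K^2 + 1 : ℝ) ≠ 0)
  have hden3 : (-1 - (E:ℂ)^2*(K:ℂ)^2) ≠ 0 := by
    have h' : ((E^2*K^2+1 : ℝ):ℂ) ≠ 0 := by exact_mod_cast hden2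
    intro h; apply h'; push_cast; linear_combination -h
  have hX : (-1 - (E:ℂ)^2*(K:ℂ)^2) * (-1 - (E:ℂ)^2*(K:ℂ)^2)⁻¹ = 1 := mul_inv_cancel₀ hden3
  push_cast
  field_simp [hden3]
  have hD : (1 + (E:ℂ)^2*(K:ℂ)^2) * (1 + (E:ℂ)^2*(K:ℂ)^2)⁻¹ = 1 :=
    mul_inv_cancel₀ (by rw [add_comm]; exact hden2')
  linear_combination ((E:ℂ) * (A:ℂ) * (P:ℂ)) * hD - (E:ℂ) * hAPc
end

section
/- Let p₁ = p_{1R} + i p_{1I} ∈ ℂ with p_{1R} > 0 and let α₁ ∈ ℂ, α₁ ≠ 0. With f(y,s) = −1 − (|α₁|² |p₁|⁴ / (4 (p₁ + conj(p₁))²)) e^{η₁ + conj(η₁)}, η₁(y,s) = p₁ y + s/p₁, η_{1R}(y,s) = p_{1R}(y + s/|p₁|²), and η_{10} = log(|α₁| |p₁|² / (4 p_{1R})), the hodograph coordinate x(y,s) = y − 2 f_s(y,s)/f(y,s) satisfies, for all (y,s) ∈ ℝ²: x(y,s) = y − (2 p_{1R}/|p₁|²) (tanh(η_{1R}(y,s)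 + η_{10}) + 1). -/
open Complex

/-- The hodograph coordinate `x = y − 2 f_s/f` of the one-soliton solution of the
complex short pulse equation equals `y − (2 p_{1R}/|p₁|²)(tanh(η_{1R}+η_{10}) + 1)`. -/
theorem csp_one_soliton_hodograph
    (p1R p1I : ℝ) (hp : 0 < p1R) (α₁ : ℂ) (hα : α₁ ≠ 0)
    (p₁ : ℂ) (hp₁ : p₁ = ⟨p1R, p1I⟩)
    (η₁ : ℝ → ℝ → ℂ) (hη₁ : ∀ y s, η₁ y s = p₁ * (y : ℂ) + (s : ℂ) / p₁)
    (f : ℝ → ℝ → ℂ)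
    (hf : ∀ y s, f y s = -1 -
      ((‖α₁‖ : ℂ)^2 * (‖p₁‖ : ℂ)^4 / (4 * (p₁ + starRingEnd ℂ p₁)^2))
        * Complex.exp (η₁ y s + starRingEnd ℂ (η₁ y s)))
    (η1R : ℝ → ℝ → ℝ)
    (hη1R : ∀ y s, η1R y s = p1R * (y + s / (p1R^2 + p1I^2)))
    (η10 : ℝ)
    (hη10 : η10 = Real.log (‖α₁‖ * (p1R^2 + p1I^2) / (4 * p1R)))
    (x : ℝ → ℝ → ℂ)
    (hx : ∀ y s, x y s = (y : ℂ) - 2 * pdsC f y s / f y s) :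
    ∀ y s, x y s
      = (y : ℂ) - (((2 * p1R / (p1R^2 + p1I^2)) * (Real.tanh (η1R y s + η10) + 1) : ℝ) : ℂ) := by
  intro y s
  have hr : (0:ℝ) < p1R^2 + p1I^2 := by positivity
  have h0 : (p1R^2 + p1I^2 : ℝ) ≠ 0 := ne_of_gt hr
  have hαpos : 0 < ‖α₁‖ := by simpa using hα
  -- real part of η₁
  have hre : ∀ s' : ℝ, (η₁ y s').re = η1R y s' := by
    intro s'
    have hns : Complex.normSq ⟨p1R, p1I⟩ = p1R^2 + p1I^2 := by
      simp [Complex.normSq_mk]; ring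
    rw [hη₁, hη1R, hp₁]
    simp only [Complex.add_re, Complex.mul_re, Complex.div_re, hns,
      Complex.ofReal_re, Complex.ofReal_im]
    field_simp
    ring
  have habs2 : (‖p₁‖)^2 = p1R^2 + p1I^2 := by
    rw [hp₁, Complex.sq_norm, Complex.normSq_mk]; ring
  have hconjsum : p₁ + starRingEnd ℂ p₁ = ((2 * p1R : ℝ) : ℂ) := by
    rw [Complex.add_conj, hp₁]
  -- the coefficient equals exp (2*η10)
  have hC : ((‖α₁‖ : ℂ)^2 * (‖p₁‖ : ℂ)^4 / (4 * (p₁ + starRingEnd ℂ p₁)^2))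
      = ((Real.exp (2*η10) : ℝ) : ℂ) := by
    have hapos : 0 < ‖α₁‖ * (p1R^2 + p1I^2) / (4 * p1R) :=
      div_pos (mul_pos hαpos hr) (by linarith)
    have h1 : Real.exp (2*η10) = (‖α₁‖ * (p1R^2 + p1I^2) / (4 * p1R))^2 := by
      rw [hη10, two_mul, Real.exp_add, Real.exp_log hapos]; ring
    rw [hconjsum, h1]
    have h4 : ((‖p₁‖ : ℂ))^4 = (((‖p₁‖)^2 : ℝ) : ℂ)^2 := by
      push_cast; ring
    rw [h4, habs2]
    push_cast
    have h2 : (p1R : ℂ) ≠ 0 := by exact_mod_cast hp.ne'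
    have h2' : ((p1R:ℂ)^2 + (p1I:ℂ)^2) ≠ 0 := by exact_mod_cast Complex.ofReal_ne_zero.mpr h0
    field_simp
    ring
  -- f as a real-valued function
  have hfE : ∀ s' : ℝ, f y s' = ((-1 - Real.exp (2*(η1R y s' + η10)) : ℝ) : ℂ) := by
    intro s'
    rw [hf, hC]
    have hsum : η₁ y s' + starRingEnd ℂ (η₁ y s') = ((2 * η1R y s' : ℝ) : ℂ) := by
      rw [Complex.add_conj, hre]
    rw [hsum, ← Complex.ofReal_exp, ← Complex.ofReal_mul, ← Real.exp_add]
    have hEeq : Real.exp (2*η10 + 2 * η1R y s') = Real.exp (2*(η1R y s' + η10)) := by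
      congr 1; ring
    rw [hEeq]
    push_cast
    ring
  -- derivative of f in s
  have hlin : (fun s' : ℝ => 2*(η1R y s' + η10))
      = fun s' => (2*p1R/(p1R^2+p1I^2))*s' + (2*(p1R*y+η10)) := by
    funext s'; rw [hη1R]; field_simp; ring
  have hg : HasDerivAt (fun s' : ℝ => 2*(η1R y s' + η10)) (2*p1R/(p1R^2+p1I^2)) s := by
    rw [hlin]
    simpa using ((hasDerivAt_id s).const_mul (2*p1R/(p1R^2+p1I^2))).add_const (2*(p1R*y+η10))
  have hEd : HasDerivAt (fun s' : ℝ => Real.exp (2*(η1R y s' + η10)))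
      (Real.exp (2*(η1R y s + η10)) * (2*p1R/(p1R^2+p1I^2))) s := hg.exp
  have hFd : HasDerivAt (fun s' : ℝ => -1 - Real.exp (2*(η1R y s' + η10)))
      (-(Real.exp (2*(η1R y s + η10)) * (2*p1R/(p1R^2+p1I^2)))) s := by
    exact ((hasDerivAt_const s (-1:ℝ)).sub hEd).congr_deriv (by ring)
  have hderiv : pdsC f y s
      = ((-(Real.exp (2*(η1R y s + η10)) * (2*p1R/(p1R^2+p1I^2))) : ℝ) : ℂ) := by
    have heq : (fun s' => f y s')
        = fun s' => ((-1 - Real.exp (2*(η1R y s' + η10)) : ℝ) : ℂ) := funext hfE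
    rw [pdsC, heq]
    exact hFd.ofReal_comp.deriv
  -- final computation
  rw [hx, hderiv, hfE]
  have hreal : 2 * (-(Real.exp (2*(η1R y s + η10)) * (2*p1R/(p1R^2+p1I^2))))
        / (-1 - Real.exp (2*(η1R y s + η10)))
      = (2 * p1R / (p1R^2 + p1I^2)) * (Real.tanh (η1R y s + η10) + 1) := by
    have hEv : Real.exp (2*(η1R y s + η10))
        = Real.exp (η1R y s + η10) * Real.exp (η1R y s + η10) := by
      rw [← Real.exp_add]; congr 1; ring
    have hepos : 0 < Real.exp (η1R y s + η10) := Real.exp_pos _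
    rw [Real.tanh_eq_sinh_div_cosh, Real.sinh_eq, Real.cosh_eq, Real.exp_neg, hEv]
    have hne : (-1 : ℝ) - Real.exp (η1R y s + η10) * Real.exp (η1R y s + η10) ≠ 0 := by
      nlinarith
    have hne2 : (-1 : ℝ) - Real.exp (η1R y s + η10) ^ 2 ≠ 0 := by
      nlinarith
    field_simp
    ring
  have hcast : (2:ℂ) * ((-(Real.exp (2*(η1R y s + η10)) * (2*p1R/(p1R^2+p1I^2))) : ℝ) : ℂ)
        / ((-1 - Real.exp (2*(η1R y s + η10)) : ℝ) : ℂ)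
      = ((2 * (-(Real.exp (2*(η1R y s + η10)) * (2*p1R/(p1R^2+p1I^2))))
          / (-1 - Real.exp (2*(η1R y s + η10))) : ℝ) : ℂ) := by
    push_cast
    ring
  rw [hcast, hreal]
end

section
/- Let p₁ = p_{1R} + i p_{1I} ∈ ℂ with p_{1R} > 0, α₁ ∈ ℂ, α₁ ≠ 0, and set η_{1R}(y,s) = p_{1R}(y + s/|p₁|²), η_{10} = log(|α₁| |p₁|² / (4 p_{1R})), and x(y,s) = y − (2 p_{1R}/|p₁|²)(tanh(η_{1R}(y,s) + η_{10}) + 1). Then: (i) ∂x/∂y (y,s) = 1 − (2 p_{1R}²/|p₁|²) sech²(η_{1R}(y,s) + η_{10}) for all (y,s); (ii) for each fixed s, the infimum over y ∈ ℝ of ∂x/∂y (y,s) equals (p_{1I}² − p_{1R}²)/(p_{1R}² + p_{1I}²), and it is attained exactly where η_{1R} + η_{10} = 0; (iii) ∂x/∂y (y,s) > 0 for all (y,s) if and only if p_{1R} < |p_{1I}|. -/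
open Complex

/-- Partial derivative in the first variable (`y`) of a real-valued function. -/
noncomputable def pdyR (F : ℝ → ℝ → ℝ) (y s : ℝ) : ℝ := deriv (fun y' => F y' s) y

lemma sech_eq_one_div_cosh (u : ℝ) : sech u = 1 / Real.cosh u := by
  have h : 0 < Real.exp u + Real.exp (-u) := by positivity
  rw [sech, Real.cosh_eq]
  rw [div_eq_div_iff h.ne' (by positivity)]
  ring

lemma sech_sq (u : ℝ) : (sech u)^2 = 1 / Real.cosh u ^ 2 := by
  rw [sech_eq_one_div_cosh]; ring

lemma hasDerivAt_tanh (u : ℝ) :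
    HasDerivAt Real.tanh (1 / Real.cosh u ^ 2) u := by
  have h := (Real.hasDerivAt_sinh u).div (Real.hasDerivAt_cosh u)
    (Real.cosh_pos u).ne'
  have heq : (fun x => Real.sinh x / Real.cosh x) = Real.tanh := by
    funext x; rw [Real.tanh_eq_sinh_div_cosh]
  rw [show (Real.sinh / Real.cosh) = Real.tanh from heq] at h
  refine h.congr_deriv ?_
  have hc := (Real.cosh_pos u).ne'
  have hs := Real.cosh_sq_sub_sinh_sq u
  rw [div_left_inj' (pow_ne_zero 2 hc)]
  nlinarith [hs]

lemma cosh_eq_one_iff (u : ℝ) : Real.cosh u = 1 ↔ u = 0 := by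
  constructor
  · intro h
    rw [Real.cosh_eq] at h
    have h1 : Real.exp u + Real.exp (-u) = 2 := by linarith
    have h2 : Real.exp u * Real.exp (-u) = 1 := by
      rw [← Real.exp_add]; simp
    have h3 : Real.exp u = 1 := by nlinarith [Real.exp_pos u]
    have := congrArg Real.log h3
    rwa [Real.log_exp, Real.log_one] at this
  · intro h; simp [h]

/-- Properties of `∂x/∂y` for the hodograph coordinate of the CSP one-soliton:
(i) the explicit sech² formula; (ii) for each `s`, its infimum over `y` is
`(p_{1I}² − p_{1R}²)/(p_{1R}² + p_{1I}²)`, attained exactly where `η_{1R} + η_{10} = 0`;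
(iii) it is everywhere positive iff `p_{1R} < |p_{1I}|`. -/
theorem csp_one_soliton_xy_derivative
    (p1R p1I : ℝ) (hp : 0 < p1R) (α₁ : ℂ) (hα : α₁ ≠ 0)
    (η1R : ℝ → ℝ → ℝ)
    (hη1R : ∀ y s, η1R y s = p1R * (y + s / (p1R^2 + p1I^2)))
    (η10 : ℝ)
    (hη10 : η10 = Real.log (‖α₁‖ * (p1R^2 + p1I^2) / (4 * p1R)))
    (x : ℝ → ℝ → ℝ)
    (hx : ∀ y s, x y s = y - (2 * p1R / (p1R^2 + p1I^2)) * (Real.tanh (η1R y s + η10) + 1)) :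
    (∀ y s, pdyR x y s
        = 1 - (2 * p1R^2 / (p1R^2 + p1I^2)) * (sech (η1R y s + η10))^2)
    ∧ (∀ s,
        IsGLB (Set.range fun y => pdyR x y s) ((p1I^2 - p1R^2) / (p1R^2 + p1I^2))
        ∧ ∀ y, (pdyR x y s = (p1I^2 - p1R^2) / (p1R^2 + p1I^2) ↔ η1R y s + η10 = 0))
    ∧ ((∀ y s, 0 < pdyR x y s) ↔ p1R < |p1I|) := by
  have hD : 0 < p1R^2 + p1I^2 := by positivity
  set D := p1R^2 + p1I^2 with hDdef
  -- Part (i)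
  have hmain : ∀ y s, pdyR x y s
      = 1 - (2 * p1R^2 / D) * (sech (η1R y s + η10))^2 := by
    intro y s
    have hfun : (fun y' => x y' s)
        = fun y' => y' - (2 * p1R / D) * (Real.tanh (p1R * y' + (p1R * (s / D) + η10)) + 1) := by
      funext y'
      rw [hx, hη1R]; ring_nf
    have hiη : η1R y s + η10 = p1R * y + (p1R * (s / D) + η10) := by
      rw [hη1R]; ring
    have hd : HasDerivAt (fun y' => x y' s)
        (1 - (2 * p1R / D) * (1 / Real.cosh (p1R * y + (p1R * (s / D) + η10)) ^ 2 * p1R + 0)) y := by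
      rw [hfun]
      have h1 : HasDerivAt (fun y' : ℝ => p1R * y' + (p1R * (s / D) + η10)) p1R y := by
        simpa using ((hasDerivAt_id y).const_mul p1R).add_const (p1R * (s / D) + η10)
      have h2 := ((hasDerivAt_tanh (p1R * y + (p1R * (s / D) + η10))).comp y h1).add_const 1
      simpa [Pi.sub_def] using (hasDerivAt_id' y).sub (h2.const_mul (2 * p1R / D))
    rw [pdyR, hd.deriv, hiη, sech_sq]
    ring
  have hsech_le : ∀ u : ℝ, (sech u)^2 ≤ 1 := by
    intro u
    rw [sech_sq]
    have h1 := Real.one_le_cosh u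
    have h2 : (1:ℝ) ≤ Real.cosh u ^ 2 := by nlinarith
    rw [div_le_one (by nlinarith)]; exact h2
  have hsech_pos : ∀ u : ℝ, 0 < (sech u)^2 := by
    intro u; rw [sech_sq]; positivity
  have hKpos : 0 < 2 * p1R^2 / D := by positivity
  have hinfval : (p1I^2 - p1R^2) / D = 1 - 2 * p1R^2 / D := by
    field_simp; ring
  have hy0 : ∀ s : ℝ, η1R (-(s/D) - η10/p1R) s + η10 = 0 := by
    intro s
    rw [hη1R]
    field_simp
    ring
  have hsech_zero : (sech 0)^2 = 1 := by
    rw [sech_sq]; simp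
  refine ⟨hmain, ?_, ?_⟩
  · intro s
    constructor
    · constructor
      · rintro v ⟨y, rfl⟩
        show (p1I^2 - p1R^2) / D ≤ pdyR x y s
        rw [hmain, hinfval]
        have := hsech_le (η1R y s + η10)
        nlinarith [hKpos]
      · intro b hb
        have hle : b ≤ pdyR x (-(s/D) - η10/p1R) s := hb ⟨-(s/D) - η10/p1R, rfl⟩
        rwa [hmain, hy0 s, hsech_zero, mul_one, ← hinfval] at hle
    · intro y
      rw [hmain, hinfval]
      constructor
      · intro h
        have hKne : (2 * p1R^2 / D) ≠ 0 := hKpos.ne'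
        have hs1 : (sech (η1R y s + η10))^2 = 1 :=
          mul_left_cancel₀ hKne (by rw [mul_one]; linarith)
        rw [sech_sq] at hs1
        have hcosh := Real.cosh_pos (η1R y s + η10)
        have hc : Real.cosh (η1R y s + η10) ^ 2 = 1 := by
          field_simp at hs1
          linarith
        have hc1 : Real.cosh (η1R y s + η10) = 1 := by nlinarith
        exact (cosh_eq_one_iff _).mp hc1
      · intro h
        rw [h, hsech_zero, mul_one]
  · constructor
    · intro h
      have h0 := h (-(0/D) - η10/p1R) 0
      rw [hmain, hy0 0, hsech_zero, mul_one] at h0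
      have hsq : p1R^2 < p1I^2 := by
        have h1 : 2 * p1R^2 / D < 1 := by linarith
        rw [div_lt_one hD] at h1
        nlinarith
      nlinarith [abs_nonneg p1I, _root_.sq_abs p1I]
    · intro h y s
      rw [hmain]
      have hsq : p1R^2 < p1I^2 := by
        nlinarith [abs_nonneg p1I, _root_.sq_abs p1I]
      have h1 : 2 * p1R^2 / D < 1 := by
        rw [div_lt_one hD]; nlinarith
      have h2 := hsech_le (η1R y s + η10)
      have h3 := hsech_pos (η1R y s + η10)
      nlinarith
end

section
/- Let p₁ = p_{1R} + i p_{1I} ∈ ℂ with p_{1R} > 0 and α₁ ∈ ℂ, α₁ ≠ 0, and let f, g be the one-soliton tau functions f(y,s) = −1 − (|α₁|² |p₁|⁴ / (4 (p₁ + conj(p₁))²)) e^{η₁ + conj(η₁)}, g(y,s) = −α₁ e^{η₁} with η₁(y,s) = p₁ y + s/p₁. Then for each fixed s ∈ ℝ, the supremum over y ∈ ℝ of |g(y,s)/f(y,s)| equals 2 p_{1R}/|p₁|², i.e. the amplitude of the envelope one-soliton is 2 p_{1R}/|p₁|². -/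
open Complex

/-- The amplitude of the CSP envelope one-soliton: for each fixed `s`, the supremum
over `y` of `|g/f|` equals `2 p_{1R}/|p₁|²`. -/
theorem csp_one_soliton_amplitude
    (p1R p1I : ℝ) (hp : 0 < p1R) (α₁ : ℂ) (hα : α₁ ≠ 0)
    (p₁ : ℂ) (hp₁ : p₁ = ⟨p1R, p1I⟩)
    (η₁ : ℝ → ℝ → ℂ) (hη₁ : ∀ y s, η₁ y s = p₁ * (y : ℂ) + (s : ℂ) / p₁)
    (f g : ℝ → ℝ → ℂ)
    (hf : ∀ y s, f y s = -1 -
      ((‖α₁‖ : ℂ)^2 * (‖p₁‖ : ℂ)^4 / (4 * (p₁ + starRingEnd ℂ p₁)^2))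
        * Complex.exp (η₁ y s + starRingEnd ℂ (η₁ y s)))
    (hg : ∀ y s, g y s = -α₁ * Complex.exp (η₁ y s)) :
    ∀ s, IsLUB (Set.range fun y => ‖g y s / f y s‖)
      (2 * p1R / (p1R^2 + p1I^2)) := by
  intro s
  have hN : (0:ℝ) < p1R^2 + p1I^2 := by positivity
  set N := p1R^2 + p1I^2 with hNdef
  have hre₁ : p₁.re = p1R := by rw [hp₁]
  have him₁ : p₁.im = p1I := by rw [hp₁]
  have hA : 0 < ‖α₁‖ := norm_pos_iff.mpr hα
  set A := ‖α₁‖ with hAdef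
  have hnormSq : Complex.normSq p₁ = N := by
    rw [hp₁]; simp [Complex.normSq_mk]; ring
  have habsp2 : (‖p₁‖)^2 = N := by rw [Complex.sq_norm, hnormSq]
  have habsp4 : (‖p₁‖)^4 = N^2 := by
    have : (‖p₁‖)^4 = ((‖p₁‖)^2)^2 := by ring
    rw [this, habsp2]
  have hre : ∀ y, (η₁ y s).re = p1R * y + s * p1R / N := by
    intro y
    rw [hη₁]
    simp [Complex.add_re, Complex.mul_re, Complex.div_re, hnormSq, hre₁]
  set C : ℝ := A^2 * N^2 / (16 * p1R^2) with hCdef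
  have hC0 : 0 < C := by positivity
  have hfeq : ∀ y, f y s = ((-(1 + C * Real.exp (2*(η₁ y s).re)) : ℝ) : ℂ) := by
    intro y
    rw [hf]
    have h1 : p₁ + starRingEnd ℂ p₁ = ((2*p1R : ℝ):ℂ) := by
      rw [Complex.add_conj, hre₁]
    have h2 : η₁ y s + starRingEnd ℂ (η₁ y s) = ((2*(η₁ y s).re : ℝ):ℂ) := by
      rw [Complex.add_conj]
    have h3 : (‖p₁‖ : ℂ)^4 = ((N^2 : ℝ) : ℂ) := by
      rw [← habsp4]; push_cast; ring
    rw [h1, h2, h3, ← Complex.ofReal_exp]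
    rw [hCdef]
    push_cast
    have : ((p1R:ℂ)) ≠ 0 := by exact_mod_cast hp.ne'
    field_simp
    ring
  have habsf : ∀ y, ‖f y s‖ = 1 + C * Real.exp (2*(η₁ y s).re) := by
    intro y
    rw [hfeq, Complex.norm_real, Real.norm_eq_abs, abs_neg]
    exact abs_of_nonneg (by positivity)
  have habsg : ∀ y, ‖g y s‖ = A * Real.exp ((η₁ y s).re) := by
    intro y
    rw [hg]
    simp [map_mul, Complex.norm_exp, hAdef]
  have hval : ∀ y, ‖g y s / f y s‖
      = A * Real.exp ((η₁ y s).re) / (1 + C * Real.exp (2*(η₁ y s).re)) := by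
    intro y
    rw [norm_div, habsf, habsg]
  have hNne : N ≠ 0 := hN.ne'
  have key : IsGreatest (Set.range fun y => ‖g y s / f y s‖) (2 * p1R / N) := by
    constructor
    · -- attained at y₀
      set y₀ := (Real.log (4*p1R/(A*N)))/p1R - s/N with hy₀
      refine ⟨y₀, ?_⟩
      show ‖g y₀ s / f y₀ s‖ = 2 * p1R / N
      have hr : (η₁ y₀ s).re = Real.log (4*p1R/(A*N)) := by
        rw [hre, hy₀]
        field_simp
        ring
      have hL : (0:ℝ) < 4*p1R/(A*N) := by positivity
      have hexp : Real.exp ((η₁ y₀ s).re) = 4*p1R/(A*N) := by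
        rw [hr, Real.exp_log hL]
      have hexp2 : Real.exp (2*(η₁ y₀ s).re) = (4*p1R/(A*N))^2 := by
        rw [two_mul, Real.exp_add, hexp, sq]
      rw [hval, hexp, hexp2, hCdef]
      field_simp
      ring
    · rintro v ⟨y, rfl⟩
      simp only [hval]
      set t := Real.exp ((η₁ y s).re) with htdef
      have ht : 0 < t := Real.exp_pos _
      have ht2 : Real.exp (2*(η₁ y s).re) = t^2 := by
        rw [two_mul, Real.exp_add, sq]
      rw [ht2]
      rw [div_le_div_iff₀ (by positivity) hN]
      have hCmul : C * (16 * p1R^2) = A^2 * N^2 := by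
        rw [hCdef]; field_simp
      nlinarith [sq_nonneg (A*N*t - 4*p1R), mul_pos hp ht, sq_nonneg t, hp.le, hC0.le]
  exact key.isLUB
end

section
/- Let q : ℝ × ℝ → ℂ be twice continuously differentiable in (x,t) and satisfy the complex short pulse equation q_{xt} + q + (1/2)(|q|² q_x)_x = 0 everywhere. Then the local conservation law ∂_t √(1 + |q_x|²) + ∂_x ( (1/2)|q|² √(1 + |q_x|²) ) = 0 holds at every point (x,t). In particular √(1 + |q_x|²) is a conserved density, corresponding to the conserved Hamiltonian H₀ = ∫ √(1 + |q_x|²) dx. -/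
open Complex

/-- Partial derivative in the first (space) variable of a real-valued function. -/
noncomputable def pdxR (F : ℝ → ℝ → ℝ) (x t : ℝ) : ℝ := deriv (fun x' => F x' t) x

/-- Partial derivative in the second (time) variable of a real-valued function. -/
noncomputable def pdtR (F : ℝ → ℝ → ℝ) (x t : ℝ) : ℝ := deriv (fun t' => F x t') t

lemma hasDerivAt_re' {f : ℝ → ℂ} {f' : ℂ} {x : ℝ} (hf : HasDerivAt f f' x) :
    HasDerivAt (fun y => (f y).re) f'.re x := by
  simpa [Function.comp_def] using (Complex.reCLM.hasFDerivAt.comp_hasDerivAt x hf)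

lemma hasDerivAt_im' {f : ℝ → ℂ} {f' : ℂ} {x : ℝ} (hf : HasDerivAt f f' x) :
    HasDerivAt (fun y => (f y).im) f'.im x := by
  simpa [Function.comp_def] using (Complex.imCLM.hasFDerivAt.comp_hasDerivAt x hf)

lemma hasDerivAt_ofReal' {g : ℝ → ℝ} {g' x : ℝ} (hg : HasDerivAt g g' x) :
    HasDerivAt (fun y => ((g y : ℝ) : ℂ)) (g' : ℂ) x := by
  simpa [Function.comp_def] using (Complex.ofRealCLM.hasFDerivAt.comp_hasDerivAt x hg)

/-- The local conservation law `∂_t √(1+|q_x|²) + ∂_x ((1/2)|q|² √(1+|q_x|²)) = 0`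
for solutions of the complex short pulse equation. -/
theorem csp_conservation_law
    (q : ℝ → ℝ → ℂ)
    (hq : ContDiff ℝ 2 (fun p : ℝ × ℝ => q p.1 p.2))
    (heq : ∀ x t,
      pdt (pdx q) x t + q x t
        + (1/2) * pdx (fun x' t' => ((‖q x' t'‖ : ℝ) : ℂ)^2 * pdx q x' t') x t = 0) :
    ∀ x t,
      pdtR (fun x' t' => Real.sqrt (1 + (‖pdx q x' t'‖)^2)) x t
        + pdxR (fun x' t' =>
            (1/2) * (‖q x' t'‖)^2
              * Real.sqrt (1 + (‖pdx q x' t'‖)^2)) x t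
      = 0 := by
  set Q : ℝ × ℝ → ℂ := fun p => q p.1 p.2 with hQdef
  have hqd : Differentiable ℝ Q := hq.differentiable (by norm_num)
  set U : ℝ × ℝ → ℂ := fun p => fderiv ℝ Q p (1, 0) with hUdef
  have hUcd : ContDiff ℝ 1 U :=
    (hq.fderiv_right (by norm_num)).clm_apply contDiff_const
  have hUd : Differentiable ℝ U := hUcd.differentiable (by norm_num)
  have hB : ∀ a b : ℝ, HasDerivAt (fun x' => q x' b) (U (a, b)) a := by
    intro a b
    have h1 : HasDerivAt (fun x' : ℝ => (x', b)) ((1:ℝ), (0:ℝ)) a :=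
      (hasDerivAt_id a).prodMk (hasDerivAt_const a b)
    exact (hqd (a, b)).hasFDerivAt.comp_hasDerivAt a h1
  have hpdx : pdx q = fun a b => U (a, b) := by
    funext a b; exact (hB a b).deriv
  intro x t
  have hUt : HasDerivAt (fun t' => U (x, t')) (fderiv ℝ U (x,t) (0,1)) t := by
    have h1 : HasDerivAt (fun t' : ℝ => (x, t')) ((0:ℝ),(1:ℝ)) t :=
      (hasDerivAt_const t x).prodMk (hasDerivAt_id t)
    exact (hUd (x,t)).hasFDerivAt.comp_hasDerivAt t h1
  have hUx : HasDerivAt (fun x' => U (x', t)) (fderiv ℝ U (x,t) (1,0)) x := by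
    have h1 : HasDerivAt (fun x' : ℝ => (x', t)) ((1:ℝ),(0:ℝ)) x :=
      (hasDerivAt_id x).prodMk (hasDerivAt_const x t)
    exact (hUd (x,t)).hasFDerivAt.comp_hasDerivAt x h1
  set Ut : ℂ := fderiv ℝ U (x,t) (0,1) with hUtdef
  set Ux : ℂ := fderiv ℝ U (x,t) (1,0) with hUxdef
  set a : ℝ := (q x t).re with ha
  set b : ℝ := (q x t).im with hb
  set u : ℝ := (U (x,t)).re with hu
  set v : ℝ := (U (x,t)).im with hv
  -- derivative of x' ↦ |q x' t|^2
  have hqre : HasDerivAt (fun x' => (q x' t).re) u x := hasDerivAt_re' (hB x t)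
  have hqim : HasDerivAt (fun x' => (q x' t).im) v x := hasDerivAt_im' (hB x t)
  have habs : ∀ (z : ℂ), ‖z‖ ^ 2 = z.re * z.re + z.im * z.im := by
    intro z; rw [Complex.sq_norm, Complex.normSq_apply]
  have hn : HasDerivAt (fun x' => ‖q x' t‖ ^ 2) (2*(a*u+b*v)) x := by
    have : (fun x' => ‖q x' t‖ ^ 2)
        = fun x' => (q x' t).re * (q x' t).re + (q x' t).im * (q x' t).im := by
      funext x'; exact habs _
    rw [this]
    have := (hqre.mul hqre).add (hqim.mul hqim)
    exact this.congr_deriv (by ring)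
  -- derivative of x' ↦ |U (x',t)|-components
  have hure : HasDerivAt (fun x' => (U (x', t)).re) Ux.re x := hasDerivAt_re' hUx
  have huim : HasDerivAt (fun x' => (U (x', t)).im) Ux.im x := hasDerivAt_im' hUx
  have hute : HasDerivAt (fun t' => (U (x, t')).re) Ut.re t := hasDerivAt_re' hUt
  have huti : HasDerivAt (fun t' => (U (x, t')).im) Ut.im t := hasDerivAt_im' hUt
  -- the PDE at (x,t), componentwise
  have E := heq x t
  rw [hpdx] at E
  have hprod : HasDerivAt (fun x' => ((‖q x' t‖ : ℂ))^2 * U (x', t))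
      (((2*(a*u+b*v) : ℝ) : ℂ) * U (x,t) + ((‖q x t‖ ^ 2 : ℝ) : ℂ) * Ux) x := by
    have h1 : (fun x' => ((‖q x' t‖ : ℂ))^2 * U (x', t))
        = fun x' => ((‖q x' t‖ ^ 2 : ℝ) : ℂ) * U (x', t) := by
      funext x'; push_cast; ring
    rw [h1]
    exact (hasDerivAt_ofReal' hn).mul hUx
  have Epdt : pdt (fun a b => U (a, b)) x t = Ut := hUt.deriv
  have Epdx : pdx (fun x' t' => ((‖q x' t'‖ : ℂ))^2 * U (x', t')) x t
      = ((2*(a*u+b*v) : ℝ) : ℂ) * U (x,t) + ((‖q x t‖ ^ 2 : ℝ) : ℂ) * Ux :=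
    hprod.deriv
  rw [Epdt, Epdx] at E
  have hN : ‖q x t‖ ^ 2 = a*a + b*b := habs _
  rw [hN] at E
  have Ere : Ut.re + a + (1/2)*(2*(a*u+b*v)*u + (a*a+b*b)*Ux.re) = 0 := by
    have := congrArg Complex.re E
    simpa [Complex.add_re, Complex.mul_re, Complex.ofReal_re, Complex.ofReal_im] using this
  have Eim : Ut.im + b + (1/2)*(2*(a*u+b*v)*v + (a*a+b*b)*Ux.im) = 0 := by
    have := congrArg Complex.im E
    simpa [Complex.add_im, Complex.mul_im, Complex.ofReal_re, Complex.ofReal_im] using this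
  -- now the goal
  rw [hpdx]
  simp only [pdtR, pdxR]
  set r : ℝ := Real.sqrt (1 + (u*u + v*v)) with hrdef
  have hpos : (0:ℝ) < 1 + (u*u + v*v) := by nlinarith [mul_self_nonneg u, mul_self_nonneg v]
  have hrpos : 0 < r := Real.sqrt_pos.mpr hpos
  have hr2 : r^2 = 1 + (u*u+v*v) := Real.sq_sqrt hpos.le
  have hsq : ∀ (w : ℂ), (1 : ℝ) + ‖w‖ ^ 2 = 1 + (w.re * w.re + w.im * w.im) := by
    intro w; rw [habs]
  have hgt : HasDerivAt (fun t' => (1:ℝ) + ‖U (x, t')‖ ^ 2)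
      ((Ut.re*u + u*Ut.re) + (Ut.im*v + v*Ut.im)) t := by
    have h1 : (fun t' => (1:ℝ) + ‖U (x, t')‖ ^ 2)
        = fun t' => 1 + ((U (x,t')).re * (U (x,t')).re + (U (x,t')).im * (U (x,t')).im) := by
      funext t'; rw [hsq]
    rw [h1]
    exact ((hute.mul hute).add (huti.mul huti)).const_add 1
  have hgx : HasDerivAt (fun x' => (1:ℝ) + ‖U (x', t)‖ ^ 2)
      ((Ux.re*u + u*Ux.re) + (Ux.im*v + v*Ux.im)) x := by
    have h1 : (fun x' => (1:ℝ) + ‖U (x', t)‖ ^ 2)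
        = fun x' => 1 + ((U (x',t)).re * (U (x',t)).re + (U (x',t)).im * (U (x',t)).im) := by
      funext x'; rw [hsq]
    rw [h1]
    exact ((hure.mul hure).add (huim.mul huim)).const_add 1
  have hne : (1:ℝ) + ‖U (x,t)‖ ^ 2 ≠ 0 := by
    rw [hsq]; nlinarith [mul_self_nonneg ((U (x,t)).re), mul_self_nonneg ((U (x,t)).im)]
  have hst : HasDerivAt (fun t' => Real.sqrt ((1:ℝ) + ‖U (x, t')‖ ^ 2))
      (((Ut.re*u + u*Ut.re) + (Ut.im*v + v*Ut.im)) / (2 * r)) t := by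
    have := hgt.sqrt hne
    convert this using 2
    rw [hrdef, hsq]
  have hsx : HasDerivAt (fun x' => Real.sqrt ((1:ℝ) + ‖U (x', t)‖ ^ 2))
      (((Ux.re*u + u*Ux.re) + (Ux.im*v + v*Ux.im)) / (2 * r)) x := by
    have := hgx.sqrt hne
    convert this using 2
    rw [hrdef, hsq]
  have hF : HasDerivAt (fun x' => (1/2:ℝ) * ‖q x' t‖ ^ 2
      * Real.sqrt ((1:ℝ) + ‖U (x', t)‖ ^ 2))
      ((1/2) * (2*(a*u+b*v) * Real.sqrt ((1:ℝ) + ‖U (x,t)‖ ^ 2)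
        + ‖q x t‖ ^ 2 * (((Ux.re*u + u*Ux.re) + (Ux.im*v + v*Ux.im)) / (2 * r)))) x := by
    have h1 : (fun x' => (1/2:ℝ) * ‖q x' t‖ ^ 2
        * Real.sqrt ((1:ℝ) + ‖U (x', t)‖ ^ 2))
        = fun x' => (1/2:ℝ) * (‖q x' t‖ ^ 2
          * Real.sqrt ((1:ℝ) + ‖U (x', t)‖ ^ 2)) := by
      funext x'; ring
    rw [h1]
    exact (hn.mul hsx).const_mul (1/2)
  rw [hst.deriv, hF.deriv, hN]
  have hrr : Real.sqrt ((1:ℝ) + ‖U (x,t)‖ ^ 2) = r := by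
    rw [hrdef, hsq]
  rw [hrr]
  have h2r : (2*r) ≠ 0 := by positivity
  field_simp
  linear_combination (4*u) * Ere + (4*v) * Eim + (4*(a*u+b*v)) * hr2
end

section
/- Let q₁, q₂ : ℝ × ℝ → ℂ be twice continuously differentiable in (x,t) and satisfy the coupled complex short pulse equations q_{i,xt} + q_i + (1/2)((|q₁|² + |q₂|²) q_{i,x})_x = 0 for i = 1,2 everywhere. Then the local conservation law ∂_t √(1 + |q_{1,x}|² + |q_{2,x}|²) + ∂_x ( (1/2)(|q₁|² + |q₂|²) √(1 + |q_{1,x}|² + |q_{2,x}|²) ) = 0 holds at every point (x,t). In particular √(1 + |q_{1,x}|² + |q_{2,x}|²) is a conserved density, corresponding to the conserved Hamiltonian H₀ = ∫ √(1 + |q_{1,x}|² + |q_{2,x}|²) dx. -/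
open Complex

theorem hda_fst {E : Type*} [NormedAddCommGroup E] [NormedSpace ℝ E]
    {F : ℝ × ℝ → E} {x t : ℝ} (hF : DifferentiableAt ℝ F (x, t)) :
    HasDerivAt (fun x' => F (x', t)) (fderiv ℝ F (x, t) (1, 0)) x :=
  hF.hasFDerivAt.comp_hasDerivAt x ((hasDerivAt_id x).prodMk (hasDerivAt_const x t))

theorem hda_snd {E : Type*} [NormedAddCommGroup E] [NormedSpace ℝ E]
    {F : ℝ × ℝ → E} {x t : ℝ} (hF : DifferentiableAt ℝ F (x, t)) :
    HasDerivAt (fun t' => F (x, t')) (fderiv ℝ F (x, t) (0, 1)) t :=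
  hF.hasFDerivAt.comp_hasDerivAt t ((hasDerivAt_const t x).prodMk (hasDerivAt_id t))

theorem hda_normSq {f : ℝ → ℂ} {f' : ℂ} {x : ℝ} (hf : HasDerivAt f f' x) :
    HasDerivAt (fun y => Complex.normSq (f y)) (2 * ((starRingEnd ℂ) (f x) * f').re) x := by
  have hre : HasDerivAt (fun y => (f y).re) f'.re x :=
    Complex.reCLM.hasFDerivAt.comp_hasDerivAt x hf
  have him : HasDerivAt (fun y => (f y).im) f'.im x :=
    Complex.imCLM.hasFDerivAt.comp_hasDerivAt x hf
  have h := (hre.mul hre).add (him.mul him)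
  simp only [Complex.normSq_apply]
  refine h.congr_deriv ?_
  simp [Complex.mul_re]
  ring

/-- The local conservation law
`∂_t √(1+|q_{1,x}|²+|q_{2,x}|²) + ∂_x ((1/2)(|q₁|²+|q₂|²) √(1+|q_{1,x}|²+|q_{2,x}|²)) = 0`
for solutions of the coupled complex short pulse equations. -/
theorem ccsp_conservation_law
    (q₁ q₂ : ℝ → ℝ → ℂ)
    (hq₁ : ContDiff ℝ 2 (fun p : ℝ × ℝ => q₁ p.1 p.2))
    (hq₂ : ContDiff ℝ 2 (fun p : ℝ × ℝ => q₂ p.1 p.2))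
    (heq₁ : ∀ x t,
      pdt (pdx q₁) x t + q₁ x t
        + (1/2) * pdx (fun x' t' =>
            ((‖q₁ x' t'‖ : ℂ)^2 + (‖q₂ x' t'‖ : ℂ)^2)
              * pdx q₁ x' t') x t = 0)
    (heq₂ : ∀ x t,
      pdt (pdx q₂) x t + q₂ x t
        + (1/2) * pdx (fun x' t' =>
            ((‖q₁ x' t'‖ : ℂ)^2 + (‖q₂ x' t'‖ : ℂ)^2)
              * pdx q₂ x' t') x t = 0) :
    ∀ x t,
      pdtR (fun x' t' =>
          Real.sqrt (1 + (‖pdx q₁ x' t'‖)^2 + (‖pdx q₂ x' t'‖)^2)) x t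
        + pdxR (fun x' t' =>
            (1/2) * ((‖q₁ x' t'‖)^2 + (‖q₂ x' t'‖)^2)
              * Real.sqrt (1 + (‖pdx q₁ x' t'‖)^2
                  + (‖pdx q₂ x' t'‖)^2)) x t
      = 0 := by
  intro x t
  -- joint differentiability
  have hq₁d : Differentiable ℝ (fun p : ℝ × ℝ => q₁ p.1 p.2) :=
    hq₁.differentiable (by norm_num)
  have hq₂d : Differentiable ℝ (fun p : ℝ × ℝ => q₂ p.1 p.2) :=
    hq₂.differentiable (by norm_num)
  -- the space-derivative fields
  set u₁ : ℝ × ℝ → ℂ := fun p => fderiv ℝ (fun p : ℝ × ℝ => q₁ p.1 p.2) p (1, 0) with hu₁def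
  set u₂ : ℝ × ℝ → ℂ := fun p => fderiv ℝ (fun p : ℝ × ℝ => q₂ p.1 p.2) p (1, 0) with hu₂def
  have hu₁C : ContDiff ℝ 1 u₁ := (hq₁.fderiv_right le_rfl).clm_apply contDiff_const
  have hu₂C : ContDiff ℝ 1 u₂ := (hq₂.fderiv_right le_rfl).clm_apply contDiff_const
  have hu₁d : Differentiable ℝ u₁ := hu₁C.differentiable one_ne_zero
  have hu₂d : Differentiable ℝ u₂ := hu₂C.differentiable one_ne_zero
  have hpdx₁ : ∀ a b : ℝ, pdx q₁ a b = u₁ (a, b) := fun a b => (hda_fst (hq₁d (a, b))).deriv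
  have hpdx₂ : ∀ a b : ℝ, pdx q₂ a b = u₂ (a, b) := fun a b => (hda_fst (hq₂d (a, b))).deriv
  -- values at the point
  set a := u₁ (x, t) with ha
  set b := u₂ (x, t) with hb
  set ax := fderiv ℝ u₁ (x, t) (1, 0) with hax'
  set at' := fderiv ℝ u₁ (x, t) (0, 1) with hat'
  set bx := fderiv ℝ u₂ (x, t) (1, 0) with hbx'
  set bt := fderiv ℝ u₂ (x, t) (0, 1) with hbt'
  have hax : HasDerivAt (fun x' => u₁ (x', t)) ax x := hda_fst (hu₁d (x, t))
  have hat : HasDerivAt (fun t' => u₁ (x, t')) at' t := hda_snd (hu₁d (x, t))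
  have hbx : HasDerivAt (fun x' => u₂ (x', t)) bx x := hda_fst (hu₂d (x, t))
  have hbt : HasDerivAt (fun t' => u₂ (x, t')) bt t := hda_snd (hu₂d (x, t))
  have hq1x : HasDerivAt (fun x' => q₁ x' t) a x := hda_fst (hq₁d (x, t))
  have hq2x : HasDerivAt (fun x' => q₂ x' t) b x := hda_fst (hq₂d (x, t))
  -- r and its x-derivative
  set r := Complex.normSq (q₁ x t) + Complex.normSq (q₂ x t) with hrdef
  set rx := 2 * ((starRingEnd ℂ) (q₁ x t) * a).re + 2 * ((starRingEnd ℂ) (q₂ x t) * b).re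
    with hrx'
  have hr : HasDerivAt (fun x' => Complex.normSq (q₁ x' t) + Complex.normSq (q₂ x' t)) rx x :=
    (hda_normSq hq1x).add (hda_normSq hq2x)
  -- A and its derivatives
  set A := 1 + Complex.normSq a + Complex.normSq b with hAdef
  have hA0 : 0 < A := by
    have := Complex.normSq_nonneg a
    have := Complex.normSq_nonneg b
    rw [hAdef]; linarith
  set Ax := 2 * ((starRingEnd ℂ) a * ax).re + 2 * ((starRingEnd ℂ) b * bx).re with hAx'
  set At := 2 * ((starRingEnd ℂ) a * at').re + 2 * ((starRingEnd ℂ) b * bt).re with hAt'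
  have hAxD : HasDerivAt
      (fun x' => 1 + Complex.normSq (u₁ (x', t)) + Complex.normSq (u₂ (x', t))) Ax x := by
    have h := ((hasDerivAt_const x (1 : ℝ)).add (hda_normSq hax)).add (hda_normSq hbx)
    rwa [zero_add] at h
  have hAtD : HasDerivAt
      (fun t' => 1 + Complex.normSq (u₁ (x, t')) + Complex.normSq (u₂ (x, t'))) At t := by
    have h := ((hasDerivAt_const t (1 : ℝ)).add (hda_normSq hat)).add (hda_normSq hbt)
    rwa [zero_add] at h
  set ρ := Real.sqrt A with hρdef
  have hρpos : 0 < ρ := Real.sqrt_pos.2 hA0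
  have hρ2 : ρ * ρ = A := Real.mul_self_sqrt hA0.le
  have hsx : HasDerivAt
      (fun x' => Real.sqrt (1 + Complex.normSq (u₁ (x', t)) + Complex.normSq (u₂ (x', t))))
      (1 / (2 * ρ) * Ax) x := (Real.hasDerivAt_sqrt hA0.ne').comp x hAxD
  have hst : HasDerivAt
      (fun t' => Real.sqrt (1 + Complex.normSq (u₁ (x, t')) + Complex.normSq (u₂ (x, t'))))
      (1 / (2 * ρ) * At) t := (Real.hasDerivAt_sqrt hA0.ne').comp t hAtD
  -- extract the PDE at (x,t) in explicit form
  have habs : ∀ z : ℂ, (‖z‖ : ℂ) ^ 2 = ((Complex.normSq z : ℝ) : ℂ) := by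
    intro z; rw [← Complex.ofReal_pow, Complex.sq_norm]
  have hrC : HasDerivAt
      (fun x' => ((Complex.normSq (q₁ x' t) + Complex.normSq (q₂ x' t) : ℝ) : ℂ))
      ((rx : ℝ) : ℂ) x := Complex.ofRealCLM.hasFDerivAt.comp_hasDerivAt x hr
  have hP₁ : pdx (fun x' t' =>
      ((‖q₁ x' t'‖ : ℂ)^2 + (‖q₂ x' t'‖ : ℂ)^2) * pdx q₁ x' t') x t
      = (rx : ℂ) * a + (r : ℂ) * ax := by
    show deriv (fun x' =>
      ((‖q₁ x' t‖ : ℂ)^2 + (‖q₂ x' t‖ : ℂ)^2) * pdx q₁ x' t) x = _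
    have hfun : (fun x' =>
        ((‖q₁ x' t‖ : ℂ)^2 + (‖q₂ x' t‖ : ℂ)^2) * pdx q₁ x' t)
        = fun x' => ((Complex.normSq (q₁ x' t) + Complex.normSq (q₂ x' t) : ℝ) : ℂ)
            * u₁ (x', t) := by
      funext x'
      rw [habs, habs, hpdx₁, Complex.ofReal_add]
    rw [hfun]
    exact (hrC.mul hax).deriv
  have hP₂ : pdx (fun x' t' =>
      ((‖q₁ x' t'‖ : ℂ)^2 + (‖q₂ x' t'‖ : ℂ)^2) * pdx q₂ x' t') x t
      = (rx : ℂ) * b + (r : ℂ) * bx := by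
    show deriv (fun x' =>
      ((‖q₁ x' t‖ : ℂ)^2 + (‖q₂ x' t‖ : ℂ)^2) * pdx q₂ x' t) x = _
    have hfun : (fun x' =>
        ((‖q₁ x' t‖ : ℂ)^2 + (‖q₂ x' t‖ : ℂ)^2) * pdx q₂ x' t)
        = fun x' => ((Complex.normSq (q₁ x' t) + Complex.normSq (q₂ x' t) : ℝ) : ℂ)
            * u₂ (x', t) := by
      funext x'
      rw [habs, habs, hpdx₂, Complex.ofReal_add]
    rw [hfun]
    exact (hrC.mul hbx).deriv
  have hT₁ : pdt (pdx q₁) x t = at' := by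
    show deriv (fun t' => pdx q₁ x t') t = _
    have : (fun t' => pdx q₁ x t') = fun t' => u₁ (x, t') := funext fun t' => hpdx₁ x t'
    rw [this]
    exact hat.deriv
  have hT₂ : pdt (pdx q₂) x t = bt := by
    show deriv (fun t' => pdx q₂ x t') t = _
    have : (fun t' => pdx q₂ x t') = fun t' => u₂ (x, t') := funext fun t' => hpdx₂ x t'
    rw [this]
    exact hbt.deriv
  have E₁ : at' + q₁ x t + (1/2 : ℂ) * ((rx : ℂ) * a + (r : ℂ) * ax) = 0 := by
    have h := heq₁ x t
    rwa [hT₁, hP₁] at h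
  have E₂ : bt + q₂ x t + (1/2 : ℂ) * ((rx : ℂ) * b + (r : ℂ) * bx) = 0 := by
    have h := heq₂ x t
    rwa [hT₂, hP₂] at h
  -- component equations
  have E₁' : (2 : ℂ) * at' = -(2 * q₁ x t) - ((rx : ℂ) * a + (r : ℂ) * ax) := by
    linear_combination (2 : ℂ) * E₁
  have E₂' : (2 : ℂ) * bt = -(2 * q₂ x t) - ((rx : ℂ) * b + (r : ℂ) * bx) := by
    linear_combination (2 : ℂ) * E₂
  have E₁re := congrArg Complex.re E₁'
  have E₁im := congrArg Complex.im E₁'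
  have E₂re := congrArg Complex.re E₂'
  have E₂im := congrArg Complex.im E₂'
  simp only [Complex.mul_re, Complex.mul_im, Complex.add_re, Complex.add_im, Complex.sub_re,
    Complex.sub_im, Complex.neg_re, Complex.neg_im, Complex.ofReal_re, Complex.ofReal_im,
    Complex.re_ofNat, Complex.im_ofNat] at E₁re E₁im E₂re E₂im
  -- the key real identity
  have hAt : At = -rx * A - r / 2 * Ax := by
    rw [hAt', hAx', hAdef, hrx', hrdef]
    simp only [hrx', hrdef] at E₁re E₁im E₂re E₂im
    simp only [Complex.mul_re, Complex.conj_re, Complex.conj_im, Complex.normSq_apply]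
      at E₁re E₁im E₂re E₂im ⊢
    linear_combination (a.re) * E₁re + (a.im) * E₁im + (b.re) * E₂re + (b.im) * E₂im
  -- assemble the conservation law
  unfold pdtR pdxR
  have e1 : (fun t' => Real.sqrt (1 + (‖pdx q₁ x t'‖)^2
      + (‖pdx q₂ x t'‖)^2))
      = fun t' => Real.sqrt (1 + Complex.normSq (u₁ (x, t')) + Complex.normSq (u₂ (x, t'))) := by
    funext t'
    rw [hpdx₁, hpdx₂, Complex.sq_norm, Complex.sq_norm]
  have e2 : (fun x' => (1/2 : ℝ) * ((‖q₁ x' t‖)^2 + (‖q₂ x' t‖)^2)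
      * Real.sqrt (1 + (‖pdx q₁ x' t‖)^2 + (‖pdx q₂ x' t‖)^2))
      = fun x' => (1/2 : ℝ) * (Complex.normSq (q₁ x' t) + Complex.normSq (q₂ x' t))
          * Real.sqrt (1 + Complex.normSq (u₁ (x', t)) + Complex.normSq (u₂ (x', t))) := by
    funext x'
    rw [hpdx₁, hpdx₂, Complex.sq_norm, Complex.sq_norm, Complex.sq_norm, Complex.sq_norm]
  rw [e1, e2, hst.deriv, (show HasDerivAt (fun x' => (1/2 : ℝ) * (Complex.normSq (q₁ x' t) + Complex.normSq (q₂ x' t))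
      * Real.sqrt (1 + Complex.normSq (u₁ (x', t)) + Complex.normSq (u₂ (x', t))))
      ((0 * r + 1/2 * rx) * ρ + 1/2 * r * (1 / (2 * ρ) * Ax)) x from
      ((hasDerivAt_const x ((1:ℝ)/2)).mul hr).mul hsx).deriv]
  rw [hAt, ← hρ2]
  have hρne : ρ ≠ 0 := hρpos.ne'
  field_simp
  ring
end

section
/- Let p₁ ∈ ℂ with p₁ ≠ 0 and Re(p₁) ≠ 0, and let α₁⁽¹⁾, α₁⁽²⁾ ∈ ℂ. Define η₁(y,s) = p₁ y + s/p₁ and the functions f(y,s) = −1 − ((|α₁⁽¹⁾|² + |α₁⁽²⁾|²) |p₁|⁴ / (4 (p₁ + conj(p₁))²)) e^{η₁ + conj(η₁)}, g₁(y,s) = −α₁⁽¹⁾ e^{η₁}, g₂(y,s) = −α₁⁽²⁾ e^{η₁}. Then f is real-valued and for all (y,s) ∈ ℝ²: f_{sy} g_i − f_s g_{i,y} − f_y g_{i,s} + f g_{i,sy} = f·g_i for i = 1,2, and f f_{ss} − f_s² = (1/4)(|g₁|² + |g₂|²). -/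
open Complex

lemma deriv_aexp (a b c d : ℂ) (t : ℝ) :
    deriv (fun t' : ℝ => d + a * Complex.exp (b * (t' : ℂ) + c)) t
      = a * b * Complex.exp (b * (t : ℂ) + c) := by
  have h1 : HasDerivAt (fun t' : ℝ => b * (t' : ℂ) + c) b t := by
    simpa using ((Complex.ofRealCLM.hasDerivAt (x := t)).const_mul b).add_const c
  have h2 := (h1.cexp.const_mul a).const_add d
  rw [h2.deriv]; ring

/-- The one-soliton tau functions of the coupled complex short pulse equation: `f` is
real-valued and `(f, g₁, g₂)` solve the CCSP bilinear system. -/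
theorem ccsp_one_soliton_tau
    (p₁ : ℂ) (hp₁ : p₁ ≠ 0) (hre : p₁.re ≠ 0)
    (α₁ α₂ : ℂ)
    (η₁ : ℝ → ℝ → ℂ) (hη₁ : ∀ y s, η₁ y s = p₁ * (y : ℂ) + (s : ℂ) / p₁)
    (f g₁ g₂ : ℝ → ℝ → ℂ)
    (hf : ∀ y s, f y s = -1 -
      (((‖α₁‖ : ℂ)^2 + (‖α₂‖ : ℂ)^2) * (‖p₁‖ : ℂ)^4
          / (4 * (p₁ + starRingEnd ℂ p₁)^2))
        * Complex.exp (η₁ y s + starRingEnd ℂ (η₁ y s)))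
    (hg₁ : ∀ y s, g₁ y s = -α₁ * Complex.exp (η₁ y s))
    (hg₂ : ∀ y s, g₂ y s = -α₂ * Complex.exp (η₁ y s)) :
    (∀ y s, (f y s).im = 0) ∧
    (∀ y s,
      (∀ g, (g = g₁ ∨ g = g₂) →
        pdyC (pdsC f) y s * g y s - pdsC f y s * pdyC g y s
          - pdyC f y s * pdsC g y s + f y s * pdyC (pdsC g) y s
        = f y s * g y s)
      ∧ (f y s * pdsC (pdsC f) y s - (pdsC f y s)^2
        = (1/4) * ((‖g₁ y s‖ : ℂ)^2 + (‖g₂ y s‖ : ℂ)^2))) := by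
  have hpc : starRingEnd ℂ p₁ ≠ 0 := by simpa using hp₁
  set q : ℂ := p₁ + starRingEnd ℂ p₁ with hqdef
  set r : ℂ := p₁⁻¹ + (starRingEnd ℂ p₁)⁻¹ with hrdef
  have hq : q ≠ 0 := by
    rw [hqdef, Complex.add_conj]
    exact Complex.ofReal_ne_zero.mpr (mul_ne_zero two_ne_zero hre)
  set A : ℂ := (‖α₁‖ : ℂ)^2 + (‖α₂‖ : ℂ)^2 with hAdef
  set C : ℂ := A * (‖p₁‖ : ℂ)^4 / (4 * q^2) with hCdef
  -- normalized formula for f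
  have harg : ∀ y s : ℝ, η₁ y s + starRingEnd ℂ (η₁ y s) = q * (y:ℂ) + r * (s:ℂ) := by
    intro y s
    rw [hη₁]
    simp only [map_add, map_mul, map_div₀, Complex.conj_ofReal, hqdef, hrdef]
    field_simp
    ring
  have hfE : ∀ y s : ℝ, f y s = -1 - C * Complex.exp (q * (y:ℂ) + r * (s:ℂ)) := by
    intro y s; rw [hf, harg]
  have hgE : ∀ (α : ℂ) (g : ℝ → ℝ → ℂ), (∀ y s, g y s = -α * Complex.exp (η₁ y s)) →
      ∀ y s : ℝ, g y s = -α * Complex.exp (p₁ * (y:ℂ) + p₁⁻¹ * (s:ℂ)) := by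
    intro α g hg y s
    rw [hg, hη₁, div_eq_inv_mul]
  -- derivatives of f
  have hfy : ∀ y s : ℝ, pdyC f y s = -C * q * Complex.exp (q * (y:ℂ) + r * (s:ℂ)) := by
    intro y s
    have : (fun y' : ℝ => f y' s) =
        fun y' : ℝ => (-1 : ℂ) + (-C) * Complex.exp (q * (y':ℂ) + r * (s:ℂ)) :=
      funext fun y' => by rw [hfE]; ring
    rw [pdyC, this, deriv_aexp]
    all_goals ring
  have hfs : ∀ y s : ℝ, pdsC f y s = -C * r * Complex.exp (q * (y:ℂ) + r * (s:ℂ)) := by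
    intro y s
    have : (fun s' : ℝ => f y s') =
        fun s' : ℝ => (-1 : ℂ) + (-C) * Complex.exp (r * (s':ℂ) + q * (y:ℂ)) :=
      funext fun s' => by
        rw [hfE, show q * (y:ℂ) + r * (s':ℂ) = r * (s':ℂ) + q * (y:ℂ) from add_comm _ _]
        ring
    rw [pdsC, this, deriv_aexp, show r * (s:ℂ) + q * (y:ℂ) = q * (y:ℂ) + r * (s:ℂ) from add_comm _ _]
    all_goals ring
  have hfsy : ∀ y s : ℝ, pdyC (pdsC f) y s = -C * r * q * Complex.exp (q * (y:ℂ) + r * (s:ℂ)) := by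
    intro y s
    have : (fun y' : ℝ => pdsC f y' s) =
        fun y' : ℝ => (0 : ℂ) + (-C * r) * Complex.exp (q * (y':ℂ) + r * (s:ℂ)) :=
      funext fun y' => by rw [hfs]; ring
    rw [pdyC, this, deriv_aexp]
    all_goals ring
  have hfss : ∀ y s : ℝ, pdsC (pdsC f) y s = -C * r * r * Complex.exp (q * (y:ℂ) + r * (s:ℂ)) := by
    intro y s
    have : (fun s' : ℝ => pdsC f y s') =
        fun s' : ℝ => (0 : ℂ) + (-C * r) * Complex.exp (r * (s':ℂ) + q * (y:ℂ)) :=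
      funext fun s' => by
        rw [hfs, show q * (y:ℂ) + r * (s':ℂ) = r * (s':ℂ) + q * (y:ℂ) from add_comm _ _]
        ring
    rw [pdsC, this, deriv_aexp,
      show r * (s:ℂ) + q * (y:ℂ) = q * (y:ℂ) + r * (s:ℂ) from add_comm _ _]
    all_goals ring
  -- conjugation facts
  have hcq : starRingEnd ℂ q = q := by
    rw [hqdef]; simp only [map_add, Complex.conj_conj]; exact add_comm _ _
  have hcr : starRingEnd ℂ r = r := by
    rw [hrdef]; simp only [map_add, map_inv₀, Complex.conj_conj]; exact add_comm _ _
  have hcC : starRingEnd ℂ C = C := by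
    simp only [hCdef, hAdef, map_div₀, map_mul, map_add, map_pow, map_ofNat,
      Complex.conj_ofReal, hcq]
  have habs : ∀ z : ℂ, (‖z‖ : ℂ)^2 = z * starRingEnd ℂ z := by
    intro z
    rw [Complex.mul_conj]
    norm_cast
    exact Complex.sq_norm z
  have hP : (‖p₁‖ : ℂ)^4 = (p₁ * starRingEnd ℂ p₁)^2 := by
    rw [show (4:ℕ) = 2*2 from rfl, pow_mul, habs p₁]
  constructor
  · -- f is real-valued
    intro y s
    rw [← Complex.conj_eq_iff_im, hfE]
    rw [map_sub, map_mul, ← Complex.exp_conj, map_add, map_mul, map_mul,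
      Complex.conj_ofReal, Complex.conj_ofReal, hcC, hcq, hcr, map_neg, map_one]
  · intro y s
    constructor
    · -- bilinear equations for g₁, g₂
      have key : ∀ (α : ℂ) (g : ℝ → ℝ → ℂ), (∀ y s, g y s = -α * Complex.exp (η₁ y s)) →
          pdyC (pdsC f) y s * g y s - pdsC f y s * pdyC g y s
            - pdyC f y s * pdsC g y s + f y s * pdyC (pdsC g) y s
          = f y s * g y s := by
        intro α g hg
        have hgE' := hgE α g hg
        have hgy : ∀ y s : ℝ, pdyC g y s = -α * p₁ * Complex.exp (p₁ * (y:ℂ) + p₁⁻¹ * (s:ℂ)) := by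
          intro y s
          have : (fun y' : ℝ => g y' s) =
              fun y' : ℝ => (0:ℂ) + (-α) * Complex.exp (p₁ * (y':ℂ) + p₁⁻¹ * (s:ℂ)) :=
            funext fun y' => by rw [hgE']; ring
          rw [pdyC, this, deriv_aexp]
          all_goals ring
        have hgs : ∀ y s : ℝ, pdsC g y s = -α * p₁⁻¹ * Complex.exp (p₁ * (y:ℂ) + p₁⁻¹ * (s:ℂ)) := by
          intro y s
          have : (fun s' : ℝ => g y s') =
              fun s' : ℝ => (0:ℂ) + (-α) * Complex.exp (p₁⁻¹ * (s':ℂ) + p₁ * (y:ℂ)) :=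
            funext fun s' => by
              rw [hgE', show p₁ * (y:ℂ) + p₁⁻¹ * (s':ℂ) = p₁⁻¹ * (s':ℂ) + p₁ * (y:ℂ) from add_comm _ _]
              all_goals ring
          rw [pdsC, this, deriv_aexp,
            show p₁⁻¹ * (s:ℂ) + p₁ * (y:ℂ) = p₁ * (y:ℂ) + p₁⁻¹ * (s:ℂ) from add_comm _ _]
          all_goals ring
        have hgsy : ∀ y s : ℝ, pdyC (pdsC g) y s
            = -α * p₁⁻¹ * p₁ * Complex.exp (p₁ * (y:ℂ) + p₁⁻¹ * (s:ℂ)) := by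
          intro y s
          have : (fun y' : ℝ => pdsC g y' s) =
              fun y' : ℝ => (0:ℂ) + (-α * p₁⁻¹) * Complex.exp (p₁ * (y':ℂ) + p₁⁻¹ * (s:ℂ)) :=
            funext fun y' => by rw [hgs]; ring
          rw [pdyC, this, deriv_aexp]
          all_goals ring
        rw [hfsy, hfs, hfy, hfE, hgE', hgy, hgs, hgsy, hqdef, hrdef]
        field_simp
        ring
      intro g hgor
      rcases hgor with h | h
      · exact key α₁ g (h ▸ hg₁)
      · exact key α₂ g (h ▸ hg₂)
    · -- the D_s^2 equation
      have hgg : ∀ α : ℂ,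
          (‖-α * Complex.exp (p₁ * (y:ℂ) + p₁⁻¹ * (s:ℂ))‖ : ℂ)^2
            = α * starRingEnd ℂ α * Complex.exp (q * (y:ℂ) + r * (s:ℂ)) := by
        intro α
        rw [habs, map_mul, map_neg, ← Complex.exp_conj]
        rw [show (-α * Complex.exp (p₁ * (y:ℂ) + p₁⁻¹ * (s:ℂ))) *
              (-starRingEnd ℂ α * Complex.exp (starRingEnd ℂ (p₁ * (y:ℂ) + p₁⁻¹ * (s:ℂ))))
            = α * starRingEnd ℂ α *
              (Complex.exp (p₁ * (y:ℂ) + p₁⁻¹ * (s:ℂ)) *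
                Complex.exp (starRingEnd ℂ (p₁ * (y:ℂ) + p₁⁻¹ * (s:ℂ)))) from by ring,
          ← Complex.exp_add]
        congr 2
        simp only [map_add, map_mul, map_inv₀, Complex.conj_ofReal, hqdef, hrdef]
        ring
      have hq' : p₁ + starRingEnd ℂ p₁ ≠ 0 := by rwa [hqdef] at hq
      have hkey : C * r * r = (1/4) * (α₁ * starRingEnd ℂ α₁ + α₂ * starRingEnd ℂ α₂) := by
        rw [hCdef, hAdef, hP, hqdef, hrdef, habs α₁, habs α₂]
        field_simp [hp₁, hpc, hq']
        ring
      rw [hfE, hfs, hfss, hgE α₁ g₁ hg₁, hgE α₂ g₂ hg₂, hgg, hgg]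
      linear_combination Complex.exp (q * (y:ℂ) + r * (s:ℂ)) * hkey
end

section
/- Let p₁ = p_{1R} + i p_{1I} ∈ ℂ with p_{1R} > 0 and α₁⁽¹⁾, α₁⁽²⁾ ∈ ℂ not both zero. With η₁(y,s) = p₁ y + s/p₁, f(y,s) = −1 − ((|α₁⁽¹⁾|² + |α₁⁽²⁾|²) |p₁|⁴ / (4 (p₁ + conj(p₁))²)) e^{η₁ + conj(η₁)}, g_i(y,s) = −α₁⁽ⁱ⁾ e^{η₁} (i = 1,2), define A_i = α₁⁽ⁱ⁾/√(|α₁⁽¹⁾|² + |α₁⁽²⁾|²), η_{1R}(y,s) = p_{1R}(y + s/|p₁|²), η_{1I}(y,s) = p_{1I}(y − s/|p₁|²), and η_{10} = log(√(|α₁⁽¹⁾|² + |α₁⁽²⁾|²) |p₁|² / (4 p_{1R})). Then |A₁|² + |A₂|² = 1 and for all (y,s) ∈ ℝ² and i = 1,2: g_i(y,s)/f(y,s) = A_i · (2 p_{1R}/|p₁|²) · e^{i η_{1I}(y,s)} · sech(η_{1R}(y,s) + η_{10}). -/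
open Complex

/-- Parametric form of the one-soliton solution of the coupled complex short pulse
equation: `|A₁|² + |A₂|² = 1` and
`g_i/f = A_i (2 p_{1R}/|p₁|²) e^{i η_{1I}} sech(η_{1R} + η_{10})` for `i = 1,2`. -/
theorem ccsp_one_soliton_profile
    (p1R p1I : ℝ) (hp : 0 < p1R)
    (α₁ α₂ : ℂ) (hα : ¬(α₁ = 0 ∧ α₂ = 0))
    (p₁ : ℂ) (hp₁ : p₁ = ⟨p1R, p1I⟩)
    (η₁ : ℝ → ℝ → ℂ) (hη₁ : ∀ y s, η₁ y s = p₁ * (y : ℂ) + (s : ℂ) / p₁)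
    (f g₁ g₂ : ℝ → ℝ → ℂ)
    (hf : ∀ y s, f y s = -1 -
      (((‖α₁‖ : ℂ)^2 + (‖α₂‖ : ℂ)^2) * (‖p₁‖ : ℂ)^4
          / (4 * (p₁ + starRingEnd ℂ p₁)^2))
        * Complex.exp (η₁ y s + starRingEnd ℂ (η₁ y s)))
    (hg₁ : ∀ y s, g₁ y s = -α₁ * Complex.exp (η₁ y s))
    (hg₂ : ∀ y s, g₂ y s = -α₂ * Complex.exp (η₁ y s))
    (A₁ A₂ : ℂ)
    (hA₁ : A₁ = α₁ / ((Real.sqrt ((‖α₁‖)^2 + (‖α₂‖)^2) : ℝ) : ℂ))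
    (hA₂ : A₂ = α₂ / ((Real.sqrt ((‖α₁‖)^2 + (‖α₂‖)^2) : ℝ) : ℂ))
    (η1R η1I : ℝ → ℝ → ℝ)
    (hη1R : ∀ y s, η1R y s = p1R * (y + s / (p1R^2 + p1I^2)))
    (hη1I : ∀ y s, η1I y s = p1I * (y - s / (p1R^2 + p1I^2)))
    (η10 : ℝ)
    (hη10 : η10 = Real.log (Real.sqrt ((‖α₁‖)^2 + (‖α₂‖)^2)
      * (p1R^2 + p1I^2) / (4 * p1R))) :
    ((‖A₁‖)^2 + (‖A₂‖)^2 = 1) ∧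
    (∀ y s,
      g₁ y s / f y s
        = A₁ * ((2 * p1R / (p1R^2 + p1I^2) : ℝ) : ℂ)
            * Complex.exp (Complex.I * (η1I y s : ℂ)) * ((sech (η1R y s + η10) : ℝ) : ℂ)
      ∧ g₂ y s / f y s
        = A₂ * ((2 * p1R / (p1R^2 + p1I^2) : ℝ) : ℂ)
            * Complex.exp (Complex.I * (η1I y s : ℂ)) * ((sech (η1R y s + η10) : ℝ) : ℂ)) := by
  have hN : 0 < (‖α₁‖)^2 + (‖α₂‖)^2 := by
    rcases not_and_or.mp hα with h | h
    · have h1 := norm_pos_iff.mpr h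
      positivity
    · have h1 := norm_pos_iff.mpr h
      positivity
  set N : ℝ := (‖α₁‖)^2 + (‖α₂‖)^2 with hNdef
  set M : ℝ := p1R^2 + p1I^2 with hMdef
  have hM : 0 < M := by positivity
  have hre : p₁.re = p1R := by rw [hp₁]
  have him : p₁.im = p1I := by rw [hp₁]
  have hp₁ne : p₁ ≠ 0 := by
    intro h
    rw [h] at hre
    simp at hre
    linarith
  have hsq : 0 < Real.sqrt N := Real.sqrt_pos.mpr hN
  have hexp10 : Real.exp η10 = Real.sqrt N * M / (4*p1R) := by
    rw [hη10, Real.exp_log (by positivity)]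
  have hη : ∀ y s, η₁ y s = ((η1R y s : ℝ) : ℂ) + Complex.I * ((η1I y s : ℝ) : ℂ) := by
    intro y s
    rw [hη₁, hη1R, hη1I]
    have hMne : p1R*p1R + p1I*p1I ≠ 0 := by nlinarith
    apply Complex.ext
    · simp [Complex.div_re, hp₁, Complex.normSq_mk]
      field_simp
      ring
    · simp [Complex.div_im, hp₁, Complex.normSq_mk]
      field_simp
      ring
  have hnormsq : Complex.normSq p₁ = M := by
    rw [hp₁, hMdef]
    simp [Complex.normSq_mk]
    ring
  have habs2 : (‖p₁‖)^2 = M := by rw [Complex.sq_norm, hnormsq]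
  have hexpeta : ∀ y s, Complex.exp (η₁ y s)
      = ((Real.exp (η1R y s) : ℝ) : ℂ) * Complex.exp (Complex.I * ((η1I y s : ℝ) : ℂ)) := by
    intro y s
    rw [hη, Complex.exp_add, Complex.ofReal_exp]
  have hfval : ∀ y s, f y s
      = -(((1 + Real.exp (2*(η1R y s + η10)) : ℝ)) : ℂ) := by
    intro y s
    rw [hf]
    have hsum : η₁ y s + starRingEnd ℂ (η₁ y s) = (((2 * η1R y s : ℝ)) : ℂ) := by
      rw [hη]
      simp [map_add, map_mul, Complex.conj_ofReal, Complex.conj_I]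
      ring
    rw [hsum]
    have hconjp : p₁ + starRingEnd ℂ p₁ = (((2*p1R : ℝ)) : ℂ) := by
      rw [Complex.add_conj, hre]
    rw [hconjp]
    have habs4 : ((‖p₁‖ : ℝ) : ℂ)^4 = (((M^2 : ℝ)) : ℂ) := by
      have h4 : (‖p₁‖)^4 = M^2 := by
        rw [show (4:ℕ) = 2*2 from rfl, pow_mul, habs2]
      push_cast [← h4]
      ring
    have hc : ((‖α₁‖ : ℂ)^2 + (‖α₂‖ : ℂ)^2) * (‖p₁‖ : ℂ)^4
          / (4 * (((2*p1R : ℝ) : ℂ))^2)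
        = (((N * M^2 / (16 * p1R^2) : ℝ)) : ℂ) := by
      rw [habs4]
      have h2p : ((2*p1R : ℝ) : ℂ) ≠ 0 := by
        simp only [ne_eq, Complex.ofReal_eq_zero]
        positivity
      field_simp
      push_cast [hNdef]
      have hp1R : (p1R : ℂ) ≠ 0 := by exact_mod_cast hp.ne'
      rw [eq_comm, mul_div_assoc', div_eq_iff (mul_ne_zero (pow_ne_zero 2 hp1R) (by norm_num))]
      ring
    rw [hc, ← Complex.ofReal_exp]
    have hr : N * M^2/(16*p1R^2) * Real.exp (2*η1R y s)
        = Real.exp (2*(η1R y s + η10)) := by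
      have h1 : Real.exp (2*(η1R y s + η10))
          = Real.exp (2*η1R y s) * (Real.exp η10 * Real.exp η10) := by
        rw [← Real.exp_add, ← Real.exp_add]
        ring_nf
      have h2 : Real.sqrt N * Real.sqrt N = N := Real.mul_self_sqrt hN.le
      rw [h1, hexp10]
      have h3 : Real.sqrt N * M/(4*p1R) * (Real.sqrt N * M/(4*p1R))
          = Real.sqrt N * Real.sqrt N * M^2/(16*p1R^2) := by ring
      rw [h3, h2]
      ring
    rw [← hr]
    push_cast
    ring
  have key : ∀ (α A : ℂ), A = α / ((Real.sqrt N : ℝ) : ℂ) → ∀ (a b : ℝ),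
      (-α * (((Real.exp a : ℝ) : ℂ) * Complex.exp (Complex.I * ((b : ℝ) : ℂ))))
          / (-(((1 + Real.exp (2*(a + η10)) : ℝ)) : ℂ))
        = A * ((2 * p1R / M : ℝ) : ℂ) * Complex.exp (Complex.I * ((b : ℝ) : ℂ))
            * ((sech (a + η10) : ℝ) : ℂ) := by
    intro α A hA a b
    set E := Real.exp (a + η10) with hEdef
    have hEpos : 0 < E := Real.exp_pos _
    have hE2 : Real.exp (2*(a + η10)) = E^2 := by
      rw [two_mul, Real.exp_add, ← hEdef]
      ring
    have hsech : sech (a + η10) = 2*E/(E^2+1) := by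
      unfold sech
      rw [Real.exp_neg, ← hEdef]
      field_simp
    have hEval : E = Real.exp a * (Real.sqrt N * M/(4*p1R)) := by
      rw [hEdef, Real.exp_add, hexp10]
    have hkey : (Real.sqrt N)⁻¹ * (2*p1R/M) * (2*E) = Real.exp a := by
      rw [hEval]
      field_simp
      ring
    have hreal2 : Real.exp a / (1 + E^2)
        = (Real.sqrt N)⁻¹ * (2*p1R/M) * (2*E/(E^2+1)) := by
      rw [← hkey]
      ring
    rw [hE2, hsech, hA, neg_mul, neg_div_neg_eq]
    have hstep : α * (((Real.exp a : ℝ) : ℂ) * Complex.exp (Complex.I * ((b : ℝ) : ℂ)))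
        / (((1 + E^2 : ℝ)) : ℂ)
        = α * Complex.exp (Complex.I * ((b : ℝ) : ℂ))
            * (((Real.exp a / (1 + E^2) : ℝ)) : ℂ) := by
      push_cast
      ring
    rw [hstep, hreal2]
    push_cast
    ring
  refine ⟨?_, ?_⟩
  · rw [hA₁, hA₂, norm_div, norm_div, Complex.norm_real,
      Real.norm_of_nonneg (Real.sqrt_nonneg _), div_pow, div_pow, Real.sq_sqrt hN.le]
    field_simp
    exact hNdef.symm
  · intro y s
    constructor
    · rw [hg₁, hfval, hexpeta]
      exact key α₁ A₁ hA₁ (η1R y s) (η1I y s)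
    · rw [hg₂, hfval, hexpeta]
      exact key α₂ A₂ hA₂ (η1R y s) (η1I y s)
end
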